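/- arXiv:1903.07483 — 9 statements merged into one kernel-verified Lean document; each statement's English description precedes it below -/
import Mathlib

section
/- First existence theorem for invariant graphs (graph-condition branch). Let H ∼ (F,G) be a bundle correspondence over u : M → M whose fibers X_m, Y_m are complete metric spaces, let ε, ε₁, η : M → [0,∞) with ε(m) ≤ ε₁(m) for all m, and let i = (i_X,i_Y) be an ε-pseudo-stable section of H with data η. Assume H satisfies the (A)(α;α′,λ_u)(B)(β;β′,λ_s) condition with functions α, α′, λ_u, β, β′, λ_s : M → [0,∞) such that: (angle condition) sup_{m∈M} α′(m)·β′(u(m)) < 1, α′(m) ≤ α(u(m)) and β′(u(m)) ≤ β(m) for all m, and sup_{m∈M} max{α(m), β(m)} < ∞; (spectral condition) sup_{m∈M} λ_s(m)·λ_u(m) < 1 and sup_{m∈M} λ_u(m)·ε₁(m) < 1. Then there exist a family of maps f_m : X_m → Y_m (m ∈ M), a family of maps x_m : X_m → X_{u(m)} (m ∈ M), and constants K, K₀ ≥ 0 such that for all m ∈ M: (1) Lip f_m ≤ β′(m) and d(f_m(i_X(m)), i_Y(m)) ≤ K·η(m); (2) Lip x_m ≤ λ_s(m), d(x_m(i_X(m)),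 i_X(u(m))) ≤ K₀·η(u(m)), and for every x ∈ X_m, F_m(x, f_{u(m)}(x_m(x))) = x_m(x) and G_m(x, f_{u(m)}(x_m(x))) = f_m(x). Moreover the family (f_m) is unique: any other family (f′_m) admitting constants K′, K₀′ ≥ 0 and maps (x′_m) with properties (1) and (2) satisfies f′_m = f_m for all m ∈ M. -/
open Function

namespace IGraphAux

structure Setup (M : Type*) (u : M → M) (X Y : M → Type*)
    [∀ m, MetricSpace (X m)] [∀ m, CompleteSpace (X m)]
    [∀ m, MetricSpace (Y m)] [∀ m, CompleteSpace (Y m)] where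
  F : ∀ m, X m → Y (u m) → X (u m)
  G : ∀ m, X m → Y (u m) → Y m
  a : M → ℝ
  a' : M → ℝ
  lu : M → ℝ
  b : M → ℝ
  b' : M → ℝ
  ls : M → ℝ
  e : M → ℝ
  iX : ∀ m, X m
  iY : ∀ m, Y m
  c₀ : ℝ
  C : ℝ
  c₁ : ℝ
  c₂ : ℝ
  ha0 : ∀ m, 0 ≤ a m
  ha'0 : ∀ m, 0 ≤ a' m
  hlu0 : ∀ m, 0 ≤ lu m
  hb0 : ∀ m, 0 ≤ b m
  hb'0 : ∀ m, 0 ≤ b' m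
  hls0 : ∀ m, 0 ≤ ls m
  he0 : ∀ m, 0 ≤ e m
  hc00 : 0 ≤ c₀
  hc01 : c₀ < 1
  hC1 : 1 ≤ C
  haC : ∀ m, a m ≤ C
  hbC : ∀ m, b m ≤ C
  hc10 : 0 ≤ c₁
  hc11 : c₁ < 1
  hc20 : 0 ≤ c₂
  hc21 : c₂ < 1
  haa' : ∀ m, a' m ≤ a (u m)
  hbb' : ∀ m, b' (u m) ≤ b m
  hangle : ∀ m, a' m * b' (u m) ≤ c₀
  hs1 : ∀ m, ls m * lu m ≤ c₁
  hs2 : ∀ m, lu m * e (u m) ≤ c₂ * e m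
  hiF : ∀ m, dist (iX (u m)) (F m (iX m) (iY (u m))) ≤ e (u m)
  hiG : ∀ m, dist (iY m) (G m (iX m) (iY (u m))) ≤ e m
  hA : ∀ m (x₁ x₁' : X m) (y₂ y₂' : Y (u m)),
      dist x₁ x₁' ≤ a m * dist (G m x₁ y₂) (G m x₁' y₂') →
        dist (F m x₁ y₂) (F m x₁' y₂') ≤ a' m * dist y₂ y₂' ∧
          dist (G m x₁ y₂) (G m x₁' y₂') ≤ lu m * dist y₂ y₂'
  hB : ∀ m (x₁ x₁' : X m) (y₂ y₂' : Y (u m)),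
      dist y₂ y₂' ≤ b m * dist (F m x₁ y₂) (F m x₁' y₂') →
        dist (G m x₁ y₂) (G m x₁' y₂') ≤ b' m * dist x₁ x₁' ∧
          dist (F m x₁ y₂) (F m x₁' y₂') ≤ ls m * dist x₁ x₁'

variable {M : Type*} {u : M → M} {X Y : M → Type*}
    [∀ m, MetricSpace (X m)] [∀ m, CompleteSpace (X m)]
    [∀ m, MetricSpace (Y m)] [∀ m, CompleteSpace (Y m)]
    (S : Setup M u X Y)

lemma ha'C (m : M) : S.a' m ≤ S.C := (S.haa' m).trans (S.haC _)

lemma lipFy (m : M) (x : X m) (y y' : Y (u m)) :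
    dist (S.F m x y) (S.F m x y') ≤ S.a' m * dist y y' :=
  (S.hA m x x y y' (by simpa using mul_nonneg (S.ha0 m) dist_nonneg)).1

lemma lipGy (m : M) (x : X m) (y y' : Y (u m)) :
    dist (S.G m x y) (S.G m x y') ≤ S.lu m * dist y y' :=
  (S.hA m x x y y' (by simpa using mul_nonneg (S.ha0 m) dist_nonneg)).2

lemma lipGx (m : M) (x x' : X m) (y : Y (u m)) :
    dist (S.G m x y) (S.G m x' y) ≤ S.b' m * dist x x' :=
  (S.hB m x x' y y (by simpa using mul_nonneg (S.hb0 m) dist_nonneg)).1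

lemma lipFx (m : M) (x x' : X m) (y : Y (u m)) :
    dist (S.F m x y) (S.F m x' y) ≤ S.ls m * dist x x' :=
  (S.hB m x x' y y (by simpa using mul_nonneg (S.hb0 m) dist_nonneg)).2

/-- The `n`-fold composite correspondence, together with the Lipschitz-in-`x`
property of its `G`-part which is needed to define the next level. -/
noncomputable def pack : (n : ℕ) →
    PSigma (fun FG : ((∀ m, X m → Y (u^[n] m) → X (u^[n] m)) ×
        (∀ m, X m → Y (u^[n] m) → Y m)) =>
      ∀ m (x x' : X m) (y : Y (u^[n] m)),
        dist (FG.2 m x y) (FG.2 m x' y) ≤ S.b' m * dist x x')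
  | 0 => ⟨(fun _ x _ => x, fun _ _ y => y), by
      intro m x x' y
      exact (dist_self y).trans_le (mul_nonneg (S.hb'0 m) dist_nonneg)⟩
  | (n+1) =>
    let P := pack n
    have hcontr : ∀ (m : M) (x : X m) (y : Y (u^[n+1] m)),
        ContractingWith ⟨S.c₀, S.hc00⟩
          (fun z : X (u m) => S.F m x (P.1.2 (u m) z y)) := by
      intro m x y
      constructor
      · exact_mod_cast S.hc01
      · apply LipschitzWith.of_dist_le_mul
        intro z z'
        calc dist (S.F m x (P.1.2 (u m) z y)) (S.F m x (P.1.2 (u m) z' y))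
            ≤ S.a' m * dist (P.1.2 (u m) z y) (P.1.2 (u m) z' y) := lipFy S m x _ _
          _ ≤ S.a' m * (S.b' (u m) * dist z z') := by
              exact mul_le_mul_of_nonneg_left (P.2 (u m) z z' y) (S.ha'0 m)
          _ ≤ S.c₀ * dist z z' := by
              rw [← mul_assoc]
              exact mul_le_mul_of_nonneg_right (S.hangle m) dist_nonneg
    haveI : ∀ m : M, Nonempty (X (u m)) := fun m => ⟨S.iX _⟩
    ⟨(fun m x y => P.1.1 (u m)
        (ContractingWith.fixedPoint _ (hcontr m x y)) y,
      fun m x y => S.G m x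
        (P.1.2 (u m) (ContractingWith.fixedPoint _ (hcontr m x y)) y)), by
      intro m x x' y
      set z := ContractingWith.fixedPoint _ (hcontr m x y) with hzdef
      set z' := ContractingWith.fixedPoint _ (hcontr m x' y) with hz'def
      have hz : S.F m x (P.1.2 (u m) z y) = z := (hcontr m x y).fixedPoint_isFixedPt
      have hz' : S.F m x' (P.1.2 (u m) z' y) = z' := (hcontr m x' y).fixedPoint_isFixedPt
      have hw : dist (P.1.2 (u m) z y) (P.1.2 (u m) z' y)
          ≤ S.b m * dist (S.F m x (P.1.2 (u m) z y)) (S.F m x' (P.1.2 (u m) z' y)) := by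
        rw [hz, hz']
        calc dist (P.1.2 (u m) z y) (P.1.2 (u m) z' y)
            ≤ S.b' (u m) * dist z z' := P.2 (u m) z z' y
          _ ≤ S.b m * dist z z' := mul_le_mul_of_nonneg_right (S.hbb' m) dist_nonneg
      exact (S.hB m x x' _ _ hw).1⟩

noncomputable def Fc (n : ℕ) : ∀ m, X m → Y (u^[n] m) → X (u^[n] m) := (pack S n).1.1
noncomputable def Gc (n : ℕ) : ∀ m, X m → Y (u^[n] m) → Y m := (pack S n).1.2

lemma GcLipx (n : ℕ) (m : M) (x x' : X m) (y : Y (u^[n] m)) :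
    dist (Gc S n m x y) (Gc S n m x' y) ≤ S.b' m * dist x x' := (pack S n).2 m x x' y

lemma jn_contr (n : ℕ) (m : M) (x : X m) (y : Y (u^[n+1] m)) :
    ContractingWith ⟨S.c₀, S.hc00⟩ (fun z : X (u m) => S.F m x (Gc S n (u m) z y)) := by
  constructor
  · exact_mod_cast S.hc01
  · apply LipschitzWith.of_dist_le_mul
    intro z z'
    calc dist (S.F m x (Gc S n (u m) z y)) (S.F m x (Gc S n (u m) z' y))
        ≤ S.a' m * dist (Gc S n (u m) z y) (Gc S n (u m) z' y) := lipFy S m x _ _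
      _ ≤ S.a' m * (S.b' (u m) * dist z z') :=
          mul_le_mul_of_nonneg_left (GcLipx S n (u m) z z' y) (S.ha'0 m)
      _ ≤ S.c₀ * dist z z' := by
          rw [← mul_assoc]
          exact mul_le_mul_of_nonneg_right (S.hangle m) dist_nonneg

noncomputable def jn (n : ℕ) (m : M) (x : X m) (y : Y (u^[n+1] m)) : X (u m) :=
  haveI : Nonempty (X (u m)) := ⟨S.iX _⟩
  ContractingWith.fixedPoint _ (jn_contr S n m x y)

lemma Fc_zero (m : M) (x : X m) (y : Y m) : Fc S 0 m x y = x := rfl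
lemma Gc_zero (m : M) (x : X m) (y : Y m) : Gc S 0 m x y = y := rfl

lemma Fc_succ (n : ℕ) (m : M) (x : X m) (y : Y (u^[n+1] m)) :
    Fc S (n+1) m x y = Fc S n (u m) (jn S n m x y) y := rfl

lemma Gc_succ (n : ℕ) (m : M) (x : X m) (y : Y (u^[n+1] m)) :
    Gc S (n+1) m x y = S.G m x (Gc S n (u m) (jn S n m x y) y) := rfl

lemma jn_eq (n : ℕ) (m : M) (x : X m) (y : Y (u^[n+1] m)) :
    jn S n m x y = S.F m x (Gc S n (u m) (jn S n m x y) y) := by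
  haveI : Nonempty (X (u m)) := ⟨S.iX _⟩
  exact ((jn_contr S n m x y).fixedPoint_isFixedPt).symm

lemma jn_unique (n : ℕ) (m : M) (x : X m) (y : Y (u^[n+1] m)) (z : X (u m))
    (h : z = S.F m x (Gc S n (u m) z y)) : z = jn S n m x y := by
  haveI : Nonempty (X (u m)) := ⟨S.iX _⟩
  exact ContractingWith.fixedPoint_unique _ h.symm

lemma Fc_one (m : M) (x : X m) (y : Y (u^[1] m)) : Fc S 1 m x y = S.F m x y := by
  rw [Fc_succ]
  exact jn_eq S 0 m x y

lemma Gc_one (m : M) (x : X m) (y : Y (u^[1] m)) : Gc S 1 m x y = S.G m x y := rfl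

noncomputable def Lu (n : ℕ) (m : M) : ℝ := ∏ j ∈ Finset.range n, S.lu (u^[j] m)
noncomputable def Ls (n : ℕ) (m : M) : ℝ := ∏ j ∈ Finset.range n, S.ls (u^[j] m)

lemma Lu_nonneg (n : ℕ) (m : M) : 0 ≤ Lu S n m :=
  Finset.prod_nonneg fun j _ => S.hlu0 _
lemma Ls_nonneg (n : ℕ) (m : M) : 0 ≤ Ls S n m :=
  Finset.prod_nonneg fun j _ => S.hls0 _

lemma Lu_zero (m : M) : Lu S 0 m = 1 := Finset.prod_range_zero _
lemma Ls_zero (m : M) : Ls S 0 m = 1 := Finset.prod_range_zero _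
lemma Lu_one (m : M) : Lu S 1 m = S.lu m := Finset.prod_range_one _
lemma Ls_one (m : M) : Ls S 1 m = S.ls m := Finset.prod_range_one _

lemma Lu_succ (n : ℕ) (m : M) : Lu S (n+1) m = Lu S n m * S.lu (u^[n] m) :=
  Finset.prod_range_succ _ _
lemma Ls_succ (n : ℕ) (m : M) : Ls S (n+1) m = Ls S n m * S.ls (u^[n] m) :=
  Finset.prod_range_succ _ _

lemma Lu_succ' (n : ℕ) (m : M) : Lu S (n+1) m = S.lu m * Lu S n (u m) := by
  rw [Lu, Finset.prod_range_succ']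
  rw [mul_comm]
  rfl

lemma Ls_succ' (n : ℕ) (m : M) : Ls S (n+1) m = S.ls m * Ls S n (u m) := by
  rw [Ls, Finset.prod_range_succ']
  rw [mul_comm]
  rfl

lemma Lu_add (b a : ℕ) (m : M) : Lu S (b + a) m = Lu S a m * Lu S b (u^[a] m) := by
  rw [Lu, Nat.add_comm b a, Finset.prod_range_add]
  congr 1
  exact Finset.prod_congr rfl fun j _ => by
    rw [show u^[a + j] m = u^[j] (u^[a] m) by rw [Nat.add_comm a j, Function.iterate_add_apply]]

lemma LuLs_le (n : ℕ) (m : M) : Lu S n m * Ls S n m ≤ S.c₁ ^ n := by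
  rw [Lu, Ls, ← Finset.prod_mul_distrib]
  calc (∏ j ∈ Finset.range n, S.lu (u^[j] m) * S.ls (u^[j] m))
      ≤ ∏ _j ∈ Finset.range n, S.c₁ := by
        apply Finset.prod_le_prod
        · intro j _; exact mul_nonneg (S.hlu0 _) (S.hls0 _)
        · intro j _; rw [mul_comm]; exact S.hs1 _
    _ = S.c₁ ^ n := by rw [Finset.prod_const, Finset.card_range]

lemma Lu_e (n : ℕ) (m : M) : Lu S n m * S.e (u^[n] m) ≤ S.c₂ ^ n * S.e m := by
  induction n with
  | zero => simp [Lu_zero]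
  | succ n ih =>
      rw [Lu_succ, Function.iterate_succ_apply' u n m]
      calc Lu S n m * S.lu (u^[n] m) * S.e (u (u^[n] m))
          = Lu S n m * (S.lu (u^[n] m) * S.e (u (u^[n] m))) := by ring
        _ ≤ Lu S n m * (S.c₂ * S.e (u^[n] m)) :=
            mul_le_mul_of_nonneg_left (S.hs2 _) (Lu_nonneg S n m)
        _ = S.c₂ * (Lu S n m * S.e (u^[n] m)) := by ring
        _ ≤ S.c₂ * (S.c₂ ^ n * S.e m) := mul_le_mul_of_nonneg_left ih (S.hc20)
        _ = S.c₂ ^ (n+1) * S.e m := by ring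

/-- Composite cone condition (A). -/
lemma CA : ∀ (n : ℕ) (m : M) (x x' : X m) (y y' : Y (u^[n+1] m)),
    dist x x' ≤ S.a m * dist (Gc S (n+1) m x y) (Gc S (n+1) m x' y') →
      dist (Fc S (n+1) m x y) (Fc S (n+1) m x' y') ≤ S.a' (u^[n] m) * dist y y' ∧
      dist (Gc S (n+1) m x y) (Gc S (n+1) m x' y') ≤ Lu S (n+1) m * dist y y' := by
  intro n
  induction n with
  | zero =>
      intro m x x' y y' hyp
      rw [Gc_one, Gc_one] at hyp ⊢
      rw [Fc_one, Fc_one]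
      have h := S.hA m x x' y y' hyp
      exact ⟨h.1, by rw [Lu_one]; exact h.2⟩
  | succ n ih =>
      intro m x x' y y' hyp
      rw [Gc_succ, Gc_succ] at hyp ⊢
      rw [Fc_succ, Fc_succ]
      set z := jn S (n+1) m x y with hz
      set z' := jn S (n+1) m x' y' with hz'
      set w := Gc S (n+1) (u m) z y with hw
      set w' := Gc S (n+1) (u m) z' y' with hw'
      have h := S.hA m x x' w w' hyp
      have hzz' : dist z z' ≤ S.a' m * dist w w' := by
        rw [hz, hz', jn_eq S (n+1) m x y, jn_eq S (n+1) m x' y']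
        exact h.1
      have ihh := ih (u m) z z' y y'
        (hzz'.trans (mul_le_mul_of_nonneg_right (S.haa' m) dist_nonneg))
      refine ⟨ihh.1, ?_⟩
      calc dist (S.G m x w) (S.G m x' w') ≤ S.lu m * dist w w' := h.2
        _ ≤ S.lu m * (Lu S (n+1) (u m) * dist y y') :=
            mul_le_mul_of_nonneg_left ihh.2 (S.hlu0 m)
        _ = Lu S (n+2) m * dist y y' := by rw [Lu_succ' S (n+1) m]; ring

/-- Composite cone condition (B). -/
lemma CB : ∀ (n : ℕ) (m : M) (x x' : X m) (y y' : Y (u^[n+1] m)),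
    dist y y' ≤ S.b (u^[n] m) * dist (Fc S (n+1) m x y) (Fc S (n+1) m x' y') →
      dist (Gc S (n+1) m x y) (Gc S (n+1) m x' y') ≤ S.b' m * dist x x' ∧
      dist (Fc S (n+1) m x y) (Fc S (n+1) m x' y') ≤ Ls S (n+1) m * dist x x' := by
  intro n
  induction n with
  | zero =>
      intro m x x' y y' hyp
      rw [Fc_one, Fc_one] at hyp ⊢
      rw [Gc_one, Gc_one]
      have h := S.hB m x x' y y' hyp
      exact ⟨h.1, by rw [Ls_one]; exact h.2⟩
  | succ n ih =>
      intro m x x' y y' hyp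
      rw [Fc_succ, Fc_succ] at hyp ⊢
      rw [Gc_succ, Gc_succ]
      set z := jn S (n+1) m x y with hz
      set z' := jn S (n+1) m x' y' with hz'
      set w := Gc S (n+1) (u m) z y with hw
      set w' := Gc S (n+1) (u m) z' y' with hw'
      have ihh := ih (u m) z z' y y' hyp
      have hzF : z = S.F m x w := jn_eq S (n+1) m x y
      have hz'F : z' = S.F m x' w' := jn_eq S (n+1) m x' y'
      have hyp2 : dist w w' ≤ S.b m * dist (S.F m x w) (S.F m x' w') := by
        rw [← hzF, ← hz'F]
        exact ihh.1.trans (mul_le_mul_of_nonneg_right (S.hbb' m) dist_nonneg)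
      have h := S.hB m x x' w w' hyp2
      refine ⟨h.1, ?_⟩
      have hzz' : dist z z' ≤ S.ls m * dist x x' := by
        rw [hzF, hz'F]; exact h.2
      calc dist (Fc S (n+1) (u m) z y) (Fc S (n+1) (u m) z' y')
          ≤ Ls S (n+1) (u m) * dist z z' := ihh.2
        _ ≤ Ls S (n+1) (u m) * (S.ls m * dist x x') :=
            mul_le_mul_of_nonneg_left hzz' (Ls_nonneg S _ _)
        _ = Ls S (n+2) m * dist x x' := by rw [Ls_succ' S (n+1) m]; ring

lemma U1G (n : ℕ) (m : M) (x : X m) (y y' : Y (u^[n] m)) :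
    dist (Gc S n m x y) (Gc S n m x y') ≤ Lu S n m * dist y y' := by
  cases n with
  | zero => rw [Lu_zero, one_mul]; exact le_rfl
  | succ n =>
      exact (CA S n m x x y y'
        (by simpa using mul_nonneg (S.ha0 m) dist_nonneg)).2

lemma U1F (n : ℕ) (m : M) (x : X m) (y y' : Y (u^[n+1] m)) :
    dist (Fc S (n+1) m x y) (Fc S (n+1) m x y') ≤ S.a' (u^[n] m) * dist y y' :=
  (CA S n m x x y y' (by simpa using mul_nonneg (S.ha0 m) dist_nonneg)).1

lemma U2F (n : ℕ) (m : M) (x x' : X m) (y : Y (u^[n] m)) :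
    dist (Fc S n m x y) (Fc S n m x' y) ≤ Ls S n m * dist x x' := by
  cases n with
  | zero => rw [Ls_zero, one_mul]; exact le_rfl
  | succ n =>
      exact (CB S n m x x' y y
        ((dist_self y).trans_le (mul_nonneg (S.hb0 _) dist_nonneg))).2
lemma one_sub_c₀_pos : (0:ℝ) < 1 - S.c₀ := by linarith [S.hc01]

lemma hb'C (m : M) : S.b' (u m) ≤ S.C := (S.hbb' m).trans (S.hbC m)

/-- Splitting of the composite correspondence along the `iY`-anchors. -/
lemma split : ∀ (a : ℕ) (b : ℕ) (m : M) (x : X m),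
    ∃ z : X (u^[a] m),
      z = Fc S a m x (Gc S b (u^[a] m) z (S.iY (u^[b] (u^[a] m)))) ∧
      Gc S (b + a) m x (S.iY (u^[b + a] m)) =
        Gc S a m x (Gc S b (u^[a] m) z (S.iY (u^[b] (u^[a] m)))) ∧
      dist (Fc S (b + a) m x (S.iY (u^[b + a] m))) (S.iX (u^[b + a] m)) =
        dist (Fc S b (u^[a] m) z (S.iY (u^[b] (u^[a] m)))) (S.iX (u^[b] (u^[a] m))) := by
  intro a
  induction a with
  | zero =>
      intro b m x
      exact ⟨x, rfl, rfl, rfl⟩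
  | succ a ih =>
      intro b m x
      set ya : Y (u^[b + (a+1)] m) := S.iY (u^[b + (a+1)] m) with hya
      set x₁ : X (u m) := jn S (b + a) m x ya with hx₁
      obtain ⟨z, hzeq, hGc, hFd⟩ := ih b (u m) x₁
      set w : Y (u^[a] (u m)) := Gc S b (u^[a] (u m)) z (S.iY (u^[b] (u^[a] (u m)))) with hwdef
      have hGc' : Gc S (b + a) (u m) x₁ ya = Gc S a (u m) x₁ w := hGc
      have hx₁fix : x₁ = S.F m x (Gc S a (u m) x₁ w) := by
        rw [← hGc']
        exact jn_eq S (b + a) m x ya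
      have hx₁jn : x₁ = jn S a m x w := jn_unique S a m x w x₁ hx₁fix
      refine ⟨z, ?_, ?_, ?_⟩
      · calc z = Fc S a (u m) x₁ w := hzeq
          _ = Fc S a (u m) (jn S a m x w) w := by rw [← hx₁jn]
      · calc Gc S (b + (a+1)) m x ya
            = S.G m x (Gc S (b + a) (u m) x₁ ya) := rfl
          _ = S.G m x (Gc S a (u m) x₁ w) := by rw [hGc']
          _ = S.G m x (Gc S a (u m) (jn S a m x w) w) := by rw [← hx₁jn]
      · calc dist (Fc S (b + (a+1)) m x ya) (S.iX (u^[b + (a+1)] m))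
            = dist (Fc S (b + a) (u m) x₁ (S.iY (u^[b + a] (u m)))) (S.iX (u^[b+a] (u m))) :=
              rfl
          _ = dist (Fc S b (u^[a] (u m)) z (S.iY (u^[b] (u^[a] (u m)))))
              (S.iX (u^[b] (u^[a] (u m)))) := hFd

noncomputable def fn (n : ℕ) (m : M) (x : X m) : Y m := Gc S n m x (S.iY (u^[n] m))
noncomputable def En (n : ℕ) (m : M) : ℝ :=
  dist (Fc S n m (S.iX m) (S.iY (u^[n] m))) (S.iX (u^[n] m))
noncomputable def sn (n : ℕ) (m : M) : ℝ := dist (fn S n m (S.iX m)) (S.iY m)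
noncomputable def Et (n : ℕ) (m : M) : ℝ := Lu S n m * En S n m

lemma fn_def (n : ℕ) (m : M) (x : X m) : fn S n m x = Gc S n m x (S.iY (u^[n] m)) := rfl
lemma En_def (n : ℕ) (m : M) :
    En S n m = dist (Fc S n m (S.iX m) (S.iY (u^[n] m))) (S.iX (u^[n] m)) := rfl
lemma sn_def (n : ℕ) (m : M) : sn S n m = dist (fn S n m (S.iX m)) (S.iY m) := rfl

lemma En_nonneg (n : ℕ) (m : M) : 0 ≤ En S n m := dist_nonneg
lemma sn_nonneg (n : ℕ) (m : M) : 0 ≤ sn S n m := dist_nonneg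
lemma Et_nonneg (n : ℕ) (m : M) : 0 ≤ Et S n m :=
  mul_nonneg (Lu_nonneg S n m) (En_nonneg S n m)

lemma En_zero (m : M) : En S 0 m = 0 := dist_self _
lemma Et_zero (m : M) : Et S 0 m = 0 := by rw [Et, En_zero, mul_zero]
lemma fn_zero (m : M) (x : X m) : fn S 0 m x = S.iY m := rfl
lemma sn_zero (m : M) : sn S 0 m = 0 := dist_self _
lemma En_one (m : M) : En S 1 m ≤ S.e (u m) := by
  rw [En_def, Fc_one]
  exact (dist_comm _ _).trans_le (S.hiF m)

lemma fn_lip (n : ℕ) (m : M) (x x' : X m) :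
    dist (fn S n m x) (fn S n m x') ≤ S.b' m * dist x x' := GcLipx S n m x x' _

/-- Key splitting estimate for the `x`-defect `En`. -/
lemma En_split (b k : ℕ) (m : M) :
    En S ((b+1) + (k+1)) m ≤
      Ls S (b+1) (u^[k+1] m) *
        ((S.C * sn S (b+1) (u^[k+1] m) + En S (k+1) m) / (1 - S.c₀)) +
      En S (b+1) (u^[k+1] m) := by
  obtain ⟨z, hz, -, hd⟩ := split S (k+1) (b+1) m (S.iX m)
  have hwb : dist (Gc S (b+1) (u^[k+1] m) z (S.iY (u^[b+1] (u^[k+1] m)))) (S.iY (u^[k+1] m)) ≤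
      S.b' (u^[k+1] m) * dist z (S.iX (u^[k+1] m)) + sn S (b+1) (u^[k+1] m) :=
    calc dist (Gc S (b+1) (u^[k+1] m) z (S.iY (u^[b+1] (u^[k+1] m)))) (S.iY (u^[k+1] m))
        ≤ dist (Gc S (b+1) (u^[k+1] m) z (S.iY (u^[b+1] (u^[k+1] m))))
            (fn S (b+1) (u^[k+1] m) (S.iX (u^[k+1] m))) + sn S (b+1) (u^[k+1] m) :=
          dist_triangle _ _ _
      _ ≤ S.b' (u^[k+1] m) * dist z (S.iX (u^[k+1] m)) + sn S (b+1) (u^[k+1] m) :=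
          add_le_add_left (fn_lip S (b+1) (u^[k+1] m) z (S.iX (u^[k+1] m))) _
  have hzb : dist z (S.iX (u^[k+1] m)) ≤
      S.a' (u^[k] m) *
        dist (Gc S (b+1) (u^[k+1] m) z (S.iY (u^[b+1] (u^[k+1] m)))) (S.iY (u^[k+1] m)) +
      En S (k+1) m :=
    calc dist z (S.iX (u^[k+1] m))
        ≤ dist z (Fc S (k+1) m (S.iX m) (S.iY (u^[k+1] m))) + En S (k+1) m :=
          dist_triangle _ _ _
      _ ≤ _ + En S (k+1) m := by
          apply add_le_add_left
          conv_lhs => rw [hz]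
          exact U1F S k m (S.iX m) _ (S.iY (u^[k+1] m))
  have hpair : S.a' (u^[k] m) * S.b' (u^[k+1] m) ≤ S.c₀ := by
    rw [Function.iterate_succ_apply' u k m]
    exact S.hangle _
  have ha'C' : S.a' (u^[k] m) ≤ S.C := ha'C S _
  have hdz : dist z (S.iX (u^[k+1] m)) ≤
      (S.C * sn S (b+1) (u^[k+1] m) + En S (k+1) m) / (1 - S.c₀) := by
    rw [le_div_iff₀ (one_sub_c₀_pos S)]
    have h1 := hzb.trans (add_le_add_left (mul_le_mul_of_nonneg_left hwb (S.ha'0 _)) _)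
    have h2 : S.a' (u^[k] m) * (S.b' (u^[k+1] m) * dist z (S.iX (u^[k+1] m))) ≤
        S.c₀ * dist z (S.iX (u^[k+1] m)) := by
      rw [← mul_assoc]
      exact mul_le_mul_of_nonneg_right hpair dist_nonneg
    have h3 : S.a' (u^[k] m) * sn S (b+1) (u^[k+1] m) ≤ S.C * sn S (b+1) (u^[k+1] m) :=
      mul_le_mul_of_nonneg_right ha'C' (sn_nonneg S _ _)
    nlinarith [dist_nonneg (x := z) (y := S.iX (u^[k+1] m))]
  calc En S ((b+1)+(k+1)) m
      = dist (Fc S (b+1) (u^[k+1] m) z (S.iY (u^[b+1] (u^[k+1] m))))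
          (S.iX (u^[b+1] (u^[k+1] m))) := hd
    _ ≤ dist (Fc S (b+1) (u^[k+1] m) z (S.iY (u^[b+1] (u^[k+1] m))))
          (Fc S (b+1) (u^[k+1] m) (S.iX (u^[k+1] m)) (S.iY (u^[b+1] (u^[k+1] m)))) +
        En S (b+1) (u^[k+1] m) := dist_triangle _ _ _
    _ ≤ Ls S (b+1) (u^[k+1] m) * dist z (S.iX (u^[k+1] m)) + En S (b+1) (u^[k+1] m) :=
        add_le_add_left (U2F S (b+1) (u^[k+1] m) z (S.iX (u^[k+1] m)) _) _
    _ ≤ _ := add_le_add_left (mul_le_mul_of_nonneg_left hdz (Ls_nonneg S _ _)) _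

lemma delta0 (m : M) (x : X m) :
    dist (fn S 1 m x) (fn S 0 m x) ≤ S.b' m * dist x (S.iX m) + S.e m := by
  rw [fn_zero]
  show dist (Gc S 1 m x (S.iY (u^[1] m))) (S.iY m) ≤ _
  rw [Gc_one]
  calc dist (S.G m x (S.iY (u^[1] m))) (S.iY m)
      ≤ dist (S.G m x (S.iY (u^[1] m))) (S.G m (S.iX m) (S.iY (u^[1] m)))
        + dist (S.G m (S.iX m) (S.iY (u^[1] m))) (S.iY m) := dist_triangle _ _ _
    _ ≤ S.b' m * dist x (S.iX m) + S.e m := by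
        apply add_le_add (lipGx S m x (S.iX m) _)
        rw [dist_comm]
        exact S.hiG m

lemma delta (k : ℕ) (m : M) (x : X m) :
    dist (fn S (k+1+1) m x) (fn S (k+1) m x) ≤
      Lu S (k+1) m *
        ((S.C * (Ls S (k+1) m * dist x (S.iX m) + En S (k+1) m) + S.e (u^[k+1] m)) /
          (1 - S.c₀)) := by
  obtain ⟨z, hz, hGc, -⟩ := split S (k+1) 1 m x
  have hfneq : fn S (k+1+1) m x =
      Gc S (k+1) m x (Gc S 1 (u^[k+1] m) z (S.iY (u^[1] (u^[k+1] m)))) := by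
    have h0 : fn S (k+1+1) m x = fn S (1 + (k+1)) m x := by rw [Nat.add_comm]
    rw [h0, fn_def]
    exact hGc
  have hwb : dist (Gc S 1 (u^[k+1] m) z (S.iY (u^[1] (u^[k+1] m)))) (S.iY (u^[k+1] m)) ≤
      S.b' (u^[k+1] m) * dist z (S.iX (u^[k+1] m)) + S.e (u^[k+1] m) := by
    rw [Gc_one]
    calc dist (S.G (u^[k+1] m) z (S.iY (u^[1] (u^[k+1] m)))) (S.iY (u^[k+1] m))
        ≤ dist (S.G (u^[k+1] m) z (S.iY (u^[1] (u^[k+1] m))))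
            (S.G (u^[k+1] m) (S.iX (u^[k+1] m)) (S.iY (u^[1] (u^[k+1] m)))) +
          dist (S.G (u^[k+1] m) (S.iX (u^[k+1] m)) (S.iY (u^[1] (u^[k+1] m))))
            (S.iY (u^[k+1] m)) := dist_triangle _ _ _
      _ ≤ S.b' (u^[k+1] m) * dist z (S.iX (u^[k+1] m)) + S.e (u^[k+1] m) := by
          apply add_le_add (lipGx S (u^[k+1] m) z (S.iX (u^[k+1] m)) _)
          rw [dist_comm]
          exact S.hiG (u^[k+1] m)
  have hzb : dist z (S.iX (u^[k+1] m)) ≤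
      S.a' (u^[k] m) *
        dist (Gc S 1 (u^[k+1] m) z (S.iY (u^[1] (u^[k+1] m)))) (S.iY (u^[k+1] m)) +
      (Ls S (k+1) m * dist x (S.iX m) + En S (k+1) m) := by
    calc dist z (S.iX (u^[k+1] m))
        ≤ dist z (Fc S (k+1) m x (S.iY (u^[k+1] m))) +
            dist (Fc S (k+1) m x (S.iY (u^[k+1] m))) (S.iX (u^[k+1] m)) := dist_triangle _ _ _
      _ ≤ dist z (Fc S (k+1) m x (S.iY (u^[k+1] m))) +
            (dist (Fc S (k+1) m x (S.iY (u^[k+1] m)))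
              (Fc S (k+1) m (S.iX m) (S.iY (u^[k+1] m))) + En S (k+1) m) := by
          apply add_le_add_right
          rw [En_def]
          exact dist_triangle _ _ _
      _ ≤ S.a' (u^[k] m) *
            dist (Gc S 1 (u^[k+1] m) z (S.iY (u^[1] (u^[k+1] m)))) (S.iY (u^[k+1] m)) +
          (Ls S (k+1) m * dist x (S.iX m) + En S (k+1) m) := by
          apply add_le_add
          · conv_lhs => rw [hz]
            exact U1F S k m x _ (S.iY (u^[k+1] m))
          · exact add_le_add_left (U2F S (k+1) m x (S.iX m) _) _
  have hpair : S.b' (u^[k+1] m) * S.a' (u^[k] m) ≤ S.c₀ := by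
    rw [mul_comm, Function.iterate_succ_apply' u k m]
    exact S.hangle _
  have hb'C' : S.b' (u^[k+1] m) ≤ S.C := by
    rw [Function.iterate_succ_apply' u k m]
    exact hb'C S _
  have hQ : (0:ℝ) ≤ Ls S (k+1) m * dist x (S.iX m) + En S (k+1) m :=
    add_nonneg (mul_nonneg (Ls_nonneg S _ _) dist_nonneg) (En_nonneg S _ _)
  have hwbound : dist (Gc S 1 (u^[k+1] m) z (S.iY (u^[1] (u^[k+1] m)))) (S.iY (u^[k+1] m)) ≤
      (S.C * (Ls S (k+1) m * dist x (S.iX m) + En S (k+1) m) + S.e (u^[k+1] m)) /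
        (1 - S.c₀) := by
    rw [le_div_iff₀ (one_sub_c₀_pos S)]
    have h1 := hwb.trans (add_le_add_left (mul_le_mul_of_nonneg_left hzb (S.hb'0 _)) _)
    have h2 : S.b' (u^[k+1] m) *
        (S.a' (u^[k] m) *
          dist (Gc S 1 (u^[k+1] m) z (S.iY (u^[1] (u^[k+1] m)))) (S.iY (u^[k+1] m))) ≤
        S.c₀ * dist (Gc S 1 (u^[k+1] m) z (S.iY (u^[1] (u^[k+1] m)))) (S.iY (u^[k+1] m)) := by
      rw [← mul_assoc]
      exact mul_le_mul_of_nonneg_right hpair dist_nonneg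
    have h3 : S.b' (u^[k+1] m) * (Ls S (k+1) m * dist x (S.iX m) + En S (k+1) m) ≤
        S.C * (Ls S (k+1) m * dist x (S.iX m) + En S (k+1) m) :=
      mul_le_mul_of_nonneg_right hb'C' hQ
    nlinarith [dist_nonneg
      (x := Gc S 1 (u^[k+1] m) z (S.iY (u^[1] (u^[k+1] m)))) (y := S.iY (u^[k+1] m))]
  calc dist (fn S (k+1+1) m x) (fn S (k+1) m x)
      = dist (Gc S (k+1) m x (Gc S 1 (u^[k+1] m) z (S.iY (u^[1] (u^[k+1] m)))))
          (Gc S (k+1) m x (S.iY (u^[k+1] m))) := by rw [hfneq, fn_def]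
    _ ≤ Lu S (k+1) m *
          dist (Gc S 1 (u^[k+1] m) z (S.iY (u^[1] (u^[k+1] m)))) (S.iY (u^[k+1] m)) :=
        U1G S (k+1) m x _ _
    _ ≤ _ := mul_le_mul_of_nonneg_left hwbound (Lu_nonneg S _ _)

lemma delta' (k : ℕ) (m : M) (x : X m) :
    dist (fn S (k+1+1) m x) (fn S (k+1) m x) ≤
      (S.C * (S.c₁ ^ (k+1) * dist x (S.iX m)) + S.C * Et S (k+1) m + S.c₂ ^ (k+1) * S.e m) /
        (1 - S.c₀) := by
  refine (delta S k m x).trans ?_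
  rw [mul_div_assoc']
  apply div_le_div_of_nonneg_right ?_ (one_sub_c₀_pos S).le
  have h1 : Lu S (k+1) m * (Ls S (k+1) m * dist x (S.iX m)) ≤
      S.c₁ ^ (k+1) * dist x (S.iX m) := by
    rw [← mul_assoc]
    exact mul_le_mul_of_nonneg_right (LuLs_le S (k+1) m) dist_nonneg
  have h2 := Lu_e S (k+1) m
  have hC0 : (0:ℝ) ≤ S.C := le_trans zero_le_one S.hC1
  have hLu := Lu_nonneg S (k+1) m
  have h1' : S.C * (Lu S (k+1) m * (Ls S (k+1) m * dist x (S.iX m))) ≤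
      S.C * (S.c₁ ^ (k+1) * dist x (S.iX m)) := mul_le_mul_of_nonneg_left h1 hC0
  have hEt : Et S (k+1) m = Lu S (k+1) m * En S (k+1) m := rfl
  nlinarith [En_nonneg S (k+1) m, h1', h2, hEt]

lemma sn_le (n : ℕ) (m : M) :
    sn S n m ≤ (∑ j ∈ Finset.range n, (S.C * Et S j m + S.c₂ ^ j * S.e m)) / (1 - S.c₀) := by
  induction n with
  | zero => simp [sn_zero]
  | succ n ih =>
      have hδ : dist (fn S (n+1) m (S.iX m)) (fn S n m (S.iX m)) ≤
          (S.C * Et S n m + S.c₂ ^ n * S.e m) / (1 - S.c₀) := by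
        cases n with
        | zero =>
            refine (delta0 S m (S.iX m)).trans ?_
            rw [dist_self, mul_zero, zero_add, le_div_iff₀ (one_sub_c₀_pos S), Et_zero]
            nlinarith [S.he0 m, S.hc00, mul_nonneg (S.he0 m) S.hc00]
        | succ k =>
            refine (delta' S k m (S.iX m)).trans ?_
            apply div_le_div_of_nonneg_right ?_ (one_sub_c₀_pos S).le
            simp [dist_self]
      calc sn S (n+1) m ≤ dist (fn S (n+1) m (S.iX m)) (fn S n m (S.iX m)) + sn S n m :=
            dist_triangle _ _ _
        _ ≤ (S.C * Et S n m + S.c₂ ^ n * S.e m) / (1 - S.c₀) +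
            (∑ j ∈ Finset.range n, (S.C * Et S j m + S.c₂ ^ j * S.e m)) / (1 - S.c₀) :=
            add_le_add hδ ih
        _ = (∑ j ∈ Finset.range (n+1), (S.C * Et S j m + S.c₂ ^ j * S.e m)) / (1 - S.c₀) := by
            rw [Finset.sum_range_succ]
            ring

lemma Et_def (n : ℕ) (m : M) : Et S n m = Lu S n m * En S n m := rfl

lemma one_sub_c₂_pos : (0:ℝ) < 1 - S.c₂ := by linarith [S.hc21]

lemma geo_le {r : ℝ} (h0 : 0 ≤ r) (h1 : r < 1) (n : ℕ) :
    ∑ j ∈ Finset.range n, r ^ j ≤ 1 / (1 - r) := by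
  have hpos : (0:ℝ) < 1 - r := by linarith
  rw [geom_sum_eq (by linarith : r ≠ 1)]
  have heq : (r ^ n - 1) / (r - 1) = (1 - r ^ n) / (1 - r) := by
    rw [div_eq_div_iff (by linarith) (by linarith)]
    ring
  rw [heq]
  apply div_le_div_of_nonneg_right ?_ hpos.le
  nlinarith [pow_nonneg h0 n]

/-- One-step estimate for the `x`-defect. -/
lemma En_step (n : ℕ) (m : M) :
    En S (n+1) m ≤
      Ls S n (u m) * ((S.C * sn S n (u m) + S.e (u m)) / (1 - S.c₀)) + En S n (u m) := by
  have hz₁ : jn S n m (S.iX m) (S.iY (u^[n+1] m)) =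
      S.F m (S.iX m) (fn S n (u m) (jn S n m (S.iX m) (S.iY (u^[n+1] m)))) :=
    jn_eq S n m _ _
  have hw : dist (fn S n (u m) (jn S n m (S.iX m) (S.iY (u^[n+1] m)))) (S.iY (u m)) ≤
      S.b' (u m) * dist (jn S n m (S.iX m) (S.iY (u^[n+1] m))) (S.iX (u m)) +
        sn S n (u m) :=
    calc dist (fn S n (u m) (jn S n m (S.iX m) (S.iY (u^[n+1] m)))) (S.iY (u m))
        ≤ dist (fn S n (u m) (jn S n m (S.iX m) (S.iY (u^[n+1] m))))
            (fn S n (u m) (S.iX (u m))) + sn S n (u m) := dist_triangle _ _ _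
      _ ≤ _ := add_le_add_left (fn_lip S n (u m) _ _) _
  have hdz0 : dist (jn S n m (S.iX m) (S.iY (u^[n+1] m))) (S.iX (u m)) ≤
      S.a' m * dist (fn S n (u m) (jn S n m (S.iX m) (S.iY (u^[n+1] m)))) (S.iY (u m)) +
        S.e (u m) := by
    calc dist (jn S n m (S.iX m) (S.iY (u^[n+1] m))) (S.iX (u m))
        ≤ dist (jn S n m (S.iX m) (S.iY (u^[n+1] m))) (S.F m (S.iX m) (S.iY (u m))) +
            dist (S.F m (S.iX m) (S.iY (u m))) (S.iX (u m)) := dist_triangle _ _ _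
      _ ≤ S.a' m *
            dist (fn S n (u m) (jn S n m (S.iX m) (S.iY (u^[n+1] m)))) (S.iY (u m)) +
            S.e (u m) := by
          apply add_le_add
          · conv_lhs => rw [hz₁]
            exact lipFy S m (S.iX m) _ _
          · rw [dist_comm]
            exact S.hiF m
  have hdz : dist (jn S n m (S.iX m) (S.iY (u^[n+1] m))) (S.iX (u m)) ≤
      (S.C * sn S n (u m) + S.e (u m)) / (1 - S.c₀) := by
    rw [le_div_iff₀ (one_sub_c₀_pos S)]
    have h1 := hdz0.trans (add_le_add_left (mul_le_mul_of_nonneg_left hw (S.ha'0 _)) _)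
    have h2 : S.a' m *
        (S.b' (u m) * dist (jn S n m (S.iX m) (S.iY (u^[n+1] m))) (S.iX (u m))) ≤
        S.c₀ * dist (jn S n m (S.iX m) (S.iY (u^[n+1] m))) (S.iX (u m)) := by
      rw [← mul_assoc]
      exact mul_le_mul_of_nonneg_right (S.hangle m) dist_nonneg
    have h3 : S.a' m * sn S n (u m) ≤ S.C * sn S n (u m) :=
      mul_le_mul_of_nonneg_right (ha'C S m) (sn_nonneg S _ _)
    nlinarith [dist_nonneg (x := jn S n m (S.iX m) (S.iY (u^[n+1] m))) (y := S.iX (u m))]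
  calc En S (n+1) m
      = dist (Fc S n (u m) (jn S n m (S.iX m) (S.iY (u^[n+1] m))) (S.iY (u^[n+1] m)))
          (S.iX (u^[n] (u m))) := rfl
    _ ≤ dist (Fc S n (u m) (jn S n m (S.iX m) (S.iY (u^[n+1] m))) (S.iY (u^[n+1] m)))
          (Fc S n (u m) (S.iX (u m)) (S.iY (u^[n+1] m))) + En S n (u m) :=
        dist_triangle _ _ _
    _ ≤ Ls S n (u m) * dist (jn S n m (S.iX m) (S.iY (u^[n+1] m))) (S.iX (u m)) +
          En S n (u m) := add_le_add_left (U2F S n (u m) _ _ _) _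
    _ ≤ _ := add_le_add_left (mul_le_mul_of_nonneg_left hdz (Ls_nonneg S _ _)) _

/-- Crude recursive bound sequence: `(Bs n).1` bounds `Et n`, `(Bs n).2` is the partial sum. -/
noncomputable def Bs : ℕ → ℝ × ℝ
  | 0 => (0, 0)
  | (n+1) =>
      (S.c₂ * (S.c₁ ^ n *
          (S.C * ((S.C * (Bs n).2 + 1 / (1 - S.c₂)) / (1 - S.c₀)) + 1) / (1 - S.c₀) +
        (Bs n).1),
       (Bs n).2 + (Bs n).1)

lemma Bs_nonneg : ∀ n, 0 ≤ (Bs S n).1 ∧ 0 ≤ (Bs S n).2 := by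
  intro n
  induction n with
  | zero => exact ⟨le_refl 0, le_refl 0⟩
  | succ n ih =>
      constructor
      · show 0 ≤ S.c₂ * _
        have h0 := one_sub_c₀_pos S
        have h2 := one_sub_c₂_pos S
        have hC : (0:ℝ) ≤ S.C := le_trans zero_le_one S.hC1
        have := S.hc10
        have := S.hc20
        have t1 : (0:ℝ) ≤ (S.C * (Bs S n).2 + 1 / (1 - S.c₂)) / (1 - S.c₀) :=
          div_nonneg (add_nonneg (mul_nonneg hC ih.2) (by positivity)) h0.le
        have t2 : (0:ℝ) ≤ S.C * ((S.C * (Bs S n).2 + 1 / (1 - S.c₂)) / (1 - S.c₀)) + 1 :=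
          add_nonneg (mul_nonneg hC t1) zero_le_one
        have t3 : (0:ℝ) ≤ S.c₁ ^ n *
            (S.C * ((S.C * (Bs S n).2 + 1 / (1 - S.c₂)) / (1 - S.c₀)) + 1) / (1 - S.c₀) :=
          div_nonneg (mul_nonneg (pow_nonneg S.hc10 n) t2) h0.le
        exact mul_nonneg S.hc20 (add_nonneg t3 ih.1)
      · show 0 ≤ (Bs S n).2 + (Bs S n).1
        linarith [ih.1, ih.2]

lemma Bs_snd (n : ℕ) : (Bs S n).2 = ∑ j ∈ Finset.range n, (Bs S j).1 := by
  induction n with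
  | zero => rfl
  | succ n ih =>
      show (Bs S n).2 + (Bs S n).1 = _
      rw [Finset.sum_range_succ, ih]

lemma sn_from_Et (n : ℕ) (m : M)
    (hB : ∀ j, j < n → ∀ m' : M, Et S j m' ≤ (Bs S j).1 * S.e m') :
    sn S n m ≤ ((S.C * (Bs S n).2 + 1 / (1 - S.c₂)) / (1 - S.c₀)) * S.e m := by
  refine (sn_le S n m).trans ?_
  rw [div_mul_eq_mul_div]
  apply div_le_div_of_nonneg_right ?_ (one_sub_c₀_pos S).le
  calc ∑ j ∈ Finset.range n, (S.C * Et S j m + S.c₂ ^ j * S.e m)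
      ≤ ∑ j ∈ Finset.range n, (S.C * ((Bs S j).1 * S.e m) + S.c₂ ^ j * S.e m) := by
        apply Finset.sum_le_sum
        intro j hj
        have hC : (0:ℝ) ≤ S.C := le_trans zero_le_one S.hC1
        exact add_le_add_left
          (mul_le_mul_of_nonneg_left (hB j (Finset.mem_range.mp hj) m) hC) _
    _ = (∑ j ∈ Finset.range n, S.C * (Bs S j).1) * S.e m +
          (∑ j ∈ Finset.range n, S.c₂ ^ j) * S.e m := by
        rw [Finset.sum_add_distrib, ← Finset.sum_mul]
        congr 1
        rw [Finset.sum_mul]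
        exact Finset.sum_congr rfl fun j _ => by ring
    _ = (S.C * (∑ j ∈ Finset.range n, (Bs S j).1) + ∑ j ∈ Finset.range n, S.c₂ ^ j) *
          S.e m := by
        rw [← Finset.mul_sum]
        ring
    _ ≤ (S.C * (Bs S n).2 + 1 / (1 - S.c₂)) * S.e m := by
        apply mul_le_mul_of_nonneg_right ?_ (S.he0 m)
        rw [Bs_snd]
        exact add_le_add_right (geo_le S.hc20 S.hc21 n) _

lemma Et_B : ∀ n, ∀ m, Et S n m ≤ (Bs S n).1 * S.e m := by
  intro n
  induction n using Nat.strong_induction_on with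
  | _ n ih =>
      match n with
      | 0 =>
          intro m
          rw [Et_zero]
          show (0:ℝ) ≤ 0 * S.e m
          rw [zero_mul]
      | (n+1) =>
          intro m
          have hsn : sn S n (u m) ≤
              ((S.C * (Bs S n).2 + 1 / (1 - S.c₂)) / (1 - S.c₀)) * S.e (u m) :=
            sn_from_Et S n (u m) (fun j hj m' => ih j (Nat.lt_succ_of_lt hj) m')
          have hEt : Et S n (u m) ≤ (Bs S n).1 * S.e (u m) :=
            ih n (Nat.lt_succ_self n) (u m)
          have hEn := En_step S n m
          have hLuLs := LuLs_le S n (u m)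
          have hLu := Lu_nonneg S n (u m)
          have hLs := Ls_nonneg S n (u m)
          have hlum := S.hlu0 m
          have he := S.he0 (u m)
          have hC : (0:ℝ) ≤ S.C := le_trans zero_le_one S.hC1
          have h1c₀ := one_sub_c₀_pos S
          have h1c₂ := one_sub_c₂_pos S
          -- Et (n+1) m = lu m * (Lu n (u m) * En (n+1) m)
          have hkey : Et S (n+1) m = S.lu m * (Lu S n (u m) * En S (n+1) m) := by
            rw [Et_def, Lu_succ']
            ring
          have hstep1 : Lu S n (u m) * En S (n+1) m ≤
              S.c₁ ^ n * ((S.C * sn S n (u m) + S.e (u m)) / (1 - S.c₀)) + Et S n (u m) := by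
            have hd : (0:ℝ) ≤ (S.C * sn S n (u m) + S.e (u m)) / (1 - S.c₀) := by
              apply div_nonneg ?_ h1c₀.le
              have := sn_nonneg S n (u m)
              nlinarith
            calc Lu S n (u m) * En S (n+1) m
                ≤ Lu S n (u m) *
                  (Ls S n (u m) * ((S.C * sn S n (u m) + S.e (u m)) / (1 - S.c₀)) +
                    En S n (u m)) := mul_le_mul_of_nonneg_left hEn hLu
              _ = (Lu S n (u m) * Ls S n (u m)) *
                    ((S.C * sn S n (u m) + S.e (u m)) / (1 - S.c₀)) + Et S n (u m) := by
                  rw [Et_def]; ring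
              _ ≤ S.c₁ ^ n * ((S.C * sn S n (u m) + S.e (u m)) / (1 - S.c₀)) +
                    Et S n (u m) := add_le_add_left (mul_le_mul_of_nonneg_right hLuLs hd) _
          have hQ : (S.C * sn S n (u m) + S.e (u m)) / (1 - S.c₀) ≤
              (S.C * ((S.C * (Bs S n).2 + 1 / (1 - S.c₂)) / (1 - S.c₀)) + 1) * S.e (u m) /
                (1 - S.c₀) := by
            apply div_le_div_of_nonneg_right ?_ h1c₀.le
            have := mul_le_mul_of_nonneg_left hsn hC
            nlinarith
          have hstep2 : Lu S n (u m) * En S (n+1) m ≤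
              (S.c₁ ^ n *
                (S.C * ((S.C * (Bs S n).2 + 1 / (1 - S.c₂)) / (1 - S.c₀)) + 1) / (1 - S.c₀) +
                (Bs S n).1) * S.e (u m) := by
            have hc₁n : (0:ℝ) ≤ S.c₁ ^ n := pow_nonneg S.hc10 n
            calc Lu S n (u m) * En S (n+1) m
                ≤ S.c₁ ^ n * ((S.C * sn S n (u m) + S.e (u m)) / (1 - S.c₀)) + Et S n (u m) :=
                  hstep1
              _ ≤ S.c₁ ^ n *
                    ((S.C * ((S.C * (Bs S n).2 + 1 / (1 - S.c₂)) / (1 - S.c₀)) + 1) *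
                      S.e (u m) / (1 - S.c₀)) + (Bs S n).1 * S.e (u m) :=
                  add_le_add (mul_le_mul_of_nonneg_left hQ hc₁n) hEt
              _ = _ := by ring
          calc Et S (n+1) m = S.lu m * (Lu S n (u m) * En S (n+1) m) := hkey
            _ ≤ S.lu m *
                ((S.c₁ ^ n *
                  (S.C * ((S.C * (Bs S n).2 + 1 / (1 - S.c₂)) / (1 - S.c₀)) + 1) / (1 - S.c₀) +
                  (Bs S n).1) * S.e (u m)) := by
                apply mul_le_mul_of_nonneg_left hstep2 hlum
            _ = (S.c₁ ^ n *
                  (S.C * ((S.C * (Bs S n).2 + 1 / (1 - S.c₂)) / (1 - S.c₀)) + 1) / (1 - S.c₀) +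
                  (Bs S n).1) * (S.lu m * S.e (u m)) := by ring
            _ ≤ (S.c₁ ^ n *
                  (S.C * ((S.C * (Bs S n).2 + 1 / (1 - S.c₂)) / (1 - S.c₀)) + 1) / (1 - S.c₀) +
                  (Bs S n).1) * (S.c₂ * S.e m) := by
                apply mul_le_mul_of_nonneg_left (S.hs2 m)
                have hB0 := (Bs_nonneg S n).1
                have hB2 := (Bs_nonneg S n).2
                have hc₁n : (0:ℝ) ≤ S.c₁ ^ n := pow_nonneg S.hc10 n
                have t1 : (0:ℝ) ≤ (S.C * (Bs S n).2 + 1 / (1 - S.c₂)) / (1 - S.c₀) :=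
                  div_nonneg (add_nonneg (mul_nonneg hC hB2) (by positivity)) h1c₀.le
                have t2 : (0:ℝ) ≤
                    S.C * ((S.C * (Bs S n).2 + 1 / (1 - S.c₂)) / (1 - S.c₀)) + 1 :=
                  add_nonneg (mul_nonneg hC t1) zero_le_one
                have t3 : (0:ℝ) ≤ S.c₁ ^ n *
                    (S.C * ((S.C * (Bs S n).2 + 1 / (1 - S.c₂)) / (1 - S.c₀)) + 1) /
                      (1 - S.c₀) := div_nonneg (mul_nonneg hc₁n t2) h1c₀.le
                exact add_nonneg t3 hB0
            _ = (Bs S (n+1)).1 * S.e m := by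
                show _ = S.c₂ * _ * S.e m
                ring

lemma sn_gamma (γ Θ : ℝ) (hγ0 : 0 ≤ γ) (hγ1 : γ < 1) (hΘ0 : 0 ≤ Θ) (n : ℕ) (m : M)
    (h : ∀ j, j < n → Et S j m ≤ Θ * γ ^ j * S.e m) :
    sn S n m ≤ ((S.C * Θ * (1 / (1 - γ)) + 1 / (1 - S.c₂)) / (1 - S.c₀)) * S.e m := by
  refine (sn_le S n m).trans ?_
  rw [div_mul_eq_mul_div]
  apply div_le_div_of_nonneg_right ?_ (one_sub_c₀_pos S).le
  have hC : (0:ℝ) ≤ S.C := le_trans zero_le_one S.hC1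
  calc ∑ j ∈ Finset.range n, (S.C * Et S j m + S.c₂ ^ j * S.e m)
      ≤ ∑ j ∈ Finset.range n, (S.C * (Θ * γ ^ j * S.e m) + S.c₂ ^ j * S.e m) := by
        apply Finset.sum_le_sum
        intro j hj
        exact add_le_add_left
          (mul_le_mul_of_nonneg_left (h j (Finset.mem_range.mp hj)) hC) _
    _ = (S.C * Θ * (∑ j ∈ Finset.range n, γ ^ j)) * S.e m +
          (∑ j ∈ Finset.range n, S.c₂ ^ j) * S.e m := by
        rw [Finset.sum_add_distrib, ← Finset.sum_mul]
        congr 1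
        rw [Finset.mul_sum, Finset.sum_mul]
        exact Finset.sum_congr rfl fun j _ => by ring
    _ ≤ (S.C * Θ * (1 / (1 - γ))) * S.e m + (1 / (1 - S.c₂)) * S.e m := by
        apply add_le_add
        · apply mul_le_mul_of_nonneg_right ?_ (S.he0 m)
          exact mul_le_mul_of_nonneg_left (geo_le hγ0 hγ1 n) (mul_nonneg hC hΘ0)
        · exact mul_le_mul_of_nonneg_right (geo_le S.hc20 S.hc21 n) (S.he0 m)
    _ = (S.C * Θ * (1 / (1 - γ)) + 1 / (1 - S.c₂)) * S.e m := by ring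

set_option maxHeartbeats 1000000 in
/-- Geometric decay of the weighted `x`-defect `Et`. -/
lemma Et_geo : ∃ Θ γ : ℝ, 0 ≤ Θ ∧ 0 < γ ∧ γ < 1 ∧ S.c₁ ≤ γ ∧ S.c₂ ≤ γ ∧
    ∀ n m, Et S n m ≤ Θ * γ ^ n * S.e m := by
  classical
  have hC : (0:ℝ) ≤ S.C := le_trans zero_le_one S.hC1
  have hCpos : (0:ℝ) < S.C := lt_of_lt_of_le zero_lt_one S.hC1
  have hd0 := one_sub_c₀_pos S
  have hd2 := one_sub_c₂_pos S
  set W : ℝ := max (max S.c₁ S.c₂) (1/4) with hW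
  have hW0 : (0:ℝ) ≤ W := le_trans (by norm_num) (le_max_right _ _)
  set γ : ℝ := Real.sqrt W with hγdef
  have hγ0 : 0 ≤ γ := Real.sqrt_nonneg _
  have hγsq : γ * γ = W := Real.mul_self_sqrt hW0
  have hγpos : 0 < γ := Real.sqrt_pos.mpr (lt_of_lt_of_le (by norm_num) (le_max_right _ _))
  have hWlt1 : W < 1 := max_lt (max_lt S.hc11 S.hc21) (by norm_num)
  have hγ1 : γ < 1 := by
    by_contra hcon
    push_neg at hcon
    have h2 : (1:ℝ) * 1 ≤ γ * γ :=
      mul_le_mul hcon hcon zero_le_one (le_trans zero_le_one hcon)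
    rw [hγsq] at h2
    linarith only [h2, hWlt1]
  have hγle1 : γ ≤ 1 := hγ1.le
  have hc₁γ : S.c₁ ≤ γ * γ := by rw [hγsq]; exact le_trans (le_max_left _ _) (le_max_left _ _)
  have hc₂γ : S.c₂ ≤ γ * γ := by rw [hγsq]; exact le_trans (le_max_right _ _) (le_max_left _ _)
  have h1γ : (0:ℝ) < 1 - γ := by linarith only [hγ1]
  set A₁ : ℝ := S.C / ((1 - γ) * (1 - S.c₀)) with hA₁
  set A₂ : ℝ := 1 / ((1 - S.c₂) * (1 - S.c₀)) with hA₂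
  have hA₁0 : 0 ≤ A₁ := by
    rw [hA₁]
    exact div_nonneg hC (mul_nonneg h1γ.le hd0.le)
  have hA₂0 : 0 ≤ A₂ := by
    rw [hA₂]
    exact div_nonneg zero_le_one (mul_nonneg hd2.le hd0.le)
  set ρ : ℝ := min ((1 - S.c₀)/4) ((1 - S.c₀)/(4 * S.C * (A₁ + 1))) with hρ
  have h4CA : (0:ℝ) < 4 * S.C * (A₁ + 1) :=
    mul_pos (mul_pos (by norm_num) hCpos) (by linarith only [hA₁0])
  have hρ0 : 0 < ρ :=
    lt_min (div_pos hd0 (by norm_num)) (div_pos hd0 h4CA)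
  obtain ⟨k₀, hk₀⟩ := exists_pow_lt_of_lt_one hρ0 hγ1
  set N₀ : ℕ := 2 * k₀ + 2 with hN₀
  set Bmax : ℝ := ∑ j ∈ Finset.range N₀, (Bs S j).1 with hBmax
  have hBmax0 : 0 ≤ Bmax := Finset.sum_nonneg fun j _ => (Bs_nonneg S j).1
  have hBle : ∀ n, n < N₀ → (Bs S n).1 ≤ Bmax := by
    intro n hn
    exact Finset.single_le_sum (fun j _ => (Bs_nonneg S j).1) (Finset.mem_range.mpr hn)
  set Θ : ℝ := Bmax / γ ^ N₀ + 4 * S.C * A₂ / (1 - S.c₀) + 1 with hΘ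
  have hγN₀ : 0 < γ ^ N₀ := pow_pos hγpos _
  have hBdiv0 : 0 ≤ Bmax / γ ^ N₀ := div_nonneg hBmax0 hγN₀.le
  have hCA₂0 : 0 ≤ 4 * S.C * A₂ / (1 - S.c₀) :=
    div_nonneg (mul_nonneg (mul_nonneg (by norm_num) hC) hA₂0) hd0.le
  have hΘ0 : 0 ≤ Θ := by
    rw [hΘ]
    linarith only [hBdiv0, hCA₂0]
  have hγγ : γ * γ ≤ γ := mul_le_of_le_one_left hγ0 hγle1
  refine ⟨Θ, γ, hΘ0, hγpos, hγ1, hc₁γ.trans hγγ, hc₂γ.trans hγγ, ?_⟩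
  intro n
  induction n using Nat.strong_induction_on with
  | _ n ih =>
      intro m
      by_cases hn : n < N₀
      · -- small n : crude bound
        have h1 : (Bs S n).1 ≤ Θ * γ ^ n := by
          have h2 : γ ^ N₀ ≤ γ ^ n := pow_le_pow_of_le_one hγ0 hγle1 hn.le
          have h3 : Bmax / γ ^ N₀ ≤ Θ := by
            rw [hΘ]
            linarith only [hCA₂0]
          calc (Bs S n).1 ≤ Bmax := hBle n hn
            _ = (Bmax / γ ^ N₀) * γ ^ N₀ := by field_simp
            _ ≤ Θ * γ ^ n := mul_le_mul h3 h2 hγN₀.le (le_trans hBdiv0 h3)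
        exact (Et_B S n m).trans (mul_le_mul_of_nonneg_right h1 (S.he0 m))
      · -- large n : halving
        push_neg at hn
        have hn2 : 2 ≤ n := le_trans (by omega) hn
        set bb : ℕ := n / 2 with hbbdef
        set aa : ℕ := n - bb with haadef
        have hsum : bb + aa = n := by omega
        have hbb1 : 1 ≤ bb := by omega
        have haa1 : 1 ≤ aa := by omega
        have hk₀bb : k₀ ≤ bb := by omega
        have hk₀aa : k₀ ≤ aa := by omega
        have hk₀n : k₀ ≤ n := by omega
        have hbblt : bb < n := by omega
        have haalt : aa < n := by omega
        obtain ⟨kp, hkp⟩ : ∃ kp, aa = kp + 1 := ⟨aa - 1, by omega⟩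
        obtain ⟨bp, hbp⟩ : ∃ bp, bb = bp + 1 := ⟨bb - 1, by omega⟩
        have hEs : En S n m ≤
            Ls S bb (u^[aa] m) *
              ((S.C * sn S bb (u^[aa] m) + En S aa m) / (1 - S.c₀)) +
            En S bb (u^[aa] m) := by
          have h := En_split S bp kp m
          rw [← hbp, ← hkp] at h
          rw [hsum] at h
          exact h
        have hLun : Lu S n m = Lu S aa m * Lu S bb (u^[aa] m) := by
          have h := Lu_add S bb aa m
          rw [hsum] at h
          exact h
        have hsnb : sn S bb (u^[aa] m) ≤
            (S.C * Θ * (1 / (1 - γ)) + 1 / (1 - S.c₂)) / (1 - S.c₀) * S.e (u^[aa] m) :=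
          sn_gamma S γ Θ hγ0 hγ1 hΘ0 bb (u^[aa] m)
            (fun j hj => ih j (lt_trans hj hbblt) (u^[aa] m))
        have hD : (S.C * Θ * (1 / (1 - γ)) + 1 / (1 - S.c₂)) / (1 - S.c₀) = A₁ * Θ + A₂ := by
          rw [hA₁, hA₂]
          field_simp
        rw [hD] at hsnb
        have hD0 : 0 ≤ A₁ * Θ + A₂ := add_nonneg (mul_nonneg hA₁0 hΘ0) hA₂0
        have hEta : Et S aa m ≤ Θ * γ ^ aa * S.e m := ih aa haalt m
        have hEtb : Et S bb (u^[aa] m) ≤ Θ * γ ^ bb * S.e (u^[aa] m) := ih bb hbblt (u^[aa] m)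
        have hLue := Lu_e S aa m
        have hLuaa := Lu_nonneg S aa m
        have hLubb := Lu_nonneg S bb (u^[aa] m)
        have hsn0 := sn_nonneg S bb (u^[aa] m)
        have hγbb0 : (0:ℝ) ≤ γ ^ bb := pow_nonneg hγ0 _
        have hγaa0 : (0:ℝ) ≤ γ ^ aa := pow_nonneg hγ0 _
        have hγn0 : (0:ℝ) ≤ γ ^ n := pow_nonneg hγ0 _
        have hc₂aa0 : (0:ℝ) ≤ S.c₂ ^ aa := pow_nonneg S.hc20 _
        have hγn1 : γ ^ n ≤ 1 := pow_le_one₀ hγ0 hγle1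
        have hP0 : 0 ≤ (S.C * sn S bb (u^[aa] m) + En S aa m) / (1 - S.c₀) :=
          div_nonneg
            (add_nonneg (mul_nonneg hC hsn0) (En_nonneg S aa m)) hd0.le
        have hstep1 : Et S n m ≤
            S.c₁ ^ bb * (Lu S aa m * ((S.C * sn S bb (u^[aa] m) + En S aa m) / (1 - S.c₀))) +
            Lu S aa m * Et S bb (u^[aa] m) := by
          have e1 : Et S n m = (Lu S aa m * Lu S bb (u^[aa] m)) * En S n m := by
            rw [Et_def, hLun]
          have e2 : (Lu S aa m * Lu S bb (u^[aa] m)) * En S n m ≤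
              (Lu S aa m * Lu S bb (u^[aa] m)) *
                (Ls S bb (u^[aa] m) *
                  ((S.C * sn S bb (u^[aa] m) + En S aa m) / (1 - S.c₀)) +
                 En S bb (u^[aa] m)) :=
            mul_le_mul_of_nonneg_left hEs (mul_nonneg hLuaa hLubb)
          have e3 : (Lu S aa m * Lu S bb (u^[aa] m)) *
              (Ls S bb (u^[aa] m) *
                ((S.C * sn S bb (u^[aa] m) + En S aa m) / (1 - S.c₀)) +
               En S bb (u^[aa] m)) =
              (Lu S bb (u^[aa] m) * Ls S bb (u^[aa] m)) *
                (Lu S aa m * ((S.C * sn S bb (u^[aa] m) + En S aa m) / (1 - S.c₀))) +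
              Lu S aa m * Et S bb (u^[aa] m) := by
            rw [Et_def]
            ring
          have e4 : (Lu S bb (u^[aa] m) * Ls S bb (u^[aa] m)) *
              (Lu S aa m * ((S.C * sn S bb (u^[aa] m) + En S aa m) / (1 - S.c₀))) ≤
              S.c₁ ^ bb *
                (Lu S aa m * ((S.C * sn S bb (u^[aa] m) + En S aa m) / (1 - S.c₀))) :=
            mul_le_mul_of_nonneg_right (LuLs_le S bb (u^[aa] m)) (mul_nonneg hLuaa hP0)
          rw [e1]
          calc (Lu S aa m * Lu S bb (u^[aa] m)) * En S n m ≤ _ := e2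
            _ = _ := e3
            _ ≤ _ := add_le_add_left e4 _
        have hq1 : Lu S aa m * sn S bb (u^[aa] m) ≤ (A₁ * Θ + A₂) * (S.c₂ ^ aa * S.e m) := by
          calc Lu S aa m * sn S bb (u^[aa] m)
              ≤ Lu S aa m * ((A₁ * Θ + A₂) * S.e (u^[aa] m)) :=
                mul_le_mul_of_nonneg_left hsnb hLuaa
            _ = (A₁ * Θ + A₂) * (Lu S aa m * S.e (u^[aa] m)) := by ring
            _ ≤ (A₁ * Θ + A₂) * (S.c₂ ^ aa * S.e m) := mul_le_mul_of_nonneg_left hLue hD0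
        have hq3 : Lu S aa m * Et S bb (u^[aa] m) ≤ Θ * γ ^ bb * (S.c₂ ^ aa * S.e m) := by
          calc Lu S aa m * Et S bb (u^[aa] m)
              ≤ Lu S aa m * (Θ * γ ^ bb * S.e (u^[aa] m)) :=
                mul_le_mul_of_nonneg_left hEtb hLuaa
            _ = Θ * γ ^ bb * (Lu S aa m * S.e (u^[aa] m)) := by ring
            _ ≤ Θ * γ ^ bb * (S.c₂ ^ aa * S.e m) :=
                mul_le_mul_of_nonneg_left hLue (mul_nonneg hΘ0 hγbb0)
        have hLuP : Lu S aa m * ((S.C * sn S bb (u^[aa] m) + En S aa m) / (1 - S.c₀)) ≤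
            ((S.C * ((A₁ * Θ + A₂) * (S.c₂ ^ aa * S.e m)) + Θ * γ ^ aa * S.e m) /
              (1 - S.c₀)) := by
          rw [mul_div_assoc']
          apply div_le_div_of_nonneg_right ?_ hd0.le
          have hq2 : Lu S aa m * En S aa m ≤ Θ * γ ^ aa * S.e m := by
            rw [← Et_def]; exact hEta
          calc Lu S aa m * (S.C * sn S bb (u^[aa] m) + En S aa m)
              = S.C * (Lu S aa m * sn S bb (u^[aa] m)) + Lu S aa m * En S aa m := by ring
            _ ≤ S.C * ((A₁ * Θ + A₂) * (S.c₂ ^ aa * S.e m)) + Θ * γ ^ aa * S.e m :=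
              add_le_add (mul_le_mul_of_nonneg_left hq1 hC) hq2
        have hmain : Et S n m ≤
            (S.c₁ ^ bb * ((S.C * ((A₁ * Θ + A₂) * S.c₂ ^ aa) + Θ * γ ^ aa) / (1 - S.c₀)) +
              Θ * γ ^ bb * S.c₂ ^ aa) * S.e m := by
          have hc₁bb : (0:ℝ) ≤ S.c₁ ^ bb := pow_nonneg S.hc10 _
          calc Et S n m ≤ _ := hstep1
            _ ≤ S.c₁ ^ bb *
                  ((S.C * ((A₁ * Θ + A₂) * (S.c₂ ^ aa * S.e m)) + Θ * γ ^ aa * S.e m) /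
                    (1 - S.c₀)) + Θ * γ ^ bb * (S.c₂ ^ aa * S.e m) :=
                add_le_add (mul_le_mul_of_nonneg_left hLuP hc₁bb) hq3
            _ = _ := by ring
        have hγbb : γ ^ bb ≤ γ ^ k₀ := pow_le_pow_of_le_one hγ0 hγle1 hk₀bb
        have hγaa : γ ^ aa ≤ γ ^ k₀ := pow_le_pow_of_le_one hγ0 hγle1 hk₀aa
        have hγn : γ ^ n ≤ γ ^ k₀ := pow_le_pow_of_le_one hγ0 hγle1 hk₀n
        have hρ1 : γ ^ k₀ ≤ (1 - S.c₀)/4 := hk₀.le.trans (min_le_left _ _)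
        have hρ2 : γ ^ k₀ ≤ (1 - S.c₀)/(4 * S.C * (A₁ + 1)) := hk₀.le.trans (min_le_right _ _)
        have hg1 : S.c₁ ^ bb ≤ γ ^ bb * γ ^ bb := by
          calc S.c₁ ^ bb ≤ (γ * γ) ^ bb := pow_le_pow_left₀ S.hc10 hc₁γ bb
            _ = γ ^ bb * γ ^ bb := mul_pow γ γ bb
        have hg2 : S.c₂ ^ aa ≤ γ ^ aa * γ ^ aa := by
          calc S.c₂ ^ aa ≤ (γ * γ) ^ aa := pow_le_pow_left₀ S.hc20 hc₂γ aa
            _ = γ ^ aa * γ ^ aa := mul_pow γ γ aa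
        have hgn : γ ^ bb * γ ^ aa = γ ^ n := by rw [← pow_add, hsum]
        have v1 : γ ^ n * (S.C * A₁) ≤ (1 - S.c₀) / 4 := by
          have hCA₁ : (0:ℝ) ≤ S.C * A₁ := mul_nonneg hC hA₁0
          have hh := hγn.trans hρ2
          have hCne : S.C ≠ 0 := ne_of_gt hCpos
          have hA1ne : A₁ + 1 ≠ 0 := by linarith only [hA₁0]
          calc γ ^ n * (S.C * A₁) ≤ ((1 - S.c₀)/(4 * S.C * (A₁ + 1))) * (S.C * A₁) :=
              mul_le_mul_of_nonneg_right hh hCA₁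
            _ ≤ ((1 - S.c₀)/(4 * S.C * (A₁ + 1))) * (S.C * (A₁ + 1)) := by
              apply mul_le_mul_of_nonneg_left ?_ (div_nonneg hd0.le h4CA.le)
              apply mul_le_mul_of_nonneg_left ?_ hC
              linarith only []
            _ = (1 - S.c₀) / 4 := by
              field_simp
        have v2 : γ ^ n * (S.C * A₂) / (1 - S.c₀) ≤ Θ / 4 := by
          have hΘge : 4 * S.C * A₂ / (1 - S.c₀) ≤ Θ := by
            rw [hΘ]
            linarith only [hBdiv0]
          have h1 : γ ^ n * (S.C * A₂) ≤ S.C * A₂ :=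
            mul_le_of_le_one_left (mul_nonneg hC hA₂0) hγn1
          have h2 : γ ^ n * (S.C * A₂) / (1 - S.c₀) ≤ S.C * A₂ / (1 - S.c₀) :=
            div_le_div_of_nonneg_right h1 hd0.le
          have heq : 4 * S.C * A₂ / (1 - S.c₀) = 4 * (S.C * A₂ / (1 - S.c₀)) := by
            ring
          have h3 : S.C * A₂ / (1 - S.c₀) ≤ Θ / 4 := by
            linarith only [hΘge, heq]
          exact h2.trans h3
        have v3 : γ ^ bb ≤ (1 - S.c₀) / 4 := hγbb.trans hρ1
        have v4 : γ ^ aa ≤ 1 / 4 := by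
          have h1 := hγaa.trans hρ1
          have h2 : (1 - S.c₀)/4 ≤ 1/4 :=
            div_le_div_of_nonneg_right (by linarith only [S.hc00]) (by norm_num)
          linarith only [h1, h2]
        have hcoef : S.c₁ ^ bb * ((S.C * ((A₁ * Θ + A₂) * S.c₂ ^ aa) + Θ * γ ^ aa) /
              (1 - S.c₀)) + Θ * γ ^ bb * S.c₂ ^ aa ≤ Θ * γ ^ n := by
          have hT1 : S.c₁ ^ bb * ((S.C * ((A₁ * Θ + A₂) * S.c₂ ^ aa) + Θ * γ ^ aa) /
                (1 - S.c₀)) ≤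
              (γ ^ bb * γ ^ bb) *
                ((S.C * ((A₁ * Θ + A₂) * (γ ^ aa * γ ^ aa)) + Θ * γ ^ aa) / (1 - S.c₀)) := by
            apply mul_le_mul hg1 ?_ ?_ (mul_nonneg hγbb0 hγbb0)
            · apply div_le_div_of_nonneg_right ?_ hd0.le
              apply add_le_add_left
              exact mul_le_mul_of_nonneg_left
                (mul_le_mul_of_nonneg_left hg2 hD0) hC
            · apply div_nonneg ?_ hd0.le
              have hx1 : 0 ≤ S.C * ((A₁ * Θ + A₂) * S.c₂ ^ aa) :=
                mul_nonneg hC (mul_nonneg hD0 hc₂aa0)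
              have hx2 : 0 ≤ Θ * γ ^ aa := mul_nonneg hΘ0 hγaa0
              linarith only [hx1, hx2]
          have hT3 : Θ * γ ^ bb * S.c₂ ^ aa ≤ Θ * γ ^ bb * (γ ^ aa * γ ^ aa) :=
            mul_le_mul_of_nonneg_left hg2 (mul_nonneg hΘ0 hγbb0)
          have hexp : (γ ^ bb * γ ^ bb) *
                ((S.C * ((A₁ * Θ + A₂) * (γ ^ aa * γ ^ aa)) + Θ * γ ^ aa) / (1 - S.c₀)) +
              Θ * γ ^ bb * (γ ^ aa * γ ^ aa) =
              γ ^ n * ((γ ^ n * (S.C * A₁) / (1 - S.c₀)) * Θ +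
                γ ^ n * (S.C * A₂) / (1 - S.c₀) +
                (γ ^ bb / (1 - S.c₀)) * Θ + γ ^ aa * Θ) := by
            rw [← hgn]
            field_simp
          have b1 : (γ ^ n * (S.C * A₁) / (1 - S.c₀)) * Θ ≤ (1/4) * Θ := by
            apply mul_le_mul_of_nonneg_right ?_ hΘ0
            rw [div_le_iff₀ hd0]
            linarith only [v1]
          have b3 : (γ ^ bb / (1 - S.c₀)) * Θ ≤ (1/4) * Θ := by
            apply mul_le_mul_of_nonneg_right ?_ hΘ0
            rw [div_le_iff₀ hd0]
            linarith only [v3]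
          have b4 : γ ^ aa * Θ ≤ (1/4) * Θ :=
            mul_le_mul_of_nonneg_right v4 hΘ0
          have hbudget : (γ ^ n * (S.C * A₁) / (1 - S.c₀)) * Θ +
              γ ^ n * (S.C * A₂) / (1 - S.c₀) +
              (γ ^ bb / (1 - S.c₀)) * Θ + γ ^ aa * Θ ≤ Θ := by
            linarith only [b1, b3, b4, v2]
          calc S.c₁ ^ bb * ((S.C * ((A₁ * Θ + A₂) * S.c₂ ^ aa) + Θ * γ ^ aa) / (1 - S.c₀)) +
                Θ * γ ^ bb * S.c₂ ^ aa
              ≤ (γ ^ bb * γ ^ bb) *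
                  ((S.C * ((A₁ * Θ + A₂) * (γ ^ aa * γ ^ aa)) + Θ * γ ^ aa) / (1 - S.c₀)) +
                Θ * γ ^ bb * (γ ^ aa * γ ^ aa) := add_le_add hT1 hT3
            _ = γ ^ n * ((γ ^ n * (S.C * A₁) / (1 - S.c₀)) * Θ +
                  γ ^ n * (S.C * A₂) / (1 - S.c₀) +
                  (γ ^ bb / (1 - S.c₀)) * Θ + γ ^ aa * Θ) := hexp
            _ ≤ γ ^ n * Θ := mul_le_mul_of_nonneg_left hbudget hγn0
            _ = Θ * γ ^ n := mul_comm _ _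
        refine hmain.trans ?_
        exact mul_le_mul_of_nonneg_right hcoef (S.he0 m)

/-- The construction of the invariant graph family and its properties. -/
lemma construction : ∃ (f : ∀ m, X m → Y m) (xs : ∀ m, X m → X (u m)) (K K₀ : ℝ),
    0 ≤ K ∧ 0 ≤ K₀ ∧ ∀ m,
      (∀ a b : X m, dist (f m a) (f m b) ≤ S.b' m * dist a b) ∧
      dist (f m (S.iX m)) (S.iY m) ≤ K * S.e m ∧
      (∀ a b : X m, dist (xs m a) (xs m b) ≤ S.ls m * dist a b) ∧
      dist (xs m (S.iX m)) (S.iX (u m)) ≤ K₀ * S.e (u m) ∧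
      ∀ x : X m, S.F m x (f (u m) (xs m x)) = xs m x ∧ S.G m x (f (u m) (xs m x)) = f m x := by
  classical
  obtain ⟨Θ, γ, hΘ0, hγpos, hγ1, hc₁γ, hc₂γ, hEt⟩ := Et_geo S
  have hγ0 : (0:ℝ) ≤ γ := hγpos.le
  have h1γ : (0:ℝ) < 1 - γ := by linarith only [hγ1]
  have hd0 := one_sub_c₀_pos S
  have hd2 := one_sub_c₂_pos S
  have hC : (0:ℝ) ≤ S.C := le_trans zero_le_one S.hC1
  set K : ℝ := (S.C * Θ * (1 / (1 - γ)) + 1 / (1 - S.c₂)) / (1 - S.c₀) with hK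
  have hsnK : ∀ n m, sn S n m ≤ K * S.e m := fun n m =>
    sn_gamma S γ Θ hγ0 hγ1 hΘ0 n m (fun j _ => hEt j m)
  have hK0 : 0 ≤ K := by
    rw [hK]
    apply div_nonneg ?_ hd0.le
    have h1 : 0 ≤ S.C * Θ * (1 / (1 - γ)) :=
      mul_nonneg (mul_nonneg hC hΘ0) (by positivity)
    have h2 : (0:ℝ) ≤ 1 / (1 - S.c₂) := by positivity
    linarith only [h1, h2]
  -- geometric bound on successive differences of `fn`
  set D₁ : ∀ m, X m → ℝ := fun m x =>
    (S.b' m * dist x (S.iX m) + S.e m) +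
      (S.C * dist x (S.iX m) + S.C * Θ * S.e m + S.e m) / (1 - S.c₀) with hD₁
  have hD₁0 : ∀ m x, 0 ≤ D₁ m x := by
    intro m x
    rw [hD₁]
    have h1 : 0 ≤ S.b' m * dist x (S.iX m) := mul_nonneg (S.hb'0 m) dist_nonneg
    have h2 : 0 ≤ S.C * dist x (S.iX m) := mul_nonneg hC dist_nonneg
    have h3 : 0 ≤ S.C * Θ * S.e m := mul_nonneg (mul_nonneg hC hΘ0) (S.he0 m)
    have h4 := S.he0 m
    have h5 : 0 ≤ (S.C * dist x (S.iX m) + S.C * Θ * S.e m + S.e m) / (1 - S.c₀) :=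
      div_nonneg (by linarith only [h2, h3, h4]) hd0.le
    linarith only [h1, h4, h5]
  have hdelta : ∀ n m (x : X m),
      dist (fn S (n+1) m x) (fn S n m x) ≤ D₁ m x * γ ^ n := by
    intro n m x
    cases n with
    | zero =>
        have h := delta0 S m x
        rw [pow_zero, mul_one, hD₁]
        have h5 : 0 ≤ (S.C * dist x (S.iX m) + S.C * Θ * S.e m + S.e m) / (1 - S.c₀) :=
          div_nonneg (by
            have h2 : 0 ≤ S.C * dist x (S.iX m) := mul_nonneg hC dist_nonneg
            have h3 : 0 ≤ S.C * Θ * S.e m := mul_nonneg (mul_nonneg hC hΘ0) (S.he0 m)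
            have h4 := S.he0 m
            linarith only [h2, h3, h4]) hd0.le
        linarith only [h, h5]
    | succ k =>
        refine (delta' S k m x).trans ?_
        have hEtk := hEt (k+1) m
        have hc₁p : S.c₁ ^ (k+1) ≤ γ ^ (k+1) := pow_le_pow_left₀ S.hc10 hc₁γ _
        have hc₂p : S.c₂ ^ (k+1) ≤ γ ^ (k+1) := pow_le_pow_left₀ S.hc20 hc₂γ _
        have hγp : (0:ℝ) ≤ γ ^ (k+1) := pow_nonneg hγ0 _
        have hnum : S.C * (S.c₁ ^ (k+1) * dist x (S.iX m)) + S.C * Et S (k+1) m +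
            S.c₂ ^ (k+1) * S.e m ≤
            γ ^ (k+1) * (S.C * dist x (S.iX m) + S.C * Θ * S.e m + S.e m) := by
          have t1 : S.C * (S.c₁ ^ (k+1) * dist x (S.iX m)) ≤
              γ ^ (k+1) * (S.C * dist x (S.iX m)) := by
            have := mul_le_mul_of_nonneg_right hc₁p (dist_nonneg (x := x) (y := S.iX m))
            nlinarith [mul_nonneg hC (mul_nonneg (pow_nonneg S.hc10 (k+1)) (dist_nonneg (x := x) (y := S.iX m)))]
          have t2 : S.C * Et S (k+1) m ≤ γ ^ (k+1) * (S.C * Θ * S.e m) := by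
            have := mul_le_mul_of_nonneg_left hEtk hC
            nlinarith [this]
          have t3 : S.c₂ ^ (k+1) * S.e m ≤ γ ^ (k+1) * S.e m :=
            mul_le_mul_of_nonneg_right hc₂p (S.he0 m)
          linarith only [t1, t2, t3]
        calc (S.C * (S.c₁ ^ (k+1) * dist x (S.iX m)) + S.C * Et S (k+1) m +
              S.c₂ ^ (k+1) * S.e m) / (1 - S.c₀)
            ≤ γ ^ (k+1) * (S.C * dist x (S.iX m) + S.C * Θ * S.e m + S.e m) / (1 - S.c₀) :=
              div_le_div_of_nonneg_right hnum hd0.le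
          _ ≤ D₁ m x * γ ^ (k+1) := by
              have h1 : 0 ≤ S.b' m * dist x (S.iX m) + S.e m := by
                have h1a := mul_nonneg (S.hb'0 m) (dist_nonneg (x := x) (y := S.iX m))
                have h1b := S.he0 m
                linarith only [h1a, h1b]
              have heq : γ ^ (k+1) * (S.C * dist x (S.iX m) + S.C * Θ * S.e m + S.e m) /
                  (1 - S.c₀) =
                  ((S.C * dist x (S.iX m) + S.C * Θ * S.e m + S.e m) / (1 - S.c₀)) *
                    γ ^ (k+1) := by ring
              rw [heq]
              apply mul_le_mul_of_nonneg_right ?_ hγp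
              show _ ≤ (S.b' m * dist x (S.iX m) + S.e m) +
                (S.C * dist x (S.iX m) + S.C * Θ * S.e m + S.e m) / (1 - S.c₀)
              linarith only [h1]
  -- Cauchy sequences and limits for fn
  have hcauchy : ∀ m (x : X m), CauchySeq (fun n => fn S n m x) := by
    intro m x
    apply cauchySeq_of_le_geometric γ (D₁ m x) hγ1
    intro n
    rw [dist_comm]
    exact hdelta n m x
  have hex : ∀ m (x : X m), ∃ y : Y m, Filter.Tendsto (fun n => fn S n m x)
      Filter.atTop (nhds y) := fun m x => cauchySeq_tendsto_of_complete (hcauchy m x)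
  set f : ∀ m, X m → Y m := fun m x => (hex m x).choose with hf
  have hft : ∀ m (x : X m), Filter.Tendsto (fun n => fn S n m x)
      Filter.atTop (nhds (f m x)) := fun m x => (hex m x).choose_spec
  -- tail estimate
  have htail : ∀ m (x : X m) n, dist (fn S n m x) (f m x) ≤ D₁ m x * γ ^ n / (1 - γ) := by
    intro m x n
    apply dist_le_of_le_geometric_of_tendsto γ (D₁ m x) hγ1 ?_ (hft m x) n
    intro k
    rw [dist_comm]
    exact hdelta k m x
  -- Lipschitz property of f
  have hflip : ∀ m (a b : X m), dist (f m a) (f m b) ≤ S.b' m * dist a b := by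
    intro m a b
    have hl : Filter.Tendsto (fun n => dist (fn S n m a) (fn S n m b))
        Filter.atTop (nhds (dist (f m a) (f m b))) := (hft m a).dist (hft m b)
    exact le_of_tendsto hl (Filter.Eventually.of_forall fun n => fn_lip S n m a b)
  -- section bound for f
  have hfK : ∀ m, dist (f m (S.iX m)) (S.iY m) ≤ K * S.e m := by
    intro m
    have hl : Filter.Tendsto (fun n => dist (fn S n m (S.iX m)) (S.iY m))
        Filter.atTop (nhds (dist (f m (S.iX m)) (S.iY m))) :=
      (hft m (S.iX m)).dist tendsto_const_nhds
    exact le_of_tendsto hl (Filter.Eventually.of_forall fun n => hsnK n m)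
  -- the junction sequence
  set zz : ∀ m, X m → ℕ → X (u m) := fun m x n => jn S n m x (S.iY (u^[n+1] m)) with hzz
  have hzfix : ∀ m (x : X m) n, zz m x n = S.F m x (fn S n (u m) (zz m x n)) := by
    intro m x n
    exact jn_eq S n m x (S.iY (u^[n+1] m))
  have hGsucc : ∀ m (x : X m) n, fn S (n+1) m x = S.G m x (fn S n (u m) (zz m x n)) := by
    intro m x n
    rfl
  have hzlip : ∀ m (x x' : X m) n, dist (zz m x n) (zz m x' n) ≤ S.ls m * dist x x' := by
    intro m x x' n
    have hyp : dist (fn S n (u m) (zz m x n)) (fn S n (u m) (zz m x' n)) ≤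
        S.b m * dist (S.F m x (fn S n (u m) (zz m x n)))
          (S.F m x' (fn S n (u m) (zz m x' n))) := by
      rw [← hzfix, ← hzfix]
      exact (fn_lip S n (u m) _ _).trans
        (mul_le_mul_of_nonneg_right (S.hbb' m) dist_nonneg)
    have h := (S.hB m x x' _ _ hyp).2
    calc dist (zz m x n) (zz m x' n)
        = dist (S.F m x (fn S n (u m) (zz m x n))) (S.F m x' (fn S n (u m) (zz m x' n))) := by
          rw [← hzfix, ← hzfix]
      _ ≤ S.ls m * dist x x' := h
  -- uniform bound on the distance of zz to the base point
  set R : ∀ m, X m → ℝ := fun m x =>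
    (S.ls m * dist x (S.iX m) + S.C * K * S.e (u m) + S.e (u m)) / (1 - S.c₀) with hR
  have hR0 : ∀ m x, 0 ≤ R m x := by
    intro m x
    rw [hR]
    apply div_nonneg ?_ hd0.le
    have h1 : 0 ≤ S.ls m * dist x (S.iX m) := mul_nonneg (S.hls0 m) dist_nonneg
    have h2 : 0 ≤ S.C * K * S.e (u m) := mul_nonneg (mul_nonneg hC hK0) (S.he0 (u m))
    have h3 := S.he0 (u m)
    linarith only [h1, h2, h3]
  have hzR : ∀ m (x : X m) n, dist (zz m x n) (S.iX (u m)) ≤ R m x := by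
    intro m x n
    have hw : dist (fn S n (u m) (zz m x n)) (S.iY (u m)) ≤
        S.b' (u m) * dist (zz m x n) (S.iX (u m)) + K * S.e (u m) := by
      calc dist (fn S n (u m) (zz m x n)) (S.iY (u m))
          ≤ dist (fn S n (u m) (zz m x n)) (fn S n (u m) (S.iX (u m))) + sn S n (u m) :=
            dist_triangle _ _ _
        _ ≤ S.b' (u m) * dist (zz m x n) (S.iX (u m)) + K * S.e (u m) :=
            add_le_add (fn_lip S n (u m) _ _) (hsnK n (u m))
    have hz1 : dist (zz m x n) (S.iX (u m)) ≤
        S.a' m * dist (fn S n (u m) (zz m x n)) (S.iY (u m)) +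
          (S.ls m * dist x (S.iX m) + S.e (u m)) := by
      calc dist (zz m x n) (S.iX (u m))
          ≤ dist (zz m x n) (S.F m x (S.iY (u m))) +
              (dist (S.F m x (S.iY (u m))) (S.F m (S.iX m) (S.iY (u m))) +
                dist (S.F m (S.iX m) (S.iY (u m))) (S.iX (u m))) := by
            have := dist_triangle4 (zz m x n) (S.F m x (S.iY (u m)))
              (S.F m (S.iX m) (S.iY (u m))) (S.iX (u m))
            linarith only [this]
        _ ≤ S.a' m * dist (fn S n (u m) (zz m x n)) (S.iY (u m)) +
              (S.ls m * dist x (S.iX m) + S.e (u m)) := by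
            apply add_le_add
            · conv_lhs => rw [hzfix m x n]
              exact lipFy S m x _ _
            · apply add_le_add (lipFx S m x (S.iX m) _)
              rw [dist_comm]
              exact S.hiF m
    rw [hR, le_div_iff₀ hd0]
    have h2 : S.a' m * (S.b' (u m) * dist (zz m x n) (S.iX (u m))) ≤
        S.c₀ * dist (zz m x n) (S.iX (u m)) := by
      rw [← mul_assoc]
      exact mul_le_mul_of_nonneg_right (S.hangle m) dist_nonneg
    have h3 : S.a' m * (K * S.e (u m)) ≤ S.C * K * S.e (u m) := by
      rw [← mul_assoc]
      exact mul_le_mul_of_nonneg_right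
        (mul_le_mul_of_nonneg_right (ha'C S m) hK0) (S.he0 (u m))
    have h1 := hz1.trans (add_le_add_left (mul_le_mul_of_nonneg_left hw (S.ha'0 m)) _)
    nlinarith [dist_nonneg (x := zz m x n) (y := S.iX (u m))]
  -- Cauchy property of zz
  have hzcauchy : ∀ m (x : X m), CauchySeq (zz m x) := by
    intro m x
    have hstep : ∀ n, dist (zz m x n) (zz m x (n+1)) ≤
        (S.C * (D₁ (u m) (zz m x (n+1)) ) / (1 - S.c₀)) * γ ^ n := by
      intro n
      rw [dist_comm]
      haveI : Nonempty (X (u m)) := ⟨S.iX (u m)⟩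
      have hfixpt := (jn_contr S n m x (S.iY (u^[n+1] m))).dist_fixedPoint_le (zz m x (n+1))
      have hcoe : dist (zz m x (n+1))
          (S.F m x (Gc S n (u m) (zz m x (n+1)) (S.iY (u^[n+1] m)))) /
            (1 - ((⟨S.c₀, S.hc00⟩ : NNReal) : ℝ)) =
          dist (zz m x (n+1))
            (S.F m x (fn S n (u m) (zz m x (n+1)))) / (1 - S.c₀) := rfl
      have h1 : dist (zz m x (n+1)) (zz m x n) ≤
          dist (zz m x (n+1)) (S.F m x (fn S n (u m) (zz m x (n+1)))) / (1 - S.c₀) := by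
        exact hfixpt
      have h2 : dist (zz m x (n+1)) (S.F m x (fn S n (u m) (zz m x (n+1)))) ≤
          S.C * (D₁ (u m) (zz m x (n+1)) * γ ^ n) := by
        calc dist (zz m x (n+1)) (S.F m x (fn S n (u m) (zz m x (n+1))))
            = dist (S.F m x (fn S (n+1) (u m) (zz m x (n+1))))
                (S.F m x (fn S n (u m) (zz m x (n+1)))) := by
              nth_rewrite 1 [hzfix m x (n+1)]
              rfl
          _ ≤ S.a' m * dist (fn S (n+1) (u m) (zz m x (n+1)))
                (fn S n (u m) (zz m x (n+1))) := lipFy S m x _ _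
          _ ≤ S.C * (D₁ (u m) (zz m x (n+1)) * γ ^ n) := by
              apply mul_le_mul (ha'C S m) (hdelta n (u m) _) dist_nonneg hC
      calc dist (zz m x (n+1)) (zz m x n)
          ≤ dist (zz m x (n+1)) (S.F m x (fn S n (u m) (zz m x (n+1)))) / (1 - S.c₀) := h1
        _ ≤ S.C * (D₁ (u m) (zz m x (n+1)) * γ ^ n) / (1 - S.c₀) :=
            div_le_div_of_nonneg_right h2 hd0.le
        _ = (S.C * D₁ (u m) (zz m x (n+1)) / (1 - S.c₀)) * γ ^ n := by ring
    -- uniform bound on D₁ (u m) (zz m x (n+1))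
    have hDbound : ∀ n, D₁ (u m) (zz m x n) ≤
        (S.b' (u m) * R m x + S.e (u m)) +
          (S.C * R m x + S.C * Θ * S.e (u m) + S.e (u m)) / (1 - S.c₀) := by
      intro n
      rw [hD₁]
      have hz := hzR m x n
      have t1 : S.b' (u m) * dist (zz m x n) (S.iX (u m)) ≤ S.b' (u m) * R m x :=
        mul_le_mul_of_nonneg_left hz (S.hb'0 (u m))
      have t2 : S.C * dist (zz m x n) (S.iX (u m)) ≤ S.C * R m x :=
        mul_le_mul_of_nonneg_left hz hC
      have t3 : (S.C * dist (zz m x n) (S.iX (u m)) + S.C * Θ * S.e (u m) + S.e (u m)) /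
          (1 - S.c₀) ≤
          (S.C * R m x + S.C * Θ * S.e (u m) + S.e (u m)) / (1 - S.c₀) := by
        apply div_le_div_of_nonneg_right ?_ hd0.le
        linarith only [t2]
      linarith only [t1, t3]
    apply cauchySeq_of_le_geometric γ
      (S.C * ((S.b' (u m) * R m x + S.e (u m)) +
        (S.C * R m x + S.C * Θ * S.e (u m) + S.e (u m)) / (1 - S.c₀)) / (1 - S.c₀)) hγ1
    intro n
    refine (hstep n).trans ?_
    apply mul_le_mul_of_nonneg_right ?_ (pow_nonneg hγ0 n)
    apply div_le_div_of_nonneg_right ?_ hd0.le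
    exact mul_le_mul_of_nonneg_left (hDbound (n+1)) hC
  have hzex : ∀ m (x : X m), ∃ z : X (u m), Filter.Tendsto (zz m x)
      Filter.atTop (nhds z) := fun m x => cauchySeq_tendsto_of_complete (hzcauchy m x)
  set xs : ∀ m, X m → X (u m) := fun m x => (hzex m x).choose with hxs
  have hxst : ∀ m (x : X m), Filter.Tendsto (zz m x) Filter.atTop (nhds (xs m x)) :=
    fun m x => (hzex m x).choose_spec
  have hxlip : ∀ m (a b : X m), dist (xs m a) (xs m b) ≤ S.ls m * dist a b := by
    intro m a b
    have hl : Filter.Tendsto (fun n => dist (zz m a n) (zz m b n))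
        Filter.atTop (nhds (dist (xs m a) (xs m b))) := (hxst m a).dist (hxst m b)
    exact le_of_tendsto hl (Filter.Eventually.of_forall fun n => hzlip m a b n)
  set K₀ : ℝ := (S.C * K + 1) / (1 - S.c₀) with hK₀
  have hK₀0 : 0 ≤ K₀ := by
    rw [hK₀]
    apply div_nonneg ?_ hd0.le
    have := mul_nonneg hC hK0
    linarith only [this]
  have hxsK₀ : ∀ m, dist (xs m (S.iX m)) (S.iX (u m)) ≤ K₀ * S.e (u m) := by
    intro m
    have hl : Filter.Tendsto (fun n => dist (zz m (S.iX m) n) (S.iX (u m)))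
        Filter.atTop (nhds (dist (xs m (S.iX m)) (S.iX (u m)))) :=
      (hxst m (S.iX m)).dist tendsto_const_nhds
    apply le_of_tendsto hl
    apply Filter.Eventually.of_forall
    intro n
    refine (hzR m (S.iX m) n).trans ?_
    show (S.ls m * dist (S.iX m) (S.iX m) + S.C * K * S.e (u m) + S.e (u m)) / (1 - S.c₀) ≤
      K₀ * S.e (u m)
    rw [dist_self, mul_zero, zero_add, hK₀, div_mul_eq_mul_div]
    apply div_le_div_of_nonneg_right ?_ hd0.le
    have heq : (S.C * K + 1) * S.e (u m) = S.C * K * S.e (u m) + S.e (u m) := by ring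
    linarith only [heq.le]
  -- invariance equations
  have hinv : ∀ m (x : X m),
      S.F m x (f (u m) (xs m x)) = xs m x ∧ S.G m x (f (u m) (xs m x)) = f m x := by
    intro m x
    set q : X (u m) := xs m x with hq
    set L : Y (u m) := f (u m) q with hL
    have hdq : Filter.Tendsto (fun n => dist (zz m x n) q) Filter.atTop (nhds 0) := by
      have h0 := (hxst m x).dist (tendsto_const_nhds (x := xs m x) (f := (Filter.atTop : Filter ℕ)))
      simp only [dist_self] at h0
      exact h0
    have hfnzz : Filter.Tendsto (fun n => fn S n (u m) (zz m x n)) Filter.atTop (nhds L) := by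
      rw [tendsto_iff_dist_tendsto_zero]
      have hb : ∀ n, dist (fn S n (u m) (zz m x n)) L ≤
          S.b' (u m) * dist (zz m x n) q + D₁ (u m) q * γ ^ n / (1 - γ) := by
        intro n
        calc dist (fn S n (u m) (zz m x n)) L
            ≤ dist (fn S n (u m) (zz m x n)) (fn S n (u m) q) + dist (fn S n (u m) q) L :=
              dist_triangle _ _ _
          _ ≤ S.b' (u m) * dist (zz m x n) q + D₁ (u m) q * γ ^ n / (1 - γ) :=
              add_le_add (fn_lip S n (u m) _ _) (htail (u m) q n)
      have hlim : Filter.Tendsto (fun n =>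
          S.b' (u m) * dist (zz m x n) q + D₁ (u m) q * γ ^ n / (1 - γ))
          Filter.atTop (nhds 0) := by
        have l1 : Filter.Tendsto (fun n => S.b' (u m) * dist (zz m x n) q)
            Filter.atTop (nhds 0) := by
          have := hdq.const_mul (S.b' (u m))
          simpa using this
        have l2 : Filter.Tendsto (fun n : ℕ => D₁ (u m) q * γ ^ n / (1 - γ))
            Filter.atTop (nhds 0) := by
          have hp : Filter.Tendsto (fun n : ℕ => γ ^ n) Filter.atTop (nhds 0) :=
            tendsto_pow_atTop_nhds_zero_of_lt_one hγ0 hγ1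
          have := (hp.const_mul (D₁ (u m) q)).div_const (1 - γ)
          simpa using this
        have := l1.add l2
        simpa using this
      exact squeeze_zero (fun n => dist_nonneg) hb hlim
    constructor
    · -- F-invariance
      have h1 : Filter.Tendsto (fun n => S.F m x (fn S n (u m) (zz m x n)))
          Filter.atTop (nhds (S.F m x L)) := by
        rw [tendsto_iff_dist_tendsto_zero]
        have hb : ∀ n, dist (S.F m x (fn S n (u m) (zz m x n))) (S.F m x L) ≤
            S.a' m * dist (fn S n (u m) (zz m x n)) L := fun n => lipFy S m x _ _
        have hlim : Filter.Tendsto (fun n => S.a' m * dist (fn S n (u m) (zz m x n)) L)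
            Filter.atTop (nhds 0) := by
          have hd : Filter.Tendsto (fun n => dist (fn S n (u m) (zz m x n)) L)
              Filter.atTop (nhds 0) := by
            rw [← tendsto_iff_dist_tendsto_zero]
            exact hfnzz
          have := hd.const_mul (S.a' m)
          simpa using this
        exact squeeze_zero (fun n => dist_nonneg) hb hlim
      have h2 : Filter.Tendsto (fun n => S.F m x (fn S n (u m) (zz m x n)))
          Filter.atTop (nhds q) := by
        have : (fun n => S.F m x (fn S n (u m) (zz m x n))) = zz m x := by
          funext n
          exact (hzfix m x n).symm
        rw [this]
        exact hxst m x
      exact tendsto_nhds_unique h1 h2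
    · -- G-invariance
      have h1 : Filter.Tendsto (fun n => S.G m x (fn S n (u m) (zz m x n)))
          Filter.atTop (nhds (S.G m x L)) := by
        rw [tendsto_iff_dist_tendsto_zero]
        have hb : ∀ n, dist (S.G m x (fn S n (u m) (zz m x n))) (S.G m x L) ≤
            S.lu m * dist (fn S n (u m) (zz m x n)) L := fun n => lipGy S m x _ _
        have hlim : Filter.Tendsto (fun n => S.lu m * dist (fn S n (u m) (zz m x n)) L)
            Filter.atTop (nhds 0) := by
          have hd : Filter.Tendsto (fun n => dist (fn S n (u m) (zz m x n)) L)
              Filter.atTop (nhds 0) := by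
            rw [← tendsto_iff_dist_tendsto_zero]
            exact hfnzz
          have := hd.const_mul (S.lu m)
          simpa using this
        exact squeeze_zero (fun n => dist_nonneg) hb hlim
      have h2 : Filter.Tendsto (fun n => S.G m x (fn S n (u m) (zz m x n)))
          Filter.atTop (nhds (f m x)) := by
        have heq : (fun n => S.G m x (fn S n (u m) (zz m x n))) =
            (fun n => fn S (n+1) m x) := by
          funext n
          exact (hGsucc m x n).symm
        rw [heq]
        exact (hft m x).comp (Filter.tendsto_add_atTop_nat 1)
      exact tendsto_nhds_unique h1 h2
  exact ⟨f, xs, K, K₀, hK0, hK₀0, fun m =>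
    ⟨hflip m, hfK m, hxlip m, hxsK₀ m, hinv m⟩⟩

/-- Orbit map of a family `xs`. -/
def Rx (xs : ∀ m, X m → X (u m)) : (j : ℕ) → (m : M) → X m → X (u^[j] m)
  | 0, _, x => x
  | (j+1), m, x => Rx xs j (u m) (xs m x)

/-- Uniqueness of the invariant family. -/
lemma uniq (f₁ f₂ : ∀ m, X m → Y m) (xs₁ xs₂ : ∀ m, X m → X (u m))
    (K₁ K₂ K₀₁ K₀₂ : ℝ) (hK₁0 : 0 ≤ K₀₁) (hK₂0 : 0 ≤ K₀₂)
    (h₁ : ∀ m, (∀ a b : X m, dist (f₁ m a) (f₁ m b) ≤ S.b' m * dist a b) ∧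
        dist (f₁ m (S.iX m)) (S.iY m) ≤ K₁ * S.e m ∧
        (∀ a b : X m, dist (xs₁ m a) (xs₁ m b) ≤ S.ls m * dist a b) ∧
        dist (xs₁ m (S.iX m)) (S.iX (u m)) ≤ K₀₁ * S.e (u m) ∧
        ∀ x : X m, S.F m x (f₁ (u m) (xs₁ m x)) = xs₁ m x ∧
          S.G m x (f₁ (u m) (xs₁ m x)) = f₁ m x)
    (h₂ : ∀ m, (∀ a b : X m, dist (f₂ m a) (f₂ m b) ≤ S.b' m * dist a b) ∧
        dist (f₂ m (S.iX m)) (S.iY m) ≤ K₂ * S.e m ∧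
        (∀ a b : X m, dist (xs₂ m a) (xs₂ m b) ≤ S.ls m * dist a b) ∧
        dist (xs₂ m (S.iX m)) (S.iX (u m)) ≤ K₀₂ * S.e (u m) ∧
        ∀ x : X m, S.F m x (f₂ (u m) (xs₂ m x)) = xs₂ m x ∧
          S.G m x (f₂ (u m) (xs₂ m x)) = f₂ m x) :
    ∀ m, f₁ m = f₂ m := by
  classical
  have hC : (0:ℝ) ≤ S.C := le_trans zero_le_one S.hC1
  set θ : ℝ := max S.c₁ S.c₂ with hθ
  have hθ0 : 0 ≤ θ := le_trans S.hc10 (le_max_left _ _)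
  have hθ1 : θ < 1 := max_lt S.hc11 S.hc21
  have hc₁θ : S.c₁ ≤ θ := le_max_left _ _
  have hc₂θ : S.c₂ ≤ θ := le_max_right _ _
  -- orbit bound for a family
  have orb : ∀ (xs : ∀ m, X m → X (u m)) (K₀ : ℝ), 0 ≤ K₀ →
      (∀ m (a b : X m), dist (xs m a) (xs m b) ≤ S.ls m * dist a b) →
      (∀ m, dist (xs m (S.iX m)) (S.iX (u m)) ≤ K₀ * S.e (u m)) →
      ∀ j (m : M) (x : X m), Lu S j m * dist (Rx xs j m x) (S.iX (u^[j] m)) ≤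
        S.c₁ ^ j * dist x (S.iX m) + K₀ * j * θ ^ j * S.e m := by
    intro xs K₀ hK₀0 hlip hKp j
    induction j with
    | zero =>
        intro m x
        simp [Rx, Lu_zero]
        exact le_rfl
    | succ j ih =>
        intro m x
        push_cast
        have hxs : dist (xs m x) (S.iX (u m)) ≤
            S.ls m * dist x (S.iX m) + K₀ * S.e (u m) := by
          calc dist (xs m x) (S.iX (u m))
              ≤ dist (xs m x) (xs m (S.iX m)) + dist (xs m (S.iX m)) (S.iX (u m)) :=
                dist_triangle _ _ _
            _ ≤ S.ls m * dist x (S.iX m) + K₀ * S.e (u m) :=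
                add_le_add (hlip m x (S.iX m)) (hKp m)
        have ihm := ih (u m) (xs m x)
        have hLu := Lu_nonneg S j (u m)
        have hlum := S.hlu0 m
        have step1 : Lu S (j+1) m * dist (Rx xs (j+1) m x) (S.iX (u^[j+1] m)) =
            S.lu m * (Lu S j (u m) * dist (Rx xs j (u m) (xs m x)) (S.iX (u^[j] (u m)))) := by
          rw [Lu_succ']
          show S.lu m * Lu S j (u m) * dist (Rx xs j (u m) (xs m x)) (S.iX (u^[j] (u m))) = _
          ring
        rw [step1]
        have step2 : S.lu m *
            (Lu S j (u m) * dist (Rx xs j (u m) (xs m x)) (S.iX (u^[j] (u m)))) ≤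
            S.lu m * (S.c₁ ^ j * dist (xs m x) (S.iX (u m)) +
              K₀ * j * θ ^ j * S.e (u m)) :=
          mul_le_mul_of_nonneg_left ihm hlum
        have hc₁j : (0:ℝ) ≤ S.c₁ ^ j := pow_nonneg S.hc10 j
        have step3 : S.c₁ ^ j * dist (xs m x) (S.iX (u m)) ≤
            S.c₁ ^ j * (S.ls m * dist x (S.iX m) + K₀ * S.e (u m)) :=
          mul_le_mul_of_nonneg_left hxs hc₁j
        have key : S.lu m * (S.c₁ ^ j * (S.ls m * dist x (S.iX m) + K₀ * S.e (u m)) +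
            K₀ * j * θ ^ j * S.e (u m)) ≤
            S.c₁ ^ (j+1) * dist x (S.iX m) + K₀ * ((j:ℝ)+1) * θ ^ (j+1) * S.e m := by
          have t1 : S.lu m * (S.c₁ ^ j * (S.ls m * dist x (S.iX m))) ≤
              S.c₁ ^ (j+1) * dist x (S.iX m) := by
            have hls : S.lu m * S.ls m ≤ S.c₁ := by
              rw [mul_comm]; exact S.hs1 m
            calc S.lu m * (S.c₁ ^ j * (S.ls m * dist x (S.iX m)))
                = (S.lu m * S.ls m) * (S.c₁ ^ j * dist x (S.iX m)) := by ring
              _ ≤ S.c₁ * (S.c₁ ^ j * dist x (S.iX m)) :=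
                  mul_le_mul_of_nonneg_right hls (mul_nonneg hc₁j dist_nonneg)
              _ = S.c₁ ^ (j+1) * dist x (S.iX m) := by ring
          have hlue : S.lu m * S.e (u m) ≤ S.c₂ * S.e m := S.hs2 m
          have t2 : S.lu m * (S.c₁ ^ j * (K₀ * S.e (u m))) ≤ K₀ * θ ^ (j+1) * S.e m := by
            have hc₁θj : S.c₁ ^ j ≤ θ ^ j := pow_le_pow_left₀ S.hc10 hc₁θ j
            have hθj : (0:ℝ) ≤ θ ^ j := pow_nonneg hθ0 j
            calc S.lu m * (S.c₁ ^ j * (K₀ * S.e (u m)))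
                = S.c₁ ^ j * K₀ * (S.lu m * S.e (u m)) := by ring
              _ ≤ S.c₁ ^ j * K₀ * (S.c₂ * S.e m) :=
                  mul_le_mul_of_nonneg_left hlue (mul_nonneg hc₁j hK₀0)
              _ = K₀ * (S.c₁ ^ j * S.c₂) * S.e m := by ring
              _ ≤ K₀ * (θ ^ j * θ) * S.e m := by
                  apply mul_le_mul_of_nonneg_right ?_ (S.he0 m)
                  apply mul_le_mul_of_nonneg_left ?_ hK₀0
                  exact mul_le_mul hc₁θj hc₂θ S.hc20 hθj
              _ = K₀ * θ ^ (j+1) * S.e m := by rw [pow_succ]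
          have t3 : S.lu m * (K₀ * j * θ ^ j * S.e (u m)) ≤
              K₀ * j * θ ^ (j+1) * S.e m := by
            have hθj : (0:ℝ) ≤ θ ^ j := pow_nonneg hθ0 j
            have hj0 : (0:ℝ) ≤ (j:ℝ) := Nat.cast_nonneg j
            calc S.lu m * (K₀ * j * θ ^ j * S.e (u m))
                = K₀ * j * θ ^ j * (S.lu m * S.e (u m)) := by ring
              _ ≤ K₀ * j * θ ^ j * (S.c₂ * S.e m) := by
                  apply mul_le_mul_of_nonneg_left hlue
                  exact mul_nonneg (mul_nonneg hK₀0 hj0) hθj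
              _ = K₀ * j * (θ ^ j * S.c₂) * S.e m := by ring
              _ ≤ K₀ * j * (θ ^ j * θ) * S.e m := by
                  apply mul_le_mul_of_nonneg_right ?_ (S.he0 m)
                  apply mul_le_mul_of_nonneg_left ?_ (mul_nonneg hK₀0 hj0)
                  exact mul_le_mul_of_nonneg_left hc₂θ hθj
              _ = K₀ * j * θ ^ (j+1) * S.e m := by rw [pow_succ]
          have hsplit : S.lu m * (S.c₁ ^ j * (S.ls m * dist x (S.iX m) + K₀ * S.e (u m)) +
              K₀ * j * θ ^ j * S.e (u m)) =
              S.lu m * (S.c₁ ^ j * (S.ls m * dist x (S.iX m))) +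
              S.lu m * (S.c₁ ^ j * (K₀ * S.e (u m))) +
              S.lu m * (K₀ * j * θ ^ j * S.e (u m)) := by ring
          rw [hsplit]
          calc S.lu m * (S.c₁ ^ j * (S.ls m * dist x (S.iX m))) +
                S.lu m * (S.c₁ ^ j * (K₀ * S.e (u m))) +
                S.lu m * (K₀ * j * θ ^ j * S.e (u m))
              ≤ S.c₁ ^ (j+1) * dist x (S.iX m) + K₀ * θ ^ (j+1) * S.e m +
                K₀ * j * θ ^ (j+1) * S.e m := by
                have := add_le_add (add_le_add t1 t2) t3
                linarith only [this]
            _ = S.c₁ ^ (j+1) * dist x (S.iX m) + K₀ * ((j:ℝ)+1) * θ ^ (j+1) * S.e m := by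
                ring
        calc S.lu m * (Lu S j (u m) * dist (Rx xs j (u m) (xs m x)) (S.iX (u^[j] (u m))))
            ≤ S.lu m * (S.c₁ ^ j * dist (xs m x) (S.iX (u m)) +
                K₀ * j * θ ^ j * S.e (u m)) := step2
          _ ≤ S.lu m * (S.c₁ ^ j * (S.ls m * dist x (S.iX m) + K₀ * S.e (u m)) +
                K₀ * j * θ ^ j * S.e (u m)) := by
              apply mul_le_mul_of_nonneg_left ?_ hlum
              linarith only [step3]
          _ ≤ _ := key
  -- the cone chain
  have chain : ∀ j (m : M) (x₁ x₂ : X m),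
      dist x₁ x₂ ≤ S.a m * dist (f₁ m x₁) (f₂ m x₂) →
      dist (f₁ m x₁) (f₂ m x₂) ≤ Lu S j m *
          dist (f₁ (u^[j] m) (Rx xs₁ j m x₁)) (f₂ (u^[j] m) (Rx xs₂ j m x₂)) := by
    intro j
    induction j with
    | zero =>
        intro m x₁ x₂ _
        rw [Lu_zero, one_mul]
        exact le_refl _
    | succ j ih =>
        intro m x₁ x₂ hyp
        rw [← ((h₁ m).2.2.2.2 x₁).2, ← ((h₂ m).2.2.2.2 x₂).2] at hyp
        have hAc := S.hA m x₁ x₂ (f₁ (u m) (xs₁ m x₁)) (f₂ (u m) (xs₂ m x₂)) hyp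
        have hc1 := hAc.1
        have hc2 := hAc.2
        rw [((h₁ m).2.2.2.2 x₁).1, ((h₂ m).2.2.2.2 x₂).1] at hc1
        rw [((h₁ m).2.2.2.2 x₁).2, ((h₂ m).2.2.2.2 x₂).2] at hc2
        have hyp' : dist (xs₁ m x₁) (xs₂ m x₂) ≤
            S.a (u m) * dist (f₁ (u m) (xs₁ m x₁)) (f₂ (u m) (xs₂ m x₂)) :=
          hc1.trans (mul_le_mul_of_nonneg_right (S.haa' m) dist_nonneg)
        have ihm := ih (u m) (xs₁ m x₁) (xs₂ m x₂) hyp'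
        calc dist (f₁ m x₁) (f₂ m x₂)
            ≤ S.lu m * dist (f₁ (u m) (xs₁ m x₁)) (f₂ (u m) (xs₂ m x₂)) := hc2
          _ ≤ S.lu m * (Lu S j (u m) *
                dist (f₁ (u^[j] (u m)) (Rx xs₁ j (u m) (xs₁ m x₁)))
                  (f₂ (u^[j] (u m)) (Rx xs₂ j (u m) (xs₂ m x₂)))) :=
              mul_le_mul_of_nonneg_left ihm (S.hlu0 m)
          _ = Lu S (j+1) m *
                dist (f₁ (u^[j+1] m) (Rx xs₁ (j+1) m x₁))
                  (f₂ (u^[j+1] m) (Rx xs₂ (j+1) m x₂)) := by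
              rw [Lu_succ' S j m, mul_assoc]
              rfl
  -- conclusion
  intro m
  funext x
  set K₁' : ℝ := max K₁ 0 with hK₁'
  set K₂' : ℝ := max K₂ 0 with hK₂'
  have hK₁'0 : 0 ≤ K₁' := le_max_right _ _
  have hK₂'0 : 0 ≤ K₂' := le_max_right _ _
  have hfb₁ : ∀ m' : M, dist (f₁ m' (S.iX m')) (S.iY m') ≤ K₁' * S.e m' := fun m' =>
    ((h₁ m').2.1).trans (mul_le_mul_of_nonneg_right (le_max_left _ _) (S.he0 m'))
  have hfb₂ : ∀ m' : M, dist (f₂ m' (S.iX m')) (S.iY m') ≤ K₂' * S.e m' := fun m' =>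
    ((h₂ m').2.1).trans (mul_le_mul_of_nonneg_right (le_max_left _ _) (S.he0 m'))
  have hbound : ∀ j : ℕ, 1 ≤ j → dist (f₁ m x) (f₂ m x) ≤
      S.C * (S.c₁ ^ j * dist x (S.iX m) + K₀₁ * (j:ℝ) * θ ^ j * S.e m) +
      S.C * (S.c₁ ^ j * dist x (S.iX m) + K₀₂ * (j:ℝ) * θ ^ j * S.e m) +
      (K₁' + K₂') * (S.c₂ ^ j * S.e m) := by
    intro j hj
    obtain ⟨i, rfl⟩ : ∃ i, j = i + 1 := ⟨j - 1, by omega⟩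
    push_cast
    have hch := chain (i+1) m x x (by simpa using mul_nonneg (S.ha0 m) dist_nonneg)
    have hb'w : S.b' (u^[i+1] m) ≤ S.C := by
      rw [Function.iterate_succ_apply' u i m]
      exact hb'C S _
    have hd1 : dist (f₁ (u^[i+1] m) (Rx xs₁ (i+1) m x)) (f₂ (u^[i+1] m) (Rx xs₂ (i+1) m x)) ≤
        S.b' (u^[i+1] m) * dist (Rx xs₁ (i+1) m x) (S.iX (u^[i+1] m)) +
        S.b' (u^[i+1] m) * dist (Rx xs₂ (i+1) m x) (S.iX (u^[i+1] m)) +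
        (K₁' + K₂') * S.e (u^[i+1] m) := by
      have h4 := dist_triangle4 (f₁ (u^[i+1] m) (Rx xs₁ (i+1) m x))
        (f₁ (u^[i+1] m) (S.iX (u^[i+1] m))) (f₂ (u^[i+1] m) (S.iX (u^[i+1] m)))
        (f₂ (u^[i+1] m) (Rx xs₂ (i+1) m x))
      have h5 := dist_triangle (f₁ (u^[i+1] m) (S.iX (u^[i+1] m))) (S.iY (u^[i+1] m))
        (f₂ (u^[i+1] m) (S.iX (u^[i+1] m)))
      have a1 := (h₁ (u^[i+1] m)).1 (Rx xs₁ (i+1) m x) (S.iX (u^[i+1] m))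
      have a2 := hfb₁ (u^[i+1] m)
      have a3 : dist (S.iY (u^[i+1] m)) (f₂ (u^[i+1] m) (S.iX (u^[i+1] m))) ≤
          K₂' * S.e (u^[i+1] m) := by
        rw [dist_comm]
        exact hfb₂ _
      have a4 : dist (f₂ (u^[i+1] m) (S.iX (u^[i+1] m)))
          (f₂ (u^[i+1] m) (Rx xs₂ (i+1) m x)) ≤
          S.b' (u^[i+1] m) * dist (Rx xs₂ (i+1) m x) (S.iX (u^[i+1] m)) := by
        refine ((h₂ (u^[i+1] m)).1 _ _).trans ?_
        rw [dist_comm]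
      linarith only [h4, h5, a1, a2, a3, a4]
    have horb₁ := orb xs₁ K₀₁ hK₁0 (fun m' => (h₁ m').2.2.1) (fun m' => (h₁ m').2.2.2.1)
      (i+1) m x
    have horb₂ := orb xs₂ K₀₂ hK₂0 (fun m' => (h₂ m').2.2.1) (fun m' => (h₂ m').2.2.2.1)
      (i+1) m x
    push_cast at horb₁ horb₂
    have hLue := Lu_e S (i+1) m
    have hLu0 := Lu_nonneg S (i+1) m
    have hfinal := hch.trans (mul_le_mul_of_nonneg_left hd1 hLu0)
    have hexp : Lu S (i+1) m *
        (S.b' (u^[i+1] m) * dist (Rx xs₁ (i+1) m x) (S.iX (u^[i+1] m)) +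
         S.b' (u^[i+1] m) * dist (Rx xs₂ (i+1) m x) (S.iX (u^[i+1] m)) +
         (K₁' + K₂') * S.e (u^[i+1] m)) =
        S.b' (u^[i+1] m) * (Lu S (i+1) m * dist (Rx xs₁ (i+1) m x) (S.iX (u^[i+1] m))) +
        S.b' (u^[i+1] m) * (Lu S (i+1) m * dist (Rx xs₂ (i+1) m x) (S.iX (u^[i+1] m))) +
        (K₁' + K₂') * (Lu S (i+1) m * S.e (u^[i+1] m)) := by ring
    have w1 : S.b' (u^[i+1] m) *
        (Lu S (i+1) m * dist (Rx xs₁ (i+1) m x) (S.iX (u^[i+1] m))) ≤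
        S.C * (S.c₁ ^ (i+1) * dist x (S.iX m) + K₀₁ * ((i:ℝ)+1) * θ ^ (i+1) * S.e m) :=
      calc S.b' (u^[i+1] m) *
          (Lu S (i+1) m * dist (Rx xs₁ (i+1) m x) (S.iX (u^[i+1] m)))
          ≤ S.C * (Lu S (i+1) m * dist (Rx xs₁ (i+1) m x) (S.iX (u^[i+1] m))) :=
            mul_le_mul_of_nonneg_right hb'w (mul_nonneg hLu0 dist_nonneg)
        _ ≤ S.C * (S.c₁ ^ (i+1) * dist x (S.iX m) + K₀₁ * ((i:ℝ)+1) * θ ^ (i+1) * S.e m) :=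
            mul_le_mul_of_nonneg_left horb₁ hC
    have w2 : S.b' (u^[i+1] m) *
        (Lu S (i+1) m * dist (Rx xs₂ (i+1) m x) (S.iX (u^[i+1] m))) ≤
        S.C * (S.c₁ ^ (i+1) * dist x (S.iX m) + K₀₂ * ((i:ℝ)+1) * θ ^ (i+1) * S.e m) :=
      calc S.b' (u^[i+1] m) *
          (Lu S (i+1) m * dist (Rx xs₂ (i+1) m x) (S.iX (u^[i+1] m)))
          ≤ S.C * (Lu S (i+1) m * dist (Rx xs₂ (i+1) m x) (S.iX (u^[i+1] m))) :=
            mul_le_mul_of_nonneg_right hb'w (mul_nonneg hLu0 dist_nonneg)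
        _ ≤ S.C * (S.c₁ ^ (i+1) * dist x (S.iX m) + K₀₂ * ((i:ℝ)+1) * θ ^ (i+1) * S.e m) :=
            mul_le_mul_of_nonneg_left horb₂ hC
    have w3 : (K₁' + K₂') * (Lu S (i+1) m * S.e (u^[i+1] m)) ≤
        (K₁' + K₂') * (S.c₂ ^ (i+1) * S.e m) :=
      mul_le_mul_of_nonneg_left hLue (by linarith only [hK₁'0, hK₂'0])
    linarith only [hfinal, hexp, w1, w2, w3]
  have hc₁lim : Filter.Tendsto (fun j : ℕ => S.c₁ ^ j) Filter.atTop (nhds 0) :=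
    tendsto_pow_atTop_nhds_zero_of_lt_one S.hc10 S.hc11
  have hc₂lim : Filter.Tendsto (fun j : ℕ => S.c₂ ^ j) Filter.atTop (nhds 0) :=
    tendsto_pow_atTop_nhds_zero_of_lt_one S.hc20 S.hc21
  have hjθlim : Filter.Tendsto (fun j : ℕ => (j:ℝ) * θ ^ j) Filter.atTop (nhds 0) := by
    have hsum : Summable (fun j : ℕ => ((j:ℝ)) ^ 1 * θ ^ j) := by
      apply Summable.of_norm
      apply summable_norm_pow_mul_geometric_of_norm_lt_one
      rw [Real.norm_eq_abs, abs_of_nonneg hθ0]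
      exact hθ1
    have h0 := hsum.tendsto_atTop_zero
    simpa using h0
  have hTlim : Filter.Tendsto (fun j : ℕ =>
      S.C * (S.c₁ ^ j * dist x (S.iX m) + K₀₁ * (j:ℝ) * θ ^ j * S.e m) +
      S.C * (S.c₁ ^ j * dist x (S.iX m) + K₀₂ * (j:ℝ) * θ ^ j * S.e m) +
      (K₁' + K₂') * (S.c₂ ^ j * S.e m)) Filter.atTop (nhds 0) := by
    have l1 : Filter.Tendsto (fun j : ℕ => S.c₁ ^ j * dist x (S.iX m))
        Filter.atTop (nhds 0) := by
      have h0 := hc₁lim.mul_const (dist x (S.iX m))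
      simpa using h0
    have l2 : Filter.Tendsto (fun j : ℕ => (j:ℝ) * θ ^ j * S.e m)
        Filter.atTop (nhds 0) := by
      have h0 := hjθlim.mul_const (S.e m)
      simpa using h0
    have l3 : Filter.Tendsto (fun j : ℕ => S.c₂ ^ j * S.e m) Filter.atTop (nhds 0) := by
      have h0 := hc₂lim.mul_const (S.e m)
      simpa using h0
    have l4 : Filter.Tendsto (fun j : ℕ =>
        S.C * (S.c₁ ^ j * dist x (S.iX m) + K₀₁ * ((j:ℝ) * θ ^ j * S.e m)))
        Filter.atTop (nhds 0) := by
      have h0 := (l1.add (l2.const_mul K₀₁)).const_mul S.C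
      simpa using h0
    have l5 : Filter.Tendsto (fun j : ℕ =>
        S.C * (S.c₁ ^ j * dist x (S.iX m) + K₀₂ * ((j:ℝ) * θ ^ j * S.e m)))
        Filter.atTop (nhds 0) := by
      have h0 := (l1.add (l2.const_mul K₀₂)).const_mul S.C
      simpa using h0
    have l6 : Filter.Tendsto (fun j : ℕ => (K₁' + K₂') * (S.c₂ ^ j * S.e m))
        Filter.atTop (nhds 0) := by
      have h0 := l3.const_mul (K₁' + K₂')
      simpa using h0
    have hsumlim := (l4.add l5).add l6
    have heq : (fun j : ℕ =>
        S.C * (S.c₁ ^ j * dist x (S.iX m) + K₀₁ * (j:ℝ) * θ ^ j * S.e m) +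
        S.C * (S.c₁ ^ j * dist x (S.iX m) + K₀₂ * (j:ℝ) * θ ^ j * S.e m) +
        (K₁' + K₂') * (S.c₂ ^ j * S.e m)) = (fun j : ℕ =>
        S.C * (S.c₁ ^ j * dist x (S.iX m) + K₀₁ * ((j:ℝ) * θ ^ j * S.e m)) +
        S.C * (S.c₁ ^ j * dist x (S.iX m) + K₀₂ * ((j:ℝ) * θ ^ j * S.e m)) +
        (K₁' + K₂') * (S.c₂ ^ j * S.e m)) := by
      funext j
      ring
    rw [heq]
    simpa using hsumlim
  have hdist0 : dist (f₁ m x) (f₂ m x) ≤ 0 := by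
    apply ge_of_tendsto hTlim
    rw [Filter.eventually_atTop]
    exact ⟨1, fun j hj => hbound j hj⟩
  have h00 : dist (f₁ m x) (f₂ m x) = 0 := le_antisymm hdist0 dist_nonneg
  exact dist_eq_zero.mp h00

end IGraphAux

/-- First existence theorem for invariant graphs (graph-condition branch). -/
theorem first_existence_theorem_graph_condition
    {M : Type*} (u : M → M) (X Y : M → Type*)
    [∀ m, MetricSpace (X m)] [∀ m, CompleteSpace (X m)]
    [∀ m, MetricSpace (Y m)] [∀ m, CompleteSpace (Y m)]
    (F : ∀ m, X m → Y (u m) → X (u m)) (G : ∀ m, X m → Y (u m) → Y m)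
    (α α' lamu β β' lams ε ε₁ η : M → ℝ)
    (hα : ∀ m, 0 ≤ α m) (hα'0 : ∀ m, 0 ≤ α' m) (hlamu : ∀ m, 0 ≤ lamu m)
    (hβ : ∀ m, 0 ≤ β m) (hβ'0 : ∀ m, 0 ≤ β' m) (hlams : ∀ m, 0 ≤ lams m)
    (hε0 : ∀ m, 0 ≤ ε m) (hε₁0 : ∀ m, 0 ≤ ε₁ m) (hεε₁ : ∀ m, ε m ≤ ε₁ m)
    (hη0 : ∀ m, 0 ≤ η m)
    (iX : ∀ m, X m) (iY : ∀ m, Y m)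
    -- `i = (iX, iY)` is an ε-pseudo-stable section of `H` with data `η`
    (hiF : ∀ m, dist (iX (u m)) (F m (iX m) (iY (u m))) ≤ η (u m))
    (hiG : ∀ m, dist (iY m) (G m (iX m) (iY (u m))) ≤ η m)
    (hiη : ∀ m, η (u m) ≤ ε m * η m)
    -- (A)(α; α′, λ_u) condition
    (hA : ∀ m (x₁ x₁' : X m) (y₂ y₂' : Y (u m)),
      dist x₁ x₁' ≤ α m * dist (G m x₁ y₂) (G m x₁' y₂') →
        dist (F m x₁ y₂) (F m x₁' y₂') ≤ α' m * dist y₂ y₂' ∧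
          dist (G m x₁ y₂) (G m x₁' y₂') ≤ lamu m * dist y₂ y₂')
    -- (B)(β; β′, λ_s) condition
    (hB : ∀ m (x₁ x₁' : X m) (y₂ y₂' : Y (u m)),
      dist y₂ y₂' ≤ β m * dist (F m x₁ y₂) (F m x₁' y₂') →
        dist (G m x₁ y₂) (G m x₁' y₂') ≤ β' m * dist x₁ x₁' ∧
          dist (F m x₁ y₂) (F m x₁' y₂') ≤ lams m * dist x₁ x₁')
    -- angle condition
    (hangle : ∃ c : ℝ, c < 1 ∧ ∀ m, α' m * β' (u m) ≤ c)
    (hαα' : ∀ m, α' m ≤ α (u m))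
    (hββ' : ∀ m, β' (u m) ≤ β m)
    (hbdd : ∃ C : ℝ, ∀ m, max (α m) (β m) ≤ C)
    -- spectral condition
    (hspec₁ : ∃ c : ℝ, c < 1 ∧ ∀ m, lams m * lamu m ≤ c)
    (hspec₂ : ∃ c : ℝ, c < 1 ∧ ∀ m, lamu m * ε₁ m ≤ c) :
    ∃ (f : ∀ m, X m → Y m) (xs : ∀ m, X m → X (u m)) (K K₀ : ℝ),
      0 ≤ K ∧ 0 ≤ K₀ ∧
      (∀ m,
        (∀ a b : X m, dist (f m a) (f m b) ≤ β' m * dist a b) ∧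
        dist (f m (iX m)) (iY m) ≤ K * η m ∧
        (∀ a b : X m, dist (xs m a) (xs m b) ≤ lams m * dist a b) ∧
        dist (xs m (iX m)) (iX (u m)) ≤ K₀ * η (u m) ∧
        ∀ x : X m,
          F m x (f (u m) (xs m x)) = xs m x ∧ G m x (f (u m) (xs m x)) = f m x) ∧
      ∀ (f' : ∀ m, X m → Y m) (xs' : ∀ m, X m → X (u m)) (K' K₀' : ℝ),
        0 ≤ K' → 0 ≤ K₀' →
        (∀ m,
          (∀ a b : X m, dist (f' m a) (f' m b) ≤ β' m * dist a b) ∧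
          dist (f' m (iX m)) (iY m) ≤ K' * η m ∧
          (∀ a b : X m, dist (xs' m a) (xs' m b) ≤ lams m * dist a b) ∧
          dist (xs' m (iX m)) (iX (u m)) ≤ K₀' * η (u m) ∧
          ∀ x : X m,
            F m x (f' (u m) (xs' m x)) = xs' m x ∧
              G m x (f' (u m) (xs' m x)) = f' m x) →
        ∀ m, f' m = f m := by
  classical
  obtain ⟨c, hc1, hcle⟩ := hangle
  obtain ⟨C₀, hC₀⟩ := hbdd
  obtain ⟨c₁', hc₁1, hc₁le⟩ := hspec₁
  obtain ⟨c₂', hc₂1, hc₂le⟩ := hspec₂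
  set S : IGraphAux.Setup M u X Y :=
    { F := F, G := G, a := α, a' := α', lu := lamu, b := β, b' := β', ls := lams, e := η,
      iX := iX, iY := iY,
      c₀ := max c 0, C := max C₀ 1, c₁ := max c₁' 0, c₂ := max c₂' 0,
      ha0 := hα, ha'0 := hα'0, hlu0 := hlamu, hb0 := hβ, hb'0 := hβ'0, hls0 := hlams,
      he0 := hη0,
      hc00 := le_max_right _ _,
      hc01 := max_lt hc1 one_pos,
      hC1 := le_max_right _ _,
      haC := fun m => le_trans (le_trans (le_max_left _ _) (hC₀ m)) (le_max_left _ _),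
      hbC := fun m => le_trans (le_trans (le_max_right _ _) (hC₀ m)) (le_max_left _ _),
      hc10 := le_max_right _ _,
      hc11 := max_lt hc₁1 one_pos,
      hc20 := le_max_right _ _,
      hc21 := max_lt hc₂1 one_pos,
      haa' := hαα',
      hbb' := hββ',
      hangle := fun m => le_trans (hcle m) (le_max_left _ _),
      hs1 := fun m => le_trans (hc₁le m) (le_max_left _ _),
      hs2 := by
        intro m
        calc lamu m * η (u m) ≤ lamu m * (ε m * η m) :=
            mul_le_mul_of_nonneg_left (hiη m) (hlamu m)
          _ = lamu m * ε m * η m := by ring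
          _ ≤ lamu m * ε₁ m * η m :=
            mul_le_mul_of_nonneg_right
              (mul_le_mul_of_nonneg_left (hεε₁ m) (hlamu m)) (hη0 m)
          _ ≤ c₂' * η m := mul_le_mul_of_nonneg_right (hc₂le m) (hη0 m)
          _ ≤ max c₂' 0 * η m := mul_le_mul_of_nonneg_right (le_max_left _ _) (hη0 m),
      hiF := hiF, hiG := hiG, hA := hA, hB := hB } with hS
  obtain ⟨f, xs, K, K₀, hK, hK₀, hprops⟩ := IGraphAux.construction S
  refine ⟨f, xs, K, K₀, hK, hK₀, hprops, ?_⟩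
  intro f' xs' K' K₀' _ hK₀'0 hp'
  exact IGraphAux.uniq S f' f xs' xs K' K K₀' K₀ hK₀'0 hK₀ hp' hprops
end

section
/- Second existence theorem for invariant graphs. Let H ∼ (F,G) be a bundle correspondence over u : M → M whose fibers X_m, Y_m are complete metric spaces, let ε, ε₁, η : M → [0,∞) with ε(m) ≤ ε₁(m) for all m, and let i = (i_X,i_Y) be a section of X × Y which is an ε-Y-bounded section of H, i.e. sup_{x∈X_m} d(G_m(x, i_Y(u(m))), i_Y(m)) ≤ η(m) and η(u(m)) ≤ ε(m)·η(m) for all m. Assume H satisfies the (A′)(α,λ_u)(B)(β;β′,λ_s) condition with functions α, λ_u, β, β′, λ_s : M → [0,∞) such that: (angle condition) sup_{m∈M} α(m)·β′(u(m)) < 1, β′(u(m)) ≤ β(m) for all m, and sup_{m∈M} max{α(m), β(m)} < ∞; (spectral condition) sup_{m∈M} λ_u(m)·ε₁(m)/(1 − α(m)·β′(u(m))) < 1. Then there exist a family of maps f_m : X_m → Y_m, a family of maps x_m : X_m → X_{u(m)}, and a constant K ≥ 0 such that for all m ∈ M: (1) Lip f_m ≤ β′(m) and sup_{x∈X_m}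 d(f_m(x), i_Y(m)) ≤ K·η(m); (2) Lip x_m ≤ λ_s(m) and, for every x ∈ X_m, F_m(x, f_{u(m)}(x_m(x))) = x_m(x) and G_m(x, f_{u(m)}(x_m(x))) = f_m(x). In addition, if sup_{x∈X_m} d(F_m(x, i_Y(u(m))), i_X(u(m))) ≤ η(u(m)) for all m, then there is a constant K₀ ≥ 0 with sup_{x∈X_m} d(x_m(x), i_X(u(m))) ≤ K₀·η(u(m)) for all m. Moreover the family (f_m) is unique among families satisfying (1) and (2) for some constant and some maps (x_m). -/
/-- Second existence theorem for invariant graphs. -/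
theorem second_existence_theorem
    {M : Type*} (u : M → M) (X Y : M → Type*)
    [∀ m, MetricSpace (X m)] [∀ m, CompleteSpace (X m)]
    [∀ m, MetricSpace (Y m)] [∀ m, CompleteSpace (Y m)]
    (F : ∀ m, X m → Y (u m) → X (u m)) (G : ∀ m, X m → Y (u m) → Y m)
    (α lamu β β' lams ε ε₁ η : M → ℝ)
    (hα : ∀ m, 0 ≤ α m) (hlamu : ∀ m, 0 ≤ lamu m) (hβ : ∀ m, 0 ≤ β m)
    (hβ'0 : ∀ m, 0 ≤ β' m) (hlams : ∀ m, 0 ≤ lams m)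
    (hε0 : ∀ m, 0 ≤ ε m) (hε₁0 : ∀ m, 0 ≤ ε₁ m) (hεε₁ : ∀ m, ε m ≤ ε₁ m)
    (hη0 : ∀ m, 0 ≤ η m)
    (iX : ∀ m, X m) (iY : ∀ m, Y m)
    -- `i = (iX, iY)` is an ε-Y-bounded section of `H` with data `η`
    (hiG : ∀ m (x : X m), dist (G m x (iY (u m))) (iY m) ≤ η m)
    (hiη : ∀ m, η (u m) ≤ ε m * η m)
    -- (A′)(α, λ_u) condition
    (hA'F : ∀ m (x : X m) (y y' : Y (u m)),
      dist (F m x y) (F m x y') ≤ α m * dist y y')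
    (hA'G : ∀ m (x : X m) (y y' : Y (u m)),
      dist (G m x y) (G m x y') ≤ lamu m * dist y y')
    -- (B)(β; β′, λ_s) condition
    (hB : ∀ m (x₁ x₁' : X m) (y₂ y₂' : Y (u m)),
      dist y₂ y₂' ≤ β m * dist (F m x₁ y₂) (F m x₁' y₂') →
        dist (G m x₁ y₂) (G m x₁' y₂') ≤ β' m * dist x₁ x₁' ∧
          dist (F m x₁ y₂) (F m x₁' y₂') ≤ lams m * dist x₁ x₁')
    -- angle condition
    (hangle : ∃ c : ℝ, c < 1 ∧ ∀ m, α m * β' (u m) ≤ c)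
    (hββ' : ∀ m, β' (u m) ≤ β m)
    (hbdd : ∃ C : ℝ, ∀ m, max (α m) (β m) ≤ C)
    -- spectral condition
    (hspec : ∃ c : ℝ, c < 1 ∧ ∀ m, lamu m * ε₁ m / (1 - α m * β' (u m)) ≤ c) :
    ∃ (f : ∀ m, X m → Y m) (xs : ∀ m, X m → X (u m)) (K : ℝ),
      0 ≤ K ∧
      (∀ m,
        (∀ a b : X m, dist (f m a) (f m b) ≤ β' m * dist a b) ∧
        (∀ x : X m, dist (f m x) (iY m) ≤ K * η m) ∧
        (∀ a b : X m, dist (xs m a) (xs m b) ≤ lams m * dist a b) ∧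
        ∀ x : X m,
          F m x (f (u m) (xs m x)) = xs m x ∧ G m x (f (u m) (xs m x)) = f m x) ∧
      ((∀ m (x : X m), dist (F m x (iY (u m))) (iX (u m)) ≤ η (u m)) →
        ∃ K₀ : ℝ, 0 ≤ K₀ ∧ ∀ m (x : X m), dist (xs m x) (iX (u m)) ≤ K₀ * η (u m)) ∧
      ∀ (f' : ∀ m, X m → Y m) (xs' : ∀ m, X m → X (u m)) (K' : ℝ),
        0 ≤ K' →
        (∀ m,
          (∀ a b : X m, dist (f' m a) (f' m b) ≤ β' m * dist a b) ∧
          (∀ x : X m, dist (f' m x) (iY m) ≤ K' * η m) ∧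
          (∀ a b : X m, dist (xs' m a) (xs' m b) ≤ lams m * dist a b) ∧
          ∀ x : X m,
            F m x (f' (u m) (xs' m x)) = xs' m x ∧
              G m x (f' (u m) (xs' m x)) = f' m x) →
        ∀ m, f' m = f m := by
  classical
  obtain ⟨c₁, hc₁lt, hc₁⟩ := hangle
  obtain ⟨c₂, hc₂lt, hc₂⟩ := hspec
  obtain ⟨C, hCb⟩ := hbdd
  set c : ℝ := max c₂ 0 with hcdef
  have hc0 : (0:ℝ) ≤ c := le_max_right _ _
  have hc1 : c < 1 := max_lt hc₂lt one_pos
  set c₁' : ℝ := max c₁ 0 with hc₁'def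
  have hc₁'0 : (0:ℝ) ≤ c₁' := le_max_right _ _
  have hc₁'1 : c₁' < 1 := max_lt hc₁lt one_pos
  have hαβ : ∀ m, α m * β' (u m) ≤ c₁' := fun m => (hc₁ m).trans (le_max_left _ _)
  have hαβ0 : ∀ m, 0 ≤ α m * β' (u m) := fun m => mul_nonneg (hα m) (hβ'0 (u m))
  have hden : ∀ m, 0 < 1 - α m * β' (u m) := by
    intro m; have := hαβ m; linarith
  have hspec' : ∀ m, lamu m * ε₁ m ≤ c * (1 - α m * β' (u m)) := by
    intro m
    have h : lamu m * ε₁ m / (1 - α m * β' (u m)) ≤ c := (hc₂ m).trans (le_max_left _ _)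
    rwa [div_le_iff₀ (hden m)] at h
  have hηu : ∀ m, η (u m) ≤ ε₁ m * η m := fun m =>
    (hiη m).trans (mul_le_mul_of_nonneg_right (hεε₁ m) (hη0 m))
  -- key division estimate
  have div_est : ∀ m (Dw : ℝ), 0 ≤ Dw →
      lamu m * (Dw * η (u m)) / (1 - α m * β' (u m)) ≤ c * Dw * η m := by
    intro m Dw hDw
    rw [div_le_iff₀ (hden m)]
    have h1 : lamu m * (Dw * η (u m)) ≤ lamu m * (Dw * (ε₁ m * η m)) :=
      mul_le_mul_of_nonneg_left (mul_le_mul_of_nonneg_left (hηu m) hDw) (hlamu m)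
    have h3 : (lamu m * ε₁ m) * (Dw * η m) ≤ (c * (1 - α m * β' (u m))) * (Dw * η m) :=
      mul_le_mul_of_nonneg_right (hspec' m) (mul_nonneg hDw (hη0 m))
    nlinarith [h1, h3]
  -- existence of (junk-completed) fixed points of ξ ↦ F m x (g ξ)
  haveI : ∀ m, Nonempty (X m) := fun m => ⟨iX m⟩
  have key : ∀ m (x : X m) (g : X (u m) → Y (u m)), ∃ ξ : X (u m),
      (∀ a b : X (u m), dist (g a) (g b) ≤ β' (u m) * dist a b) → F m x (g ξ) = ξ := by
    intro m x g
    by_cases hg : ∀ a b : X (u m), dist (g a) (g b) ≤ β' (u m) * dist a b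
    · have hL : LipschitzWith ⟨c₁', hc₁'0⟩ (fun ξ => F m x (g ξ)) := by
        apply LipschitzWith.of_dist_le_mul
        intro a b
        calc dist (F m x (g a)) (F m x (g b)) ≤ α m * dist (g a) (g b) := hA'F m x _ _
          _ ≤ α m * (β' (u m) * dist a b) :=
            mul_le_mul_of_nonneg_left (hg a b) (hα m)
          _ = (α m * β' (u m)) * dist a b := by ring
          _ ≤ c₁' * dist a b := mul_le_mul_of_nonneg_right (hαβ m) dist_nonneg
      have hCW : ContractingWith ⟨c₁', hc₁'0⟩ (fun ξ => F m x (g ξ)) := by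
        refine ⟨?_, hL⟩
        exact_mod_cast hc₁'1
      exact ⟨ContractingWith.fixedPoint _ hCW, fun _ => hCW.fixedPoint_isFixedPt⟩
    · exact ⟨iX (u m), fun h => absurd h hg⟩
  choose xi hxi using key
  -- the graph transform
  obtain ⟨T, hTdef⟩ : ∃ T : (∀ m, X m → Y m) → ∀ m, X m → Y m,
      ∀ f m x, T f m x = G m x (f (u m) (xi m x (f (u m)))) := ⟨_, fun _ _ _ => rfl⟩
  -- contraction core lemma
  have contract : ∀ m (x : X m) (g g' : X (u m) → Y (u m)) (ξ ξ' : X (u m)) (D : ℝ),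
      (∀ a b : X (u m), dist (g a) (g b) ≤ β' (u m) * dist a b) →
      F m x (g ξ) = ξ → F m x (g' ξ') = ξ' →
      (∀ z : X (u m), dist (g z) (g' z) ≤ D) →
      dist (G m x (g ξ)) (G m x (g' ξ')) ≤ lamu m * D / (1 - α m * β' (u m)) := by
    intro m x g g' ξ ξ' D hg hfx hfx' hD
    have hd := hden m
    have step1 : dist (g ξ) (g' ξ') ≤ β' (u m) * dist ξ ξ' + D :=
      (dist_triangle (g ξ) (g ξ') (g' ξ')).trans (add_le_add (hg ξ ξ') (hD ξ'))
    have step2 : dist ξ ξ' ≤ α m * dist (g ξ) (g' ξ') := by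
      calc dist ξ ξ' = dist (F m x (g ξ)) (F m x (g' ξ')) := by rw [hfx, hfx']
        _ ≤ α m * dist (g ξ) (g' ξ') := hA'F m x _ _
    have hgg' : dist (g ξ) (g' ξ') * (1 - α m * β' (u m)) ≤ D := by
      nlinarith [mul_le_mul_of_nonneg_left step2 (hβ'0 (u m)), step1]
    have h1 : dist (G m x (g ξ)) (G m x (g' ξ')) ≤ lamu m * dist (g ξ) (g' ξ') :=
      hA'G m x _ _
    rw [le_div_iff₀ hd]
    nlinarith [mul_le_mul_of_nonneg_right h1 hd.le,
      mul_le_mul_of_nonneg_left hgg' (hlamu m)]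
  -- Lipschitz preservation and stable-direction Lipschitz bound
  have lip_pres : ∀ m (g : X (u m) → Y (u m)),
      (∀ a b : X (u m), dist (g a) (g b) ≤ β' (u m) * dist a b) →
      ∀ a b : X m,
        dist (G m a (g (xi m a g))) (G m b (g (xi m b g))) ≤ β' m * dist a b ∧
        dist (xi m a g) (xi m b g) ≤ lams m * dist a b := by
    intro m g hg a b
    have ha := hxi m a g hg
    have hb := hxi m b g hg
    have h1 : dist (g (xi m a g)) (g (xi m b g)) ≤
        β m * dist (F m a (g (xi m a g))) (F m b (g (xi m b g))) := by
      rw [ha, hb]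
      calc dist (g (xi m a g)) (g (xi m b g)) ≤ β' (u m) * dist (xi m a g) (xi m b g) :=
            hg _ _
        _ ≤ β m * dist (xi m a g) (xi m b g) :=
            mul_le_mul_of_nonneg_right (hββ' m) dist_nonneg
    obtain ⟨hG1, hF1⟩ := hB m a b _ _ h1
    rw [ha, hb] at hF1
    exact ⟨hG1, hF1⟩
  -- the iteration
  obtain ⟨s, hs0, hssucc⟩ : ∃ s : ℕ → ∀ m, X m → Y m,
      s 0 = (fun m _ => iY m) ∧ ∀ n, s (n+1) = T (s n) :=
    ⟨fun n => T^[n] (fun m _ => iY m), rfl, fun n => Function.iterate_succ_apply' T n _⟩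
  have lip_seq : ∀ n m, ∀ a b : X m, dist (s n m a) (s n m b) ≤ β' m * dist a b := by
    intro n
    induction n with
    | zero =>
      intro m a b
      rw [hs0]
      simpa using mul_nonneg (hβ'0 m) (dist_nonneg (x := a) (y := b))
    | succ n ih =>
      intro m a b
      rw [hssucc n, hTdef, hTdef]
      exact (lip_pres m (s n (u m)) (ih (u m)) a b).1
  have diff_seq : ∀ n m (x : X m), dist (s (n+1) m x) (s n m x) ≤ c ^ n * η m := by
    intro n
    induction n with
    | zero =>
      intro m x
      rw [hssucc 0, hTdef, hs0]
      simpa using hiG m x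
    | succ n ih =>
      intro m x
      have e1 : s (n+2) m x = G m x (s (n+1) (u m) (xi m x (s (n+1) (u m)))) := by
        rw [hssucc (n+1)]; exact hTdef _ m x
      have e2 : s (n+1) m x = G m x (s n (u m) (xi m x (s n (u m)))) := by
        rw [hssucc n]; exact hTdef _ m x
      rw [e1, e2]
      have hg := lip_seq (n+1) (u m)
      have hg' := lip_seq n (u m)
      have hcon := contract m x (s (n+1) (u m)) (s n (u m)) _ _ ((c ^ n) * η (u m)) hg
        (hxi m x _ hg) (hxi m x _ hg') (fun z => ih (u m) z)
      have hde := div_est m (c ^ n) (pow_nonneg hc0 n)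
      calc dist (G m x (s (n+1) (u m) (xi m x (s (n+1) (u m)))))
            (G m x (s n (u m) (xi m x (s n (u m)))))
          ≤ lamu m * (c ^ n * η (u m)) / (1 - α m * β' (u m)) := hcon
        _ ≤ c * c ^ n * η m := hde
        _ = c ^ (n+1) * η m := by ring
  -- passage to the limit
  have cauchy : ∀ m (x : X m), CauchySeq (fun n => s n m x) := by
    intro m x
    apply cauchySeq_of_le_geometric c (η m) hc1
    intro n
    calc dist (s n m x) (s (n+1) m x) = dist (s (n+1) m x) (s n m x) := dist_comm _ _
      _ ≤ c ^ n * η m := diff_seq n m x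
      _ = η m * c ^ n := by ring
  have hlim : ∀ m (x : X m), ∃ y : Y m, Filter.Tendsto (fun n => s n m x) Filter.atTop (nhds y) :=
    fun m x => cauchySeq_tendsto_of_complete (cauchy m x)
  choose f hf using hlim
  have dist_lim : ∀ n m (x : X m), dist (s n m x) (f m x) ≤ η m * c ^ n / (1 - c) := by
    intro n m x
    apply dist_le_of_le_geometric_of_tendsto c (η m) hc1 _ (hf m x) n
    intro k
    calc dist (s k m x) (s (k+1) m x) = dist (s (k+1) m x) (s k m x) := dist_comm _ _
      _ ≤ c ^ k * η m := diff_seq k m x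
      _ = η m * c ^ k := by ring
  set K : ℝ := (1 - c)⁻¹ with hKdef
  have hK0 : 0 ≤ K := inv_nonneg.2 (by linarith)
  have f_bound : ∀ m (x : X m), dist (f m x) (iY m) ≤ K * η m := by
    intro m x
    have h := dist_lim 0 m x
    rw [hs0] at h
    simp only [pow_zero, mul_one] at h
    calc dist (f m x) (iY m) = dist (iY m) (f m x) := dist_comm _ _
      _ ≤ η m / (1 - c) := h
      _ = K * η m := by rw [hKdef, div_eq_inv_mul]
  have f_lip : ∀ m, ∀ a b : X m, dist (f m a) (f m b) ≤ β' m * dist a b := by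
    intro m a b
    have ht : Filter.Tendsto (fun n => dist (s n m a) (s n m b)) Filter.atTop
        (nhds (dist (f m a) (f m b))) := (hf m a).dist (hf m b)
    exact le_of_tendsto ht (Filter.Eventually.of_forall fun n => lip_seq n m a b)
  have tend0 : ∀ A : ℝ, Filter.Tendsto (fun n : ℕ => c ^ n * A) Filter.atTop (nhds 0) := by
    intro A
    have := (tendsto_pow_atTop_nhds_zero_of_lt_one hc0 hc1).mul_const A
    simpa using this
  -- the limit is a fixed point of the graph transform
  have f_fix : ∀ m (x : X m), G m x (f (u m) (xi m x (f (u m)))) = f m x := by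
    intro m x
    have hg := f_lip (u m)
    have hfp := hxi m x (f (u m)) hg
    have hbound : ∀ n : ℕ,
        dist (G m x (f (u m) (xi m x (f (u m))))) (f m x) ≤ c ^ n * (2 * η m / (1 - c)) := by
      intro n
      have hg' := lip_seq n (u m)
      have hD : ∀ z : X (u m), dist (f (u m) z) (s n (u m) z) ≤ (c ^ n / (1 - c)) * η (u m) := by
        intro z
        calc dist (f (u m) z) (s n (u m) z) = dist (s n (u m) z) (f (u m) z) := dist_comm _ _
          _ ≤ η (u m) * c ^ n / (1 - c) := dist_lim n (u m) z
          _ = (c ^ n / (1 - c)) * η (u m) := by ring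
      have hcon := contract m x (f (u m)) (s n (u m)) _ _ ((c ^ n / (1 - c)) * η (u m)) hg
        hfp (hxi m x _ hg') hD
      have hde := div_est m (c ^ n / (1 - c))
        (div_nonneg (pow_nonneg hc0 n) (by linarith))
      have h2 : dist (s (n+1) m x) (f m x) ≤ η m * c ^ (n+1) / (1 - c) := dist_lim (n+1) m x
      have h1c : (0:ℝ) < 1 - c := by linarith
      have hsrw : s (n+1) m x = G m x (s n (u m) (xi m x (s n (u m)))) := by
        rw [hssucc n]; exact hTdef (s n) m x
      have hstep : (c * c ^ n * η m) / (1 - c) ≤ c ^ n * (η m / (1 - c)) := by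
        have hnum : c * c ^ n * η m ≤ c ^ n * η m := by
          nlinarith [mul_nonneg h1c.le (mul_nonneg (pow_nonneg hc0 n) (hη0 m))]
        calc (c * c ^ n * η m) / (1 - c) ≤ (c ^ n * η m) / (1 - c) := (div_le_div_iff_of_pos_right h1c).2 hnum
          _ = c ^ n * (η m / (1 - c)) := by ring
      have hc' : c * (c ^ n / (1 - c)) * η m ≤ c ^ n * (η m / (1 - c)) := by
        calc c * (c ^ n / (1 - c)) * η m = (c * c ^ n * η m) / (1 - c) := by ring
          _ ≤ c ^ n * (η m / (1 - c)) := hstep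
      have h4 : η m * c ^ (n+1) / (1 - c) ≤ c ^ n * (η m / (1 - c)) := by
        calc η m * c ^ (n+1) / (1 - c) = (c * c ^ n * η m) / (1 - c) := by ring
          _ ≤ c ^ n * (η m / (1 - c)) := hstep
      calc dist (G m x (f (u m) (xi m x (f (u m))))) (f m x)
          ≤ dist (G m x (f (u m) (xi m x (f (u m))))) (s (n+1) m x)
              + dist (s (n+1) m x) (f m x) := dist_triangle _ _ _
        _ ≤ (c * (c ^ n / (1 - c)) * η m) + (η m * c ^ (n+1) / (1 - c)) := by
            refine add_le_add ?_ h2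
            rw [hsrw]
            exact hcon.trans hde
        _ ≤ c ^ n * (η m / (1 - c)) + c ^ n * (η m / (1 - c)) := add_le_add hc' h4
        _ = c ^ n * (2 * η m / (1 - c)) := by ring
    have : dist (G m x (f (u m) (xi m x (f (u m))))) (f m x) ≤ 0 :=
      le_of_tendsto_of_tendsto' tendsto_const_nhds (tend0 (2 * η m / (1 - c)))
        (fun n => hbound n)
    exact dist_le_zero.mp this
  -- final data
  refine ⟨f, fun m x => xi m x (f (u m)), K, hK0, ?_, ?_, ?_⟩
  · intro m
    refine ⟨f_lip m, f_bound m, ?_, ?_⟩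
    · intro a b
      exact (lip_pres m (f (u m)) (f_lip (u m)) a b).2
    · intro x
      exact ⟨hxi m x (f (u m)) (f_lip (u m)), f_fix m x⟩
  · -- the K₀ statement
    intro hFi
    have hC0 : ∀ m, α m ≤ max C 0 := fun m =>
      le_max_of_le_left ((le_max_left (α m) (β m)).trans (hCb m))
    refine ⟨max C 0 * K + 1, by positivity, ?_⟩
    intro m x
    have hfp := hxi m x (f (u m)) (f_lip (u m))
    calc dist (xi m x (f (u m))) (iX (u m))
        = dist (F m x (f (u m) (xi m x (f (u m))))) (iX (u m)) := by rw [hfp]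
      _ ≤ dist (F m x (f (u m) (xi m x (f (u m))))) (F m x (iY (u m)))
          + dist (F m x (iY (u m))) (iX (u m)) := dist_triangle _ _ _
      _ ≤ α m * dist (f (u m) (xi m x (f (u m)))) (iY (u m)) + η (u m) :=
          add_le_add (hA'F m x _ _) (hFi m x)
      _ ≤ α m * (K * η (u m)) + η (u m) := by
          have := f_bound (u m) (xi m x (f (u m)))
          nlinarith [hα m]
      _ ≤ max C 0 * (K * η (u m)) + η (u m) := by
          have h0 : 0 ≤ K * η (u m) := mul_nonneg hK0 (hη0 (u m))
          nlinarith [hC0 m]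
      _ = (max C 0 * K + 1) * η (u m) := by ring
  · -- uniqueness
    intro f' xs' K' hK' hprops
    have f'_lip : ∀ m, ∀ a b : X m, dist (f' m a) (f' m b) ≤ β' m * dist a b :=
      fun m => (hprops m).1
    have f'_bound : ∀ m (x : X m), dist (f' m x) (iY m) ≤ K' * η m :=
      fun m => (hprops m).2.1
    have f'_fix : ∀ m (x : X m),
        F m x (f' (u m) (xs' m x)) = xs' m x ∧ G m x (f' (u m) (xs' m x)) = f' m x :=
      fun m x => (hprops m).2.2.2 x
    have main : ∀ n m (x : X m), dist (f m x) (f' m x) ≤ c ^ n * ((K + K') * η m) := by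
      intro n
      induction n with
      | zero =>
        intro m x
        simp only [pow_zero, one_mul]
        calc dist (f m x) (f' m x) ≤ dist (f m x) (iY m) + dist (f' m x) (iY m) :=
              dist_triangle_right _ _ _
          _ ≤ K * η m + K' * η m := add_le_add (f_bound m x) (f'_bound m x)
          _ = (K + K') * η m := by ring
      | succ n ih =>
        intro m x
        have hfp := hxi m x (f (u m)) (f_lip (u m))
        have hD : ∀ z : X (u m),
            dist (f (u m) z) (f' (u m) z) ≤ (c ^ n * (K + K')) * η (u m) := by
          intro z
          calc dist (f (u m) z) (f' (u m) z) ≤ c ^ n * ((K + K') * η (u m)) := ih (u m) z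
            _ = (c ^ n * (K + K')) * η (u m) := by ring
        have hcon := contract m x (f (u m)) (f' (u m)) _ _ ((c ^ n * (K + K')) * η (u m))
          (f_lip (u m)) hfp (f'_fix m x).1 hD
        have hKK' : 0 ≤ c ^ n * (K + K') :=
          mul_nonneg (pow_nonneg hc0 n) (by linarith)
        have hde := div_est m (c ^ n * (K + K')) hKK'
        calc dist (f m x) (f' m x)
            = dist (G m x (f (u m) (xi m x (f (u m))))) (G m x (f' (u m) (xs' m x))) := by
              rw [f_fix m x, (f'_fix m x).2]
          _ ≤ lamu m * ((c ^ n * (K + K')) * η (u m)) / (1 - α m * β' (u m)) := hcon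
          _ ≤ c * (c ^ n * (K + K')) * η m := hde
          _ = c ^ (n+1) * ((K + K') * η m) := by ring
    intro m
    funext x
    have h0 : dist (f m x) (f' m x) ≤ 0 :=
      le_of_tendsto_of_tendsto' tendsto_const_nhds (tend0 ((K + K') * η m))
        (fun n => main n m x)
    exact (dist_le_zero.mp h0).symm
end

section
/- Graph transform lemma. Let X₁, Y₁, X₂, Y₂ be complete metric spaces, let F : X₁ × Y₂ → X₂ and G : X₁ × Y₂ → Y₁, and suppose the correspondence H ∼ (F,G) satisfies the mixed (A′)(α,λ_u)(B)(β;β′,λ_s) condition for constants α, λ_u, β, β′, λ_s ≥ 0. Let f₂ : X₂ → Y₂ satisfy Lip f₂ ≤ β̂, where α·β̂ < 1 and β̂ ≤ β. Then for every x ∈ X₁ there is a unique point x₁(x) ∈ X₂ such that F(x, f₂(x₁(x))) = x₁(x); moreover, defining f₁(x) = G(x, f₂(x₁(x))), the resulting maps satisfy Lip x₁ ≤ λ_s and Lip f₁ ≤ β′. -/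
/-- Graph transform lemma. -/
theorem graph_transform_lemma
    {X₁ Y₁ X₂ Y₂ : Type*}
    [MetricSpace X₁] [CompleteSpace X₁]
    [MetricSpace Y₁] [CompleteSpace Y₁]
    [MetricSpace X₂] [CompleteSpace X₂] [Nonempty X₂]
    [MetricSpace Y₂] [CompleteSpace Y₂]
    (F : X₁ → Y₂ → X₂) (G : X₁ → Y₂ → Y₁)
    (α lamu β β' lams bh : ℝ)
    (hα : 0 ≤ α) (hlamu : 0 ≤ lamu) (hβ : 0 ≤ β) (hβ'0 : 0 ≤ β') (hlams : 0 ≤ lams)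
    (hbh : 0 ≤ bh)
    -- (A′)(α, λ_u) condition
    (hA'F : ∀ (x : X₁) (y y' : Y₂), dist (F x y) (F x y') ≤ α * dist y y')
    (hA'G : ∀ (x : X₁) (y y' : Y₂), dist (G x y) (G x y') ≤ lamu * dist y y')
    -- (B)(β; β′, λ_s) condition
    (hB : ∀ (x₁ x₁' : X₁) (y₂ y₂' : Y₂),
      dist y₂ y₂' ≤ β * dist (F x₁ y₂) (F x₁' y₂') →
        dist (G x₁ y₂) (G x₁' y₂') ≤ β' * dist x₁ x₁' ∧
          dist (F x₁ y₂) (F x₁' y₂') ≤ lams * dist x₁ x₁')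
    (f₂ : X₂ → Y₂) (hf₂ : ∀ a b : X₂, dist (f₂ a) (f₂ b) ≤ bh * dist a b)
    (hαbh : α * bh < 1) (hbhβ : bh ≤ β) :
    ∃ xfun : X₁ → X₂,
      (∀ x : X₁, F x (f₂ (xfun x)) = xfun x) ∧
      (∀ (x : X₁) (z : X₂), F x (f₂ z) = z → z = xfun x) ∧
      (∀ a b : X₁, dist (xfun a) (xfun b) ≤ lams * dist a b) ∧
      (∀ a b : X₁, dist (G a (f₂ (xfun a))) (G b (f₂ (xfun b))) ≤ β' * dist a b) := by
  set K : NNReal := ⟨α * bh, mul_nonneg hα hbh⟩ with hK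
  have hK1 : K < 1 := by exact_mod_cast hαbh
  have hcontr : ∀ x : X₁, ContractingWith K (fun z : X₂ => F x (f₂ z)) := by
    intro x
    refine ⟨hK1, LipschitzWith.of_dist_le_mul fun a b => ?_⟩
    calc dist (F x (f₂ a)) (F x (f₂ b)) ≤ α * dist (f₂ a) (f₂ b) := hA'F x _ _
      _ ≤ α * (bh * dist a b) := mul_le_mul_of_nonneg_left (hf₂ a b) hα
      _ = (K : ℝ) * dist a b := by change α * (bh * dist a b) = α * bh * dist a b; ring
  classical
  have key : ∀ a b : X₁,
      dist (G a (f₂ ((hcontr a).fixedPoint _))) (G b (f₂ ((hcontr b).fixedPoint _)))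
        ≤ β' * dist a b ∧
      dist ((hcontr a).fixedPoint _) ((hcontr b).fixedPoint _) ≤ lams * dist a b := by
    intro a b
    set za := (hcontr a).fixedPoint _ with hza
    set zb := (hcontr b).fixedPoint _ with hzb
    have hfa : F a (f₂ za) = za := (hcontr a).fixedPoint_isFixedPt
    have hfb : F b (f₂ zb) = zb := (hcontr b).fixedPoint_isFixedPt
    have hkey : dist (f₂ za) (f₂ zb) ≤ β * dist (F a (f₂ za)) (F b (f₂ zb)) := by
      rw [hfa, hfb]
      calc dist (f₂ za) (f₂ zb) ≤ bh * dist za zb := hf₂ za zb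
        _ ≤ β * dist za zb := mul_le_mul_of_nonneg_right hbhβ dist_nonneg
    have hBr := hB a b (f₂ za) (f₂ zb) hkey
    rw [hfa, hfb] at hBr
    exact hBr
  refine ⟨fun x => (hcontr x).fixedPoint _, ?_, ?_, ?_, ?_⟩
  · intro x
    exact (hcontr x).fixedPoint_isFixedPt
  · intro x z hz
    exact (hcontr x).fixedPoint_unique hz
  · intro a b
    exact (key a b).2
  · intro a b
    exact (key a b).1
end

section
/- Basic estimates for the graph transform. Let X₁, Y₁, X₂, Y₂ be complete metric spaces and let H ∼ (F,G) satisfy the mixed (A′)(α,λ_u)(B)(β;β′,λ_s) condition. Let f₂ : X₂ → Y₂ with Lip f₂ ≤ β̂, α·β̂ < 1, β̂ ≤ β, and let x₁ : X₁ → X₂ and f₁ : X₁ → Y₁ be the maps given by the graph transform. Suppose points (a₁,b₁) ∈ X₁ × Y₁ and (a₂,b₂) ∈ X₂ × Y₂ and constants η₁, η₂, C₂ ≥ 0 satisfy d(F(a₁,b₂), a₂) ≤ η₁, d(G(a₁,b₂), b₁) ≤ η₂, and d(f₂(a₂), b₂) ≤ C₂. Then d(f₁(a₁), b₁) ≤ λ_u·(β̂·η₁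 + C₂)/(1 − α·β̂) + η₂ and d(x₁(a₁), a₂) ≤ (α·C₂ + η₁)/(1 − α·β̂). In particular, if b₁ = G(a₁,b₂), a₂ = F(a₁,b₂) and b₂ = f₂(a₂), then b₁ = f₁(a₁) and a₂ = x₁(a₁). -/
/-- Basic estimates for the graph transform. -/
theorem graph_transform_estimates
    {X₁ Y₁ X₂ Y₂ : Type*}
    [MetricSpace X₁] [CompleteSpace X₁]
    [MetricSpace Y₁] [CompleteSpace Y₁]
    [MetricSpace X₂] [CompleteSpace X₂]
    [MetricSpace Y₂] [CompleteSpace Y₂]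
    (F : X₁ → Y₂ → X₂) (G : X₁ → Y₂ → Y₁)
    (α lamu β β' lams bh : ℝ)
    (hα : 0 ≤ α) (hlamu : 0 ≤ lamu) (hβ : 0 ≤ β) (hβ'0 : 0 ≤ β') (hlams : 0 ≤ lams)
    (hbh : 0 ≤ bh)
    -- (A′)(α, λ_u) condition
    (hA'F : ∀ (x : X₁) (y y' : Y₂), dist (F x y) (F x y') ≤ α * dist y y')
    (hA'G : ∀ (x : X₁) (y y' : Y₂), dist (G x y) (G x y') ≤ lamu * dist y y')
    -- (B)(β; β′, λ_s) condition
    (hB : ∀ (x₁ x₁' : X₁) (y₂ y₂' : Y₂),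
      dist y₂ y₂' ≤ β * dist (F x₁ y₂) (F x₁' y₂') →
        dist (G x₁ y₂) (G x₁' y₂') ≤ β' * dist x₁ x₁' ∧
          dist (F x₁ y₂) (F x₁' y₂') ≤ lams * dist x₁ x₁')
    (f₂ : X₂ → Y₂) (hf₂ : ∀ a b : X₂, dist (f₂ a) (f₂ b) ≤ bh * dist a b)
    (hαbh : α * bh < 1) (hbhβ : bh ≤ β)
    -- the maps produced by the graph transform from f₂
    (x₁ : X₁ → X₂) (f₁ : X₁ → Y₁)
    (hx₁ : ∀ x : X₁, F x (f₂ (x₁ x)) = x₁ x)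
    (hf₁ : ∀ x : X₁, f₁ x = G x (f₂ (x₁ x)))
    (a₁ : X₁) (b₁ : Y₁) (a₂ : X₂) (b₂ : Y₂) (η₁ η₂ C₂ : ℝ)
    (hη₁0 : 0 ≤ η₁) (hη₂0 : 0 ≤ η₂) (hC₂0 : 0 ≤ C₂)
    (h1 : dist (F a₁ b₂) a₂ ≤ η₁)
    (h2 : dist (G a₁ b₂) b₁ ≤ η₂)
    (h3 : dist (f₂ a₂) b₂ ≤ C₂) :
    dist (f₁ a₁) b₁ ≤ lamu * (bh * η₁ + C₂) / (1 - α * bh) + η₂ ∧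
    dist (x₁ a₁) a₂ ≤ (α * C₂ + η₁) / (1 - α * bh) ∧
    (b₁ = G a₁ b₂ → a₂ = F a₁ b₂ → b₂ = f₂ a₂ → b₁ = f₁ a₁ ∧ a₂ = x₁ a₁) := by
  have hpos : 0 < 1 - α * bh := by linarith
  -- key self-referential estimate
  have key : dist (x₁ a₁) a₂ ≤ α * (bh * dist (x₁ a₁) a₂ + C₂) + η₁ := by
    calc dist (x₁ a₁) a₂ = dist (F a₁ (f₂ (x₁ a₁))) a₂ := by rw [hx₁]
      _ ≤ dist (F a₁ (f₂ (x₁ a₁))) (F a₁ b₂) + dist (F a₁ b₂) a₂ := dist_triangle _ _ _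
      _ ≤ α * dist (f₂ (x₁ a₁)) b₂ + η₁ := add_le_add (hA'F _ _ _) h1
      _ ≤ α * (dist (f₂ (x₁ a₁)) (f₂ a₂) + dist (f₂ a₂) b₂) + η₁ := by
          gcongr; exact dist_triangle _ _ _
      _ ≤ α * (bh * dist (x₁ a₁) a₂ + C₂) + η₁ := by gcongr <;> first | exact hf₂ _ _ | exact h3
  have hD : dist (x₁ a₁) a₂ ≤ (α * C₂ + η₁) / (1 - α * bh) := by
    rw [le_div_iff₀ hpos]; nlinarith
  have hfy : dist (f₂ (x₁ a₁)) b₂ ≤ bh * dist (x₁ a₁) a₂ + C₂ :=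
    (dist_triangle _ (f₂ a₂) _).trans (add_le_add (hf₂ _ _) h3)
  refine ⟨?_, hD, ?_⟩
  · have hstep : dist (f₁ a₁) b₁ ≤ lamu * (bh * dist (x₁ a₁) a₂ + C₂) + η₂ := by
      calc dist (f₁ a₁) b₁ = dist (G a₁ (f₂ (x₁ a₁))) b₁ := by rw [hf₁]
        _ ≤ dist (G a₁ (f₂ (x₁ a₁))) (G a₁ b₂) + dist (G a₁ b₂) b₁ := dist_triangle _ _ _
        _ ≤ lamu * dist (f₂ (x₁ a₁)) b₂ + η₂ := add_le_add (hA'G _ _ _) h2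
        _ ≤ lamu * (bh * dist (x₁ a₁) a₂ + C₂) + η₂ := by gcongr
    refine hstep.trans ?_
    have h4 : dist (x₁ a₁) a₂ * (1 - α * bh) ≤ α * C₂ + η₁ := by
      rw [← le_div_iff₀ hpos]; exact hD
    rw [div_add' _ _ _ (ne_of_gt hpos), le_div_iff₀ hpos]
    nlinarith [mul_le_mul_of_nonneg_left h4 (mul_nonneg hlamu hbh)]
  · intro heq1 heq2 heq3
    have hfix : F a₁ (f₂ a₂) = a₂ := by rw [← heq3, ← heq2]
    have h0 : dist (x₁ a₁) a₂ = 0 := by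
      have hle : dist (x₁ a₁) a₂ ≤ α * bh * dist (x₁ a₁) a₂ := by
        calc dist (x₁ a₁) a₂ = dist (F a₁ (f₂ (x₁ a₁))) (F a₁ (f₂ a₂)) := by
              rw [hx₁, hfix]
          _ ≤ α * dist (f₂ (x₁ a₁)) (f₂ a₂) := hA'F _ _ _
          _ ≤ α * (bh * dist (x₁ a₁) a₂) := by gcongr; exact hf₂ _ _
          _ = α * bh * dist (x₁ a₁) a₂ := by ring
      nlinarith [dist_nonneg (x := x₁ a₁) (y := a₂)]
    have hxa : x₁ a₁ = a₂ := by rwa [← dist_eq_zero]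
    constructor
    · rw [heq1, hf₁, hxa, ← heq3]
    · rw [hxa]
end

section
/- Comparison estimates for two graph transforms. Let X₁, Y₁, X₂, Y₂ be complete metric spaces and let H ∼ (F,G) satisfy the mixed (A′)(α,λ_u)(B)(β;β′,λ_s) condition. Suppose α·β̂ < 1 and β̂ ≤ β, and let f₂, f₂′ : X₂ → Y₂ both have Lipschitz constant ≤ β̂; let (x₁, f₁) and (x₁′, f₁′) be the maps produced by the graph transform from f₂ and f₂′ respectively. Then for every x ∈ X₁: d(x₁(x), x₁′(x)) ≤ α·d(f₂(x₁(x)), f₂′(x₁′(x))); d(f₂(x₁(x)), f₂′(x₁′(x))) ≤ d(f₂(x₁(x)), f₂′(x₁(x))) + β̂·d(x₁(x), x₁′(x)); d(f₂(x₁(x)), f₂′(x₁′(x))) ≤ (1/(1 − α·β̂))·d(f₂(x₁(x)), f₂′(x₁(x))); and d(f₁(x), f₁′(x)) ≤ λ_u·d(f₂(x₁(x)), f₂′(x₁′(x))) ≤ (λ_u/(1 − α·β̂))·d(f₂(x₁(x)), f₂′(x₁(x))). -/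
/-- Comparison estimates for two graph transforms. -/
theorem graph_transform_comparison
    {X₁ Y₁ X₂ Y₂ : Type*}
    [MetricSpace X₁] [CompleteSpace X₁]
    [MetricSpace Y₁] [CompleteSpace Y₁]
    [MetricSpace X₂] [CompleteSpace X₂]
    [MetricSpace Y₂] [CompleteSpace Y₂]
    (F : X₁ → Y₂ → X₂) (G : X₁ → Y₂ → Y₁)
    (α lamu β β' lams bh : ℝ)
    (hα : 0 ≤ α) (hlamu : 0 ≤ lamu) (hβ : 0 ≤ β) (hβ'0 : 0 ≤ β') (hlams : 0 ≤ lams)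
    (hbh : 0 ≤ bh)
    -- (A′)(α, λ_u) condition
    (hA'F : ∀ (x : X₁) (y y' : Y₂), dist (F x y) (F x y') ≤ α * dist y y')
    (hA'G : ∀ (x : X₁) (y y' : Y₂), dist (G x y) (G x y') ≤ lamu * dist y y')
    -- (B)(β; β′, λ_s) condition
    (hB : ∀ (x₁ x₁' : X₁) (y₂ y₂' : Y₂),
      dist y₂ y₂' ≤ β * dist (F x₁ y₂) (F x₁' y₂') →
        dist (G x₁ y₂) (G x₁' y₂') ≤ β' * dist x₁ x₁' ∧
          dist (F x₁ y₂) (F x₁' y₂') ≤ lams * dist x₁ x₁')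
    (hαbh : α * bh < 1) (hbhβ : bh ≤ β)
    (f₂ f₂' : X₂ → Y₂)
    (hf₂ : ∀ a b : X₂, dist (f₂ a) (f₂ b) ≤ bh * dist a b)
    (hf₂' : ∀ a b : X₂, dist (f₂' a) (f₂' b) ≤ bh * dist a b)
    -- the maps produced by the graph transform from f₂ and f₂'
    (x₁ : X₁ → X₂) (f₁ : X₁ → Y₁)
    (hx₁ : ∀ x : X₁, F x (f₂ (x₁ x)) = x₁ x)
    (hf₁ : ∀ x : X₁, f₁ x = G x (f₂ (x₁ x)))
    (x₁' : X₁ → X₂) (f₁' : X₁ → Y₁)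
    (hx₁' : ∀ x : X₁, F x (f₂' (x₁' x)) = x₁' x)
    (hf₁' : ∀ x : X₁, f₁' x = G x (f₂' (x₁' x))) :
    ∀ x : X₁,
      dist (x₁ x) (x₁' x) ≤ α * dist (f₂ (x₁ x)) (f₂' (x₁' x)) ∧
      dist (f₂ (x₁ x)) (f₂' (x₁' x)) ≤
        dist (f₂ (x₁ x)) (f₂' (x₁ x)) + bh * dist (x₁ x) (x₁' x) ∧
      dist (f₂ (x₁ x)) (f₂' (x₁' x)) ≤
        (1 / (1 - α * bh)) * dist (f₂ (x₁ x)) (f₂' (x₁ x)) ∧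
      dist (f₁ x) (f₁' x) ≤ lamu * dist (f₂ (x₁ x)) (f₂' (x₁' x)) ∧
      lamu * dist (f₂ (x₁ x)) (f₂' (x₁' x)) ≤
        (lamu / (1 - α * bh)) * dist (f₂ (x₁ x)) (f₂' (x₁ x)) := by
  intro x
  have hpos : 0 < 1 - α * bh := by linarith
  set D := dist (f₂ (x₁ x)) (f₂' (x₁' x)) with hD
  have h1 : dist (x₁ x) (x₁' x) ≤ α * D := by
    calc dist (x₁ x) (x₁' x) = dist (F x (f₂ (x₁ x))) (F x (f₂' (x₁' x))) := by
          rw [hx₁ x, hx₁' x]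
      _ ≤ α * D := hA'F x _ _
  have h2 : D ≤ dist (f₂ (x₁ x)) (f₂' (x₁ x)) + bh * dist (x₁ x) (x₁' x) := by
    calc D ≤ dist (f₂ (x₁ x)) (f₂' (x₁ x)) + dist (f₂' (x₁ x)) (f₂' (x₁' x)) :=
          dist_triangle _ _ _
      _ ≤ dist (f₂ (x₁ x)) (f₂' (x₁ x)) + bh * dist (x₁ x) (x₁' x) := by
          linarith [hf₂' (x₁ x) (x₁' x)]
  have h3 : D ≤ (1 / (1 - α * bh)) * dist (f₂ (x₁ x)) (f₂' (x₁ x)) := by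
    have : D * (1 - α * bh) ≤ dist (f₂ (x₁ x)) (f₂' (x₁ x)) := by nlinarith
    rw [div_mul_eq_mul_div, le_div_iff₀ hpos, one_mul]
    linarith [mul_comm D (1 - α * bh)]
  have h4 : dist (f₁ x) (f₁' x) ≤ lamu * D := by
    rw [hf₁ x, hf₁' x]; exact hA'G x _ _
  refine ⟨h1, h2, h3, h4, ?_⟩
  have := mul_le_mul_of_nonneg_left h3 hlamu
  calc lamu * D ≤ lamu * ((1 / (1 - α * bh)) * dist (f₂ (x₁ x)) (f₂' (x₁ x))) := this
    _ = (lamu / (1 - α * bh)) * dist (f₂ (x₁ x)) (f₂' (x₁ x)) := by ring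
end

section
/- Composition of correspondences with generating maps. Let X₁, Y₁, X₂, Y₂, X₃, Y₃ be metric spaces with Y₂ complete, and let F₁ : X₁ × Y₂ → X₂, G₁ : X₁ × Y₂ → Y₁, F₂ : X₂ × Y₃ → X₃, G₂ : X₂ × Y₃ → Y₂ be maps. Suppose there are constants a, b ≥ 0 with a·b < 1 such that Lip(x₂ ↦ G₂(x₂,y₃)) ≤ a for every y₃ ∈ Y₃ and Lip(y₂ ↦ F₁(x₁,y₂)) ≤ b for every x₁ ∈ X₁. Then: (i) for every (x₁,y₃) ∈ X₁ × Y₃ there is a unique point y₂(x₁,y₃) ∈ Y₂ satisfying y₂(x₁,y₃) = G₂(F₁(x₁, y₂(x₁,y₃)), y₃); (ii) defining F(x₁,y₃) = F₂(F₁(x₁, y₂(x₁,y₃)), y₃) and G(x₁,y₃) = G₁(x₁, y₂(x₁,y₃)), the pair (F,G) is a generating map of the composition H₂ ∘ H₁, i.e. for all (x₁,y₁) ∈ X₁ × Y₁ and (x₃,y₃) ∈ X₃ × Y₃, there exists (x₂,y₂) ∈ X₂ × Y₂ with y₁ = G₁(x₁,y₂), x₂ = F₁(x₁,y₂), y₂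 = G₂(x₂,y₃) and x₃ = F₂(x₂,y₃) if and only if y₁ = G(x₁,y₃) and x₃ = F(x₁,y₃). -/
/-- Composition of correspondences with generating maps. -/
theorem composition_of_generating_maps
    {X₁ Y₁ X₂ Y₂ X₃ Y₃ : Type*}
    [MetricSpace X₁] [MetricSpace Y₁] [MetricSpace X₂]
    [MetricSpace Y₂] [CompleteSpace Y₂] [Nonempty Y₂]
    [MetricSpace X₃] [MetricSpace Y₃]
    (F₁ : X₁ → Y₂ → X₂) (G₁ : X₁ → Y₂ → Y₁)
    (F₂ : X₂ → Y₃ → X₃) (G₂ : X₂ → Y₃ → Y₂)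
    (a b : ℝ) (ha : 0 ≤ a) (hb : 0 ≤ b) (hab : a * b < 1)
    (hG₂ : ∀ (y₃ : Y₃) (x₂ x₂' : X₂), dist (G₂ x₂ y₃) (G₂ x₂' y₃) ≤ a * dist x₂ x₂')
    (hF₁ : ∀ (x₁ : X₁) (y₂ y₂' : Y₂), dist (F₁ x₁ y₂) (F₁ x₁ y₂') ≤ b * dist y₂ y₂') :
    ∃ c : X₁ → Y₃ → Y₂,
      (∀ (x₁ : X₁) (y₃ : Y₃),
        c x₁ y₃ = G₂ (F₁ x₁ (c x₁ y₃)) y₃ ∧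
        ∀ z : Y₂, z = G₂ (F₁ x₁ z) y₃ → z = c x₁ y₃) ∧
      (∀ (x₁ : X₁) (y₁ : Y₁) (x₃ : X₃) (y₃ : Y₃),
        (∃ (x₂ : X₂) (y₂ : Y₂),
          y₁ = G₁ x₁ y₂ ∧ x₂ = F₁ x₁ y₂ ∧ y₂ = G₂ x₂ y₃ ∧ x₃ = F₂ x₂ y₃) ↔
        (y₁ = G₁ x₁ (c x₁ y₃) ∧ x₃ = F₂ (F₁ x₁ (c x₁ y₃)) y₃)) := by
  set K : NNReal := ⟨a * b, mul_nonneg ha hb⟩ with hK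
  have hKlt : K < 1 := by exact_mod_cast hab
  have hcontr : ∀ (x₁ : X₁) (y₃ : Y₃),
      ContractingWith K (fun z : Y₂ => G₂ (F₁ x₁ z) y₃) := by
    intro x₁ y₃
    refine ⟨hKlt, LipschitzWith.of_dist_le_mul fun z z' => ?_⟩
    calc dist (G₂ (F₁ x₁ z) y₃) (G₂ (F₁ x₁ z') y₃)
        ≤ a * dist (F₁ x₁ z) (F₁ x₁ z') := hG₂ _ _ _
      _ ≤ a * (b * dist z z') := by
          exact mul_le_mul_of_nonneg_left (hF₁ _ _ _) ha
      _ = (K : ℝ) * dist z z' := by rw [hK]; push_cast; exact (mul_assoc a b (dist z z')).symm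
  refine ⟨fun x₁ y₃ => (hcontr x₁ y₃).fixedPoint _, fun x₁ y₃ => ?_, ?_⟩
  · have hfix := (hcontr x₁ y₃).fixedPoint_isFixedPt
    refine ⟨hfix.symm, fun z hz => ?_⟩
    exact (hcontr x₁ y₃).fixedPoint_unique hz.symm
  · intro x₁ y₁ x₃ y₃
    set c := (hcontr x₁ y₃).fixedPoint (fun z : Y₂ => G₂ (F₁ x₁ z) y₃)
    have hfix : G₂ (F₁ x₁ c) y₃ = c := (hcontr x₁ y₃).fixedPoint_isFixedPt
    constructor
    · rintro ⟨x₂, y₂, h1, h2, h3, h4⟩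
      have : y₂ = c := by
        refine (hcontr x₁ y₃).fixedPoint_unique ?_
        show G₂ (F₁ x₁ y₂) y₃ = y₂
        rw [← h2, ← h3]
      subst this; subst h2
      exact ⟨h1, h4⟩
    · rintro ⟨h1, h2⟩
      exact ⟨F₁ x₁ c, c, h1, rfl, hfix.symm, h2⟩
end

section
/- Lipschitz in the maximum metric implies the (A)(B) condition. Let X₁, Y₁, X₂, Y₂ be metric spaces, F : X₁ × Y₂ → X₂, G : X₁ × Y₂ → Y₁, and α, β, λ_s, λ_u ≥ 0. Suppose that for all x₁, x₁′ ∈ X₁ and y₂, y₂′ ∈ Y₂: d(F(x₁,y₂), F(x₁′,y₂′)) ≤ max{λ_s·d(x₁,x₁′), α·d(y₂,y₂′)} and d(G(x₁,y₂), G(x₁′,y₂′)) ≤ max{β·d(x₁,x₁′), λ_u·d(y₂,y₂′)}, and that α·β < 1 and λ_s·λ_u < 1. Then the correspondence H ∼ (F,G) satisfies the (A)(α,λ_u)(B)(β,λ_s) condition. If in addition α·β < λ_s·λ_u, then, with c = λ_s·λ_u (< 1), H satisfies the (A)(c⁻¹α; α, λ_u)(B)(c⁻¹β; β, λ_s) condition.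 -/
/-- Numeric core: one-point version of the (A) implication. -/
lemma numAB_aux {dx dy dF dG a b ls lu t : ℝ}
    (hdx0 : 0 ≤ dx) (hdy : 0 ≤ dy) (hdG : 0 ≤ dG) (ha : 0 ≤ a) (ht : 0 ≤ t)
    (hlu : 0 ≤ lu) (hls : 0 ≤ ls)
    (hFb : dF ≤ max (ls * dx) (a * dy)) (hGb : dG ≤ max (b * dx) (lu * dy))
    (htb : t * b < 1) (hta : ls * (t * lu) ≤ a)
    (hdx : dx ≤ t * dG) : dF ≤ a * dy ∧ dG ≤ lu * dy := by
  have hG' : dG ≤ lu * dy := by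
    rcases le_max_iff.mp hGb with h | h
    · rcases le_or_gt b 0 with hb | hb
      · nlinarith [mul_nonneg hlu hdy]
      · have : dG ≤ b * (t * dG) := le_trans h (by nlinarith)
        nlinarith [mul_nonneg hlu hdy]
    · exact h
  have hdx' : dx ≤ t * (lu * dy) := le_trans hdx (by nlinarith)
  refine ⟨?_, hG'⟩
  rcases le_max_iff.mp hFb with h | h
  · calc dF ≤ ls * dx := h
      _ ≤ ls * (t * (lu * dy)) := by nlinarith
      _ = ls * (t * lu) * dy := by ring
      _ ≤ a * dy := by nlinarith
  · exact h

/-- Lipschitz in the maximum metric implies the (A)(B) condition. -/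
theorem lipschitz_max_metric_implies_AB
    {X₁ Y₁ X₂ Y₂ : Type*}
    [MetricSpace X₁] [MetricSpace Y₁] [MetricSpace X₂] [MetricSpace Y₂]
    (F : X₁ → Y₂ → X₂) (G : X₁ → Y₂ → Y₁)
    (α β lams lamu : ℝ)
    (hα : 0 ≤ α) (hβ : 0 ≤ β) (hlams : 0 ≤ lams) (hlamu : 0 ≤ lamu)
    (hF : ∀ (x₁ x₁' : X₁) (y₂ y₂' : Y₂),
      dist (F x₁ y₂) (F x₁' y₂') ≤ max (lams * dist x₁ x₁') (α * dist y₂ y₂'))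
    (hG : ∀ (x₁ x₁' : X₁) (y₂ y₂' : Y₂),
      dist (G x₁ y₂) (G x₁' y₂') ≤ max (β * dist x₁ x₁') (lamu * dist y₂ y₂'))
    (hαβ : α * β < 1) (hll : lams * lamu < 1) :
    -- H satisfies the (A)(α, λ_u)(B)(β, λ_s) condition
    ((∀ (x₁ x₁' : X₁) (y₂ y₂' : Y₂),
        dist x₁ x₁' ≤ α * dist (G x₁ y₂) (G x₁' y₂') →
          dist (F x₁ y₂) (F x₁' y₂') ≤ α * dist y₂ y₂' ∧
            dist (G x₁ y₂) (G x₁' y₂') ≤ lamu * dist y₂ y₂') ∧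
      (∀ (x₁ x₁' : X₁) (y₂ y₂' : Y₂),
        dist y₂ y₂' ≤ β * dist (F x₁ y₂) (F x₁' y₂') →
          dist (G x₁ y₂) (G x₁' y₂') ≤ β * dist x₁ x₁' ∧
            dist (F x₁ y₂) (F x₁' y₂') ≤ lams * dist x₁ x₁')) ∧
    -- if moreover α·β < λ_s·λ_u then, with c = λ_s·λ_u,
    -- H satisfies the (A)(c⁻¹α; α, λ_u)(B)(c⁻¹β; β, λ_s) condition
    (α * β < lams * lamu →
      ((∀ (x₁ x₁' : X₁) (y₂ y₂' : Y₂),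
          dist x₁ x₁' ≤ (lams * lamu)⁻¹ * α * dist (G x₁ y₂) (G x₁' y₂') →
            dist (F x₁ y₂) (F x₁' y₂') ≤ α * dist y₂ y₂' ∧
              dist (G x₁ y₂) (G x₁' y₂') ≤ lamu * dist y₂ y₂') ∧
        (∀ (x₁ x₁' : X₁) (y₂ y₂' : Y₂),
          dist y₂ y₂' ≤ (lams * lamu)⁻¹ * β * dist (F x₁ y₂) (F x₁' y₂') →
            dist (G x₁ y₂) (G x₁' y₂') ≤ β * dist x₁ x₁' ∧
              dist (F x₁ y₂) (F x₁' y₂') ≤ lams * dist x₁ x₁'))) := by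
  constructor
  · constructor
    · intro x₁ x₁' y₂ y₂' h
      exact numAB_aux dist_nonneg dist_nonneg dist_nonneg hα hα hlamu hlams
        (hF x₁ x₁' y₂ y₂') (hG x₁ x₁' y₂ y₂')
        (by linarith) (by nlinarith) h
    · intro x₁ x₁' y₂ y₂' h
      exact numAB_aux dist_nonneg dist_nonneg dist_nonneg hβ hβ hlams hlamu
        ((hG x₁ x₁' y₂ y₂').trans (le_of_eq (max_comm _ _)))
        ((hF x₁ x₁' y₂ y₂').trans (le_of_eq (max_comm _ _)))
        (by nlinarith) (by nlinarith) h
  · intro hc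
    have hcpos : 0 < lams * lamu := lt_of_le_of_lt (mul_nonneg hα hβ) hc
    have hci : (lams * lamu)⁻¹ * (lams * lamu) = 1 := inv_mul_cancel₀ (ne_of_gt hcpos)
    have htpos : 0 ≤ (lams * lamu)⁻¹ := le_of_lt (inv_pos.mpr hcpos)
    constructor
    · intro x₁ x₁' y₂ y₂' h
      refine numAB_aux dist_nonneg dist_nonneg dist_nonneg hα (mul_nonneg htpos hα) hlamu hlams
        (hF x₁ x₁' y₂ y₂') (hG x₁ x₁' y₂ y₂') ?_ ?_ h
      · have : (lams * lamu)⁻¹ * α * β < (lams * lamu)⁻¹ * (lams * lamu) := by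
          rw [mul_assoc]; exact (mul_lt_mul_iff_right₀ (inv_pos.mpr hcpos)).mpr hc
        linarith [this.trans_eq hci]
      · calc lams * ((lams * lamu)⁻¹ * α * lamu)
            = ((lams * lamu)⁻¹ * (lams * lamu)) * α := by ring
          _ = α := by rw [hci, one_mul]
          _ ≤ α := le_refl α
    · intro x₁ x₁' y₂ y₂' h
      refine numAB_aux dist_nonneg dist_nonneg dist_nonneg hβ (mul_nonneg htpos hβ) hlams hlamu
        ((hG x₁ x₁' y₂ y₂').trans (le_of_eq (max_comm _ _)))
        ((hF x₁ x₁' y₂ y₂').trans (le_of_eq (max_comm _ _))) ?_ ?_ h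
      · have : (lams * lamu)⁻¹ * β * α < (lams * lamu)⁻¹ * (lams * lamu) := by
          have : β * α < lams * lamu := by linarith [mul_comm β α ▸ hc]
          rw [mul_assoc]; exact (mul_lt_mul_iff_right₀ (inv_pos.mpr hcpos)).mpr this
        linarith [this.trans_eq hci]
      · calc lamu * ((lams * lamu)⁻¹ * β * lams)
            = ((lams * lamu)⁻¹ * (lams * lamu)) * β := by ring
          _ = β := by rw [hci, one_mul]
          _ ≤ β := le_refl β
end

section
/- The additive Lipschitz condition (A′)(B′) implies the (A)(B) condition. Let X₁, Y₁, X₂, Y₂ be metric spaces and suppose the correspondence H ∼ (F,G) satisfies the (A′)(α̃,λ̃_u) and (B′)(β̃,λ̃_s) conditions, where α̃, β̃ > 0 and λ̃_s, λ̃_u ≥ 0. Let 0 < c ≤ 1 satisfy λ̃_s·λ̃_u < c² and α̃·β̃ < (c − √(λ̃_s·λ̃_u))². Set b = c − λ̃_s·λ̃_u + α̃·β̃. Then b² ≥ 4c·α̃·β̃, and setting t = (b − √(b² − 4c·α̃·β̃))/(2c) one has 0 ≤ t < 1; moreover, with α = t/β̃, β = t/α̃, λ_s = λ̃_s/(1 −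 t), λ_u = λ̃_u/(1 − t), the correspondence H satisfies the (A)(α; cα, λ_u)(B)(β; cβ, λ_s) condition, and furthermore α·β < 1 and λ_s·λ_u < 1. -/
/-- If `p(r) = c r² - b r + a < 0` then the smaller root `(b - sd)/(2c)` is `< r`. -/
lemma root_lt_aux {c b a sd r : ℝ} (hc : 0 < c) (hsd : 0 < sd)
    (hsd2 : sd ^ 2 = b ^ 2 - 4 * c * a) (hp : c * r ^ 2 - b * r + a < 0) :
    (b - sd) / (2 * c) < r := by
  rw [div_lt_iff₀ (by linarith : (0:ℝ) < 2 * c)]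
  rcases le_or_gt b (r * (2 * c)) with h | h
  · linarith
  · have hpos : 0 < b - r * (2 * c) + sd := by linarith
    nlinarith [hsd2, mul_pos hc (show (0:ℝ) < b * r - c * r ^ 2 - a by linarith), hpos, hsd]

lemma aux_key {t p q r : ℝ} (ht0 : 0 ≤ t) (h5 : p ≤ t * q) (hq : q ≤ r + p) :
    (1 - t) * p ≤ t * r := by
  nlinarith [mul_le_mul_of_nonneg_left hq ht0]

lemma aux_lam {t p q r : ℝ} (h1t : 0 < 1 - t) (hq : q ≤ r + p) (key : (1 - t) * p ≤ t * r) :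
    q * (1 - t) ≤ r := by
  nlinarith [mul_le_mul_of_nonneg_left hq h1t.le]

lemma aux_c {t c a1 a2 l1 l2 dF dx dy : ℝ} (h1t : 0 < 1 - t) (ha2 : 0 < a2) (hl1 : 0 ≤ l1)
    (hdy : 0 ≤ dy)
    (hF : dF ≤ a1 * dy + l1 * dx) (key : (1 - t) * (a2 * dx) ≤ t * (l2 * dy))
    (hid : c * t * (1 - t) = (a1 * a2) * (1 - t) + (l1 * l2) * t) :
    a2 * dF ≤ c * t * dy := by
  have e1 : (1 - t) * a2 * dF ≤ (1 - t) * a2 * (a1 * dy + l1 * dx) :=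
    mul_le_mul_of_nonneg_left hF (mul_nonneg h1t.le ha2.le)
  have e2 : l1 * ((1 - t) * (a2 * dx)) ≤ l1 * (t * (l2 * dy)) :=
    mul_le_mul_of_nonneg_left key hl1
  have hidy : c * t * (1 - t) * dy = ((a1 * a2) * (1 - t) + (l1 * l2) * t) * dy := by rw [hid]
  have hstep : (1 - t) * (a2 * dF) ≤ (1 - t) * (c * t * dy) := by nlinarith [e1, e2, hidy]
  exact le_of_mul_le_mul_left hstep h1t

lemma aux_fu {c s u : ℝ} (hs0 : 0 ≤ s) (hA : 0 < c - s - u) (hB : 0 < 1 - s - u) :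
    0 < u ^ 2 - (1 + c) * u + c - s ^ 2 := by
  nlinarith [mul_pos hA hB, mul_nonneg hs0 (by linarith : (0:ℝ) ≤ 1 + c - 2 * s - 2 * u)]

lemma aux_pu {c s u : ℝ} (hu : 0 < u) (hfu : 0 < u ^ 2 - (1 + c) * u + c - s ^ 2) :
    c * u ^ 2 - (c - s ^ 2 + u ^ 2) * u + u ^ 2 < 0 := by
  nlinarith [mul_pos hu hfu]

lemma aux_gap {c s a : ℝ} (h2 : a < (c - s) ^ 2) (hcs : 0 ≤ c - s) (hc1 : 0 ≤ 1 - c) :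
    0 < (1 - s) * (c - s) - a := by
  nlinarith [mul_nonneg hcs hc1]

lemma aux_p1s {c s a : ℝ} (hs : 0 < s) (hgap : 0 < (1 - s) * (c - s) - a) :
    c * (1 - s) ^ 2 - (c - s ^ 2 + a) * (1 - s) + a < 0 := by
  nlinarith [mul_pos hs hgap]

set_option maxHeartbeats 1000000 in
/-- The additive Lipschitz condition (A′)(B′) implies the (A)(B) condition. -/
theorem additive_lipschitz_implies_AB
    {X₁ Y₁ X₂ Y₂ : Type*}
    [MetricSpace X₁] [MetricSpace Y₁] [MetricSpace X₂] [MetricSpace Y₂]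
    (F : X₁ → Y₂ → X₂) (G : X₁ → Y₂ → Y₁)
    (αt βt lst lut c : ℝ)
    (hαt : 0 < αt) (hβt : 0 < βt) (hlst : 0 ≤ lst) (hlut : 0 ≤ lut)
    (hc0 : 0 < c) (hc1 : c ≤ 1)
    -- (A′)(α̃, λ̃_u) condition
    (hA'F : ∀ (x : X₁) (y y' : Y₂), dist (F x y) (F x y') ≤ αt * dist y y')
    (hA'G : ∀ (x : X₁) (y y' : Y₂), dist (G x y) (G x y') ≤ lut * dist y y')
    -- (B′)(β̃, λ̃_s) condition
    (hB'G : ∀ (y : Y₂) (x x' : X₁), dist (G x y) (G x' y) ≤ βt * dist x x')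
    (hB'F : ∀ (y : Y₂) (x x' : X₁), dist (F x y) (F x' y) ≤ lst * dist x x')
    (h1 : lst * lut < c ^ 2)
    (h2 : αt * βt < (c - Real.sqrt (lst * lut)) ^ 2) :
    ∀ b t α β lams lamu : ℝ,
      b = c - lst * lut + αt * βt →
      t = (b - Real.sqrt (b ^ 2 - 4 * c * (αt * βt))) / (2 * c) →
      α = t / βt → β = t / αt →
      lams = lst / (1 - t) → lamu = lut / (1 - t) →
      b ^ 2 ≥ 4 * c * (αt * βt) ∧ 0 ≤ t ∧ t < 1 ∧
      -- H satisfies the (A)(α; cα, λ_u)(B)(β; cβ, λ_s) condition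
      (∀ (x₁ x₁' : X₁) (y₂ y₂' : Y₂),
        dist x₁ x₁' ≤ α * dist (G x₁ y₂) (G x₁' y₂') →
          dist (F x₁ y₂) (F x₁' y₂') ≤ c * α * dist y₂ y₂' ∧
            dist (G x₁ y₂) (G x₁' y₂') ≤ lamu * dist y₂ y₂') ∧
      (∀ (x₁ x₁' : X₁) (y₂ y₂' : Y₂),
        dist y₂ y₂' ≤ β * dist (F x₁ y₂) (F x₁' y₂') →
          dist (G x₁ y₂) (G x₁' y₂') ≤ c * β * dist x₁ x₁' ∧
            dist (F x₁ y₂) (F x₁' y₂') ≤ lams * dist x₁ x₁') ∧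
      α * β < 1 ∧ lams * lamu < 1 := by
  intro b t α β lams lamu hb ht hα hβ hlams hlamu
  have ha : 0 < αt * βt := mul_pos hαt hβt
  set s := Real.sqrt (lst * lut) with hs_def
  have hs0 : 0 ≤ s := Real.sqrt_nonneg _
  have hs2 : s ^ 2 = lst * lut := Real.sq_sqrt (mul_nonneg hlst hlut)
  have hsc : s < c := by nlinarith [hs2, hs0, h1]
  set u := Real.sqrt (αt * βt) with hu_def
  have hu0 : 0 ≤ u := Real.sqrt_nonneg _
  have hu2 : u ^ 2 = αt * βt := Real.sq_sqrt ha.le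
  have hu_pos : 0 < u := Real.sqrt_pos.mpr ha
  have hu_lt : u < c - s := by
    rw [hu_def]
    rw [show (c - s) = Real.sqrt ((c - s) ^ 2) from (Real.sqrt_sq (by linarith)).symm]
    exact Real.sqrt_lt_sqrt ha.le h2
  set w := Real.sqrt c with hw_def
  have hw0 : 0 ≤ w := Real.sqrt_nonneg _
  have hw2 : w ^ 2 = c := Real.sq_sqrt hc0.le
  have hw1 : w ≤ 1 := Real.sqrt_le_one.mpr hc1
  have hcw : c ≤ w := by nlinarith [hw0, hw1, hw2]
  have hb0 : 0 < b := by rw [hb]; nlinarith [hs2, hs0, hsc, hc1]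
  -- discriminant is positive
  have hD : 0 < b ^ 2 - 4 * c * (αt * βt) := by
    have k1 : 0 < w - u - s := by linarith
    have k2 : 0 < w - u + s := by linarith
    have k3 : 0 < w + u - s := by linarith
    have k4 : 0 < w + u + s := by linarith
    have P := mul_pos k1 (mul_pos k2 (mul_pos k3 k4))
    have key : 0 < (w ^ 2 - s ^ 2 + u ^ 2) ^ 2 - 4 * w ^ 2 * u ^ 2 := by
      have hident : (w ^ 2 - s ^ 2 + u ^ 2) ^ 2 - 4 * w ^ 2 * u ^ 2
          = (w - u - s) * ((w - u + s) * ((w + u - s) * (w + u + s))) := by ring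
      linarith [P, hident.ge, hident.le]
    rw [hw2, hs2, hu2] at key
    rw [hb]; linarith
  set sd := Real.sqrt (b ^ 2 - 4 * c * (αt * βt)) with hsd_def
  have hsd0 : 0 < sd := Real.sqrt_pos.mpr hD
  have hsd2 : sd ^ 2 = b ^ 2 - 4 * c * (αt * βt) := Real.sq_sqrt hD.le
  have hsd_lt_b : sd < b := by nlinarith [hsd2, hsd0, ha, hc0]
  have ht0 : 0 ≤ t := by
    rw [ht]; apply div_nonneg (by linarith) (by linarith)
  have ht1 : t < 1 := by
    rw [ht, div_lt_one (by linarith : (0:ℝ) < 2 * c)]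
    nlinarith [hs2, hs0, hsc, h2, hsd0, hc1]
  have h1t : 0 < 1 - t := by linarith
  -- t is a root of c t² - b t + (αt βt) = 0
  have h2ct : 2 * c * t = b - sd := by rw [ht]; field_simp
  have hsq : (b - 2 * c * t) ^ 2 = b ^ 2 - 4 * c * (αt * βt) := by
    rw [show b - 2 * c * t = sd by linarith, hsd2]
  have hroot : c * t ^ 2 - b * t + αt * βt = 0 := by
    have h4 : 4 * c * (c * t ^ 2 - b * t + αt * βt) = 0 := by linear_combination hsq
    rcases mul_eq_zero.mp h4 with h | h
    · linarith
    · exact h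
  -- the key identity
  have hid : c * t * (1 - t) = (αt * βt) * (1 - t) + (lst * lut) * t := by
    linear_combination (-1) * hroot - t * hb
  refine ⟨by linarith, ht0, ht1, ?_, ?_, ?_, ?_⟩
  · -- condition (A)
    intro x₁ x₁' y₂ y₂' hyp
    have hdy : 0 ≤ dist y₂ y₂' := dist_nonneg
    have hG : dist (G x₁ y₂) (G x₁' y₂') ≤ lut * dist y₂ y₂' + βt * dist x₁ x₁' :=
      (dist_triangle (G x₁ y₂) (G x₁ y₂') (G x₁' y₂')).trans
        (add_le_add (hA'G x₁ y₂ y₂') (hB'G y₂' x₁ x₁'))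
    have hF : dist (F x₁ y₂) (F x₁' y₂') ≤ αt * dist y₂ y₂' + lst * dist x₁ x₁' :=
      (dist_triangle (F x₁ y₂) (F x₁ y₂') (F x₁' y₂')).trans
        (add_le_add (hA'F x₁ y₂ y₂') (hB'F y₂' x₁ x₁'))
    rw [hα] at hyp
    have h5 : βt * dist x₁ x₁' ≤ t * dist (G x₁ y₂) (G x₁' y₂') := by
      rw [div_mul_eq_mul_div, le_div_iff₀ hβt] at hyp
      linarith
    have key : (1 - t) * (βt * dist x₁ x₁') ≤ t * (lut * dist y₂ y₂') :=
      aux_key ht0 h5 (by linarith)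
    constructor
    · -- (A1)
      have h7 : βt * dist (F x₁ y₂) (F x₁' y₂') ≤ c * t * dist y₂ y₂' :=
        aux_c h1t hβt hlst hdy hF key hid
      rw [hα]
      calc dist (F x₁ y₂) (F x₁' y₂') ≤ c * t * dist y₂ y₂' / βt := by
            rw [le_div_iff₀ hβt]; linarith
        _ = c * (t / βt) * dist y₂ y₂' := by ring
    · -- (A2)
      rw [hlamu, div_mul_eq_mul_div, le_div_iff₀ h1t]
      exact aux_lam h1t (by linarith) key
  · -- condition (B)
    intro x₁ x₁' y₂ y₂' hyp
    have hdx : 0 ≤ dist x₁ x₁' := dist_nonneg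
    have hG : dist (G x₁ y₂) (G x₁' y₂') ≤ lut * dist y₂ y₂' + βt * dist x₁ x₁' :=
      (dist_triangle (G x₁ y₂) (G x₁ y₂') (G x₁' y₂')).trans
        (add_le_add (hA'G x₁ y₂ y₂') (hB'G y₂' x₁ x₁'))
    have hF : dist (F x₁ y₂) (F x₁' y₂') ≤ αt * dist y₂ y₂' + lst * dist x₁ x₁' :=
      (dist_triangle (F x₁ y₂) (F x₁ y₂') (F x₁' y₂')).trans
        (add_le_add (hA'F x₁ y₂ y₂') (hB'F y₂' x₁ x₁'))
    rw [hβ] at hyp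
    have h5 : αt * dist y₂ y₂' ≤ t * dist (F x₁ y₂) (F x₁' y₂') := by
      rw [div_mul_eq_mul_div, le_div_iff₀ hαt] at hyp
      linarith
    have key : (1 - t) * (αt * dist y₂ y₂') ≤ t * (lst * dist x₁ x₁') :=
      aux_key ht0 h5 (by linarith)
    constructor
    · -- (B1)
      have h7 : αt * dist (G x₁ y₂) (G x₁' y₂') ≤ c * t * dist x₁ x₁' :=
        aux_c h1t hαt hlut hdx
          (show dist (G x₁ y₂) (G x₁' y₂') ≤ βt * dist x₁ x₁' + lut * dist y₂ y₂' by linarith)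
          key (by linear_combination hid)
      rw [hβ]
      calc dist (G x₁ y₂) (G x₁' y₂') ≤ c * t * dist x₁ x₁' / αt := by
            rw [le_div_iff₀ hαt]; linarith
        _ = c * (t / αt) * dist x₁ x₁' := by ring
    · -- (B2)
      rw [hlams, div_mul_eq_mul_div, le_div_iff₀ h1t]
      exact aux_lam h1t (by linarith) key
  · -- α β < 1
    have hfu : 0 < u ^ 2 - (1 + c) * u + c - s ^ 2 :=
      aux_fu hs0 (by linarith) (by linarith)
    have hpu : c * u ^ 2 - b * u + αt * βt < 0 := by
      rw [hb, ← hs2, ← hu2]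
      exact aux_pu hu_pos hfu
    have h_tu : t < u := by
      rw [ht]; exact root_lt_aux hc0 hsd0 hsd2 hpu
    rw [hα, hβ, div_mul_div_comm, div_lt_one (mul_pos hβt hαt)]
    have htt : t * t < u * u := mul_self_lt_mul_self ht0 h_tu
    have huu : u * u = αt * βt := by rw [← hu2]; ring
    linarith
  · -- lams lamu < 1
    rw [hlams, hlamu, div_mul_div_comm, div_lt_one (mul_pos h1t h1t)]
    rcases (mul_nonneg hlst hlut).eq_or_lt with h0 | hL
    · rw [← h0]; exact mul_pos h1t h1t
    · have hs_pos : 0 < s := Real.sqrt_pos.mpr hL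
      have h_gap : 0 < (1 - s) * (c - s) - αt * βt :=
        aux_gap h2 (by linarith) (by linarith)
      have hp1s : c * (1 - s) ^ 2 - b * (1 - s) + αt * βt < 0 := by
        rw [hb, ← hs2]
        exact aux_p1s hs_pos h_gap
      have hts : t < 1 - s := by
        rw [ht]; exact root_lt_aux hc0 hsd0 hsd2 hp1s
      have hss : s * s < (1 - t) * (1 - t) := mul_self_lt_mul_self hs0 (by linarith)
      have : s ^ 2 = s * s := sq s
      linarith [hs2 ▸ this]
end

section
/- Chaperon-type maps satisfy the (A)(B) condition. Let X₁, Y₁, X₂, Y₂ be metric spaces and H = (f,g) : X₁ × Y₁ → X₂ × Y₂ a map such that for each x ∈ X₁ the map g_x = g(x,·) : Y₁ → Y₂ is a bijection, with inverse g_x⁻¹. Suppose constants k₀, ν₀, μ₀ ≥ 0 satisfy: d(f(x₁,y₁), f(x₁′,y₁′)) ≤ k₀·max{d(x₁,x₁′), d(y₁,y₁′)} for all (x₁,y₁), (x₁′,y₁′) ∈ X₁ × Y₁; Lip g_x⁻¹ ≤ ν₀ for every x ∈ X₁; d(g_x⁻¹(y), g_{x′}⁻¹(y)) ≤ μ₀·d(x,x′)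 for all x, x′ ∈ X₁ and y ∈ Y₂; and μ₀ + ν₀·k₀ < 1. Set α = 2ν₀k₀/(1 + √(1 − 4k₀ν₀μ₀)), β = μ₀/(1 − k₀ν₀), λ_s = k₀, λ_u = ν₀/(1 − αμ₀). Then α < 1, β < 1, the graph of H, namely {((x₁,y₁), H(x₁,y₁)) : (x₁,y₁) ∈ X₁ × Y₁}, satisfies the (A)(α,λ_u)(B)(β,λ_s) condition, and λ_s·λ_u < 1. Moreover, if ν₀ + μ₀ < 1 then λ_u < 1, and if k₀ < 1 then λ_s < 1. -/
/-- Chaperon-type maps satisfy the (A)(B) condition. -/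
theorem chaperon_maps_satisfy_AB
    {X₁ Y₁ X₂ Y₂ : Type*}
    [MetricSpace X₁] [MetricSpace Y₁] [MetricSpace X₂] [MetricSpace Y₂]
    (f : X₁ → Y₁ → X₂) (g : X₁ → Y₁ → Y₂) (ginv : X₁ → Y₂ → Y₁)
    -- each `g x` is a bijection with inverse `ginv x`
    (hgleft : ∀ (x : X₁) (y : Y₁), ginv x (g x y) = y)
    (hgright : ∀ (x : X₁) (z : Y₂), g x (ginv x z) = z)
    (k₀ ν₀ μ₀ : ℝ) (hk₀ : 0 ≤ k₀) (hν₀ : 0 ≤ ν₀) (hμ₀ : 0 ≤ μ₀)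
    (hf : ∀ (x₁ x₁' : X₁) (y₁ y₁' : Y₁),
      dist (f x₁ y₁) (f x₁' y₁') ≤ k₀ * max (dist x₁ x₁') (dist y₁ y₁'))
    (hginvLip : ∀ (x : X₁) (z z' : Y₂), dist (ginv x z) (ginv x z') ≤ ν₀ * dist z z')
    (hginvx : ∀ (x x' : X₁) (z : Y₂), dist (ginv x z) (ginv x' z) ≤ μ₀ * dist x x')
    (hsum : μ₀ + ν₀ * k₀ < 1) :
    ∀ α β lams lamu : ℝ,
      α = 2 * ν₀ * k₀ / (1 + Real.sqrt (1 - 4 * k₀ * ν₀ * μ₀)) →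
      β = μ₀ / (1 - k₀ * ν₀) →
      lams = k₀ → lamu = ν₀ / (1 - α * μ₀) →
      α < 1 ∧ β < 1 ∧
      -- the graph of H = (f, g) satisfies the (A)(α, λ_u)(B)(β, λ_s) condition
      (∀ (x₁ x₁' : X₁) (y₁ y₁' : Y₁),
        dist x₁ x₁' ≤ α * dist y₁ y₁' →
          dist (f x₁ y₁) (f x₁' y₁') ≤ α * dist (g x₁ y₁) (g x₁' y₁') ∧
            dist y₁ y₁' ≤ lamu * dist (g x₁ y₁) (g x₁' y₁')) ∧
      (∀ (x₁ x₁' : X₁) (y₁ y₁' : Y₁),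
        dist (g x₁ y₁) (g x₁' y₁') ≤ β * dist (f x₁ y₁) (f x₁' y₁') →
          dist y₁ y₁' ≤ β * dist x₁ x₁' ∧
            dist (f x₁ y₁) (f x₁' y₁') ≤ lams * dist x₁ x₁') ∧
      lams * lamu < 1 ∧
      (ν₀ + μ₀ < 1 → lamu < 1) ∧ (k₀ < 1 → lams < 1) := by
  intro α β lams lamu hα hβ hlams hlamu
  have hnk : 0 ≤ ν₀ * k₀ := mul_nonneg hν₀ hk₀
  have hnk1 : ν₀ * k₀ < 1 := by linarith
  have hkν1 : k₀ * ν₀ < 1 := by linarith [hnk1, mul_comm ν₀ k₀]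
  set s : ℝ := Real.sqrt (1 - 4 * k₀ * ν₀ * μ₀) with hs
  have hD : 0 < 1 - 4 * k₀ * ν₀ * μ₀ := by nlinarith [sq_nonneg (μ₀ - ν₀ * k₀), sq_nonneg (μ₀ + ν₀ * k₀)]
  have hs2 : s ^ 2 = 1 - 4 * k₀ * ν₀ * μ₀ := Real.sq_sqrt hD.le
  have hs0 : 0 < s := Real.sqrt_pos.mpr hD
  have hden : 0 < 1 + s := by linarith
  have hE1 : α * (1 + s) = 2 * ν₀ * k₀ := by
    rw [hα]; field_simp
  have hα0 : 0 ≤ α := by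
    rw [hα]; positivity
  -- 2 α μ₀ = 1 - s
  have h2am : 2 * (α * μ₀) = 1 - s := by
    have h : (2 * (α * μ₀)) * (1 + s) = (1 - s) * (1 + s) := by
      have : (1 - s) * (1 + s) = 1 - s ^ 2 := by ring
      rw [this, hs2]
      nlinarith [hE1]
    exact mul_right_cancel₀ (ne_of_gt hden) h
  have h1am : 0 < 1 - α * μ₀ := by nlinarith
  -- quadratic identity: ν₀ k₀ = α (1 - α μ₀)
  have hkey : ν₀ * k₀ = α - α ^ 2 * μ₀ := by
    have h : (ν₀ * k₀) * (1 + s) = (α - α ^ 2 * μ₀) * (1 + s) := by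
      have hαs : α * s = 2 * ν₀ * k₀ - α := by linarith [hE1]
      nlinarith [hE1, hs2, h2am]
    exact mul_right_cancel₀ (ne_of_gt hden) h
  -- α < 1
  have hα1 : α < 1 := by
    have h2nk : 2 * ν₀ * k₀ < 1 + s := by
      rcases le_or_gt (2 * ν₀ * k₀) 1 with h | h
      · linarith
      · have hsq : (2 * ν₀ * k₀ - 1) ^ 2 < s ^ 2 := by
          rw [hs2]; nlinarith
        nlinarith
    rw [hα, div_lt_one hden]; exact h2nk
  -- β facts
  have hkν0 : (0:ℝ) < 1 - k₀ * ν₀ := by linarith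
  have hβ0 : 0 ≤ β := by rw [hβ]; exact div_nonneg hμ₀ hkν0.le
  have hβeq : μ₀ = β * (1 - k₀ * ν₀) := by
    rw [hβ, div_mul_cancel₀ _ (ne_of_gt hkν0)]
  have hβ1 : β < 1 := by
    rw [hβ, div_lt_one (by linarith)]; linarith
  have hlamu0 : 0 ≤ lamu := by rw [hlamu]; exact div_nonneg hν₀ h1am.le
  have hklamu : k₀ * lamu = α := by
    rw [hlamu, mul_div_assoc', div_eq_iff (ne_of_gt h1am)]
    linear_combination hkey
  -- key estimate: dist y y' ≤ ν₀ * dist (g x y) (g x' y') + μ₀ * dist x x'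
  have hyy : ∀ (x x' : X₁) (y y' : Y₁),
      dist y y' ≤ ν₀ * dist (g x y) (g x' y') + μ₀ * dist x x' := by
    intro x x' y y'
    calc dist y y' = dist (ginv x (g x y)) (ginv x' (g x' y')) := by rw [hgleft, hgleft]
      _ ≤ dist (ginv x (g x y)) (ginv x (g x' y')) + dist (ginv x (g x' y')) (ginv x' (g x' y')) :=
          dist_triangle _ _ _
      _ ≤ ν₀ * dist (g x y) (g x' y') + μ₀ * dist x x' := by
          gcongr <;> [exact hginvLip _ _ _; exact hginvx _ _ _]
  refine ⟨hα1, hβ1, ?_, ?_, ?_, ?_, ?_⟩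
  · -- condition (A)
    intro x x' y y' hxy
    have h1 := hyy x x' y y'
    have hA2 : dist y y' ≤ lamu * dist (g x y) (g x' y') := by
      rw [hlamu, div_mul_eq_mul_div, le_div_iff₀ h1am]
      have p1 : μ₀ * dist x x' ≤ μ₀ * (α * dist y y') := mul_le_mul_of_nonneg_left hxy hμ₀
      linarith only [h1, p1]
    refine ⟨?_, hA2⟩
    have hmax : max (dist x x') (dist y y') ≤ dist y y' := by
      apply max_le _ le_rfl
      calc dist x x' ≤ α * dist y y' := hxy
        _ ≤ 1 * dist y y' := mul_le_mul_of_nonneg_right hα1.le dist_nonneg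
        _ = dist y y' := one_mul _
    calc dist (f x y) (f x' y') ≤ k₀ * max (dist x x') (dist y y') := hf x x' y y'
      _ ≤ k₀ * dist y y' := by gcongr
      _ ≤ k₀ * (lamu * dist (g x y) (g x' y')) := by gcongr
      _ = α * dist (g x y) (g x' y') := by rw [← mul_assoc, hklamu]
  · -- condition (B)
    intro x x' y y' hB
    have h1 := hyy x x' y y'
    have h2 := hf x x' y y'
    have hB1 : dist y y' ≤ β * dist x x' := by
      rcases le_total (dist y y') (dist x x') with h | h
      · have hmax : max (dist x x') (dist y y') = dist x x' := max_eq_left h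
        rw [hmax] at h2
        have p1 : ν₀ * dist (g x y) (g x' y') ≤ ν₀ * (β * dist (f x y) (f x' y')) :=
          mul_le_mul_of_nonneg_left hB hν₀
        have p2 : ν₀ * (β * dist (f x y) (f x' y')) ≤ ν₀ * β * (k₀ * dist x x') := by
          rw [mul_assoc ν₀ β]
          exact mul_le_mul_of_nonneg_left (mul_le_mul_of_nonneg_left h2 hβ0) hν₀
        have p3 : μ₀ * dist x x' = (β - β * (k₀ * ν₀)) * dist x x' := by
          rw [hβeq]; ring
        linarith only [h1, p1, p2, p3]
      · have hmax : max (dist x x') (dist y y') = dist y y' := max_eq_right h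
        rw [hmax] at h2
        have p1 : ν₀ * dist (g x y) (g x' y') ≤ ν₀ * (β * dist (f x y) (f x' y')) :=
          mul_le_mul_of_nonneg_left hB hν₀
        have p2 : ν₀ * (β * dist (f x y) (f x' y')) ≤ ν₀ * β * (k₀ * dist y y') := by
          rw [mul_assoc ν₀ β]
          exact mul_le_mul_of_nonneg_left (mul_le_mul_of_nonneg_left h2 hβ0) hν₀
        have q1 : (1 - ν₀ * β * k₀) * dist y y' ≤ μ₀ * dist x x' := by
          linarith only [h1, p1, p2]
        have hc : μ₀ ≤ β * (1 - ν₀ * β * k₀) := by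
          have he : β * (1 - ν₀ * β * k₀) - μ₀ = k₀ * ν₀ * β * (1 - β) := by
            linear_combination (-1 : ℝ) * hβeq
          have hnn : 0 ≤ k₀ * ν₀ * β * (1 - β) :=
            mul_nonneg (mul_nonneg (mul_nonneg hk₀ hν₀) hβ0) (by linarith)
          linarith only [he, hnn]
        have q2 : μ₀ * dist x x' ≤ β * (1 - ν₀ * β * k₀) * dist x x' :=
          mul_le_mul_of_nonneg_right hc dist_nonneg
        have hnb : 0 < 1 - ν₀ * β * k₀ := by
          have : ν₀ * β * k₀ ≤ ν₀ * 1 * k₀ :=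
            mul_le_mul_of_nonneg_right (mul_le_mul_of_nonneg_left hβ1.le hν₀) hk₀
          have : ν₀ * 1 * k₀ = ν₀ * k₀ := by ring
          linarith only [hnk1, mul_le_mul_of_nonneg_right (mul_le_mul_of_nonneg_left hβ1.le hν₀) hk₀, this]
        have q3 : (1 - ν₀ * β * k₀) * dist y y' ≤ (1 - ν₀ * β * k₀) * (β * dist x x') := by
          linarith only [q1, q2]
        exact (mul_le_mul_iff_right₀ hnb).mp q3
    refine ⟨hB1, ?_⟩
    rw [hlams]
    calc dist (f x y) (f x' y') ≤ k₀ * max (dist x x') (dist y y') := h2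
      _ ≤ k₀ * dist x x' := by
          gcongr
          apply max_le le_rfl
          calc dist y y' ≤ β * dist x x' := hB1
            _ ≤ 1 * dist x x' := mul_le_mul_of_nonneg_right hβ1.le dist_nonneg
            _ = dist x x' := one_mul _
  · rw [hlams, hklamu]; exact hα1
  · intro h
    rw [hlamu, div_lt_one h1am]
    have : α * μ₀ ≤ 1 * μ₀ := mul_le_mul_of_nonneg_right hα1.le hμ₀
    linarith only [h, this]
  · intro h; rw [hlams]; exact h
end
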